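/- arXiv:2603.04693 — 3 statements merged into one kernel-verified Lean document; each statement's English description precedes it below -/
import Mathlib

section
/- Let R be an n-dimensional rectangle in ℝⁿ, x ∈ Int(R), and let 𝒫 be a minimal locally regulated partition of R about x with β_𝒫(x) ≥ 1. Then there exist 1 ≤ j ≤ n and distinct P, Q ∈ 𝒫 forming an e_j-pair, i.e., the boundary incidence sequences B_P(x) and B_Q(x) agree in every coordinate j′ ≠ j and their j-th entries are nonzero with opposite signs. -/
/-- An (full-dimensional) rectangle in `ι → ℝ`: a product of nondegenerate closed intervals. -/
def IsRect {ι : Type*} (R : Set (ι → ℝ)) : Prop :=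
  ∃ a b : ι → ℝ, (∀ i, a i < b i) ∧ R = Set.Icc a b

/-- `F` is a face of the rectangle `Q` with normal vector `e j`. -/
def IsFaceWithNormal {ι : Type*} (F Q : Set (ι → ℝ)) (j : ι) : Prop :=
  ∃ a b : ι → ℝ, (∀ i, a i < b i) ∧ Q = Set.Icc a b ∧
    (F = {y ∈ Q | y j = a j} ∨ F = {y ∈ Q | y j = b j})

/-- `F` is a face of the rectangle `Q`. -/
def IsFaceOf {ι : Type*} (F Q : Set (ι → ℝ)) : Prop :=
  ∃ j, IsFaceWithNormal F Q j

/-- `e j` is a boundary vector of `x` with respect to the collection `P`. -/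
def IsBoundaryVector {ι : Type*} (P : Set (Set (ι → ℝ))) (x : ι → ℝ) (j : ι) : Prop :=
  ∃ Q ∈ P, ∃ F, IsFaceWithNormal F Q j ∧ x ∈ F

/-- `ν_P(x)`: the number of members of `P` containing `x`. -/
noncomputable def nuP {ι : Type*} (P : Set (Set (ι → ℝ))) (x : ι → ℝ) : ℕ :=
  Set.ncard {Q | Q ∈ P ∧ x ∈ Q}

/-- `β_P(x)`: the number of boundary vectors of `x` with respect to `P`. -/
noncomputable def betaP {ι : Type*} (P : Set (Set (ι → ℝ))) (x : ι → ℝ) : ℕ :=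
  Set.ncard {j | IsBoundaryVector P x j}

/-- A locally regulated cover of `R`. -/
def IsLocRegCover {ι : Type*} (R : Set (ι → ℝ)) (P : Set (Set (ι → ℝ))) : Prop :=
  P.Finite ∧ (∀ Q ∈ P, IsRect Q) ∧ ⋃₀ P = R

/-- A locally regulated partition of `R`. -/
def IsLocRegPartition {ι : Type*} (R : Set (ι → ℝ)) (P : Set (Set (ι → ℝ))) : Prop :=
  IsLocRegCover R P ∧ ∀ Q₁ ∈ P, ∀ Q₂ ∈ P, Q₁ ≠ Q₂ → interior Q₁ ∩ interior Q₂ = ∅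

/-- The collection `P` is about `x` (inside `R`). -/
def IsAbout {ι : Type*} (R : Set (ι → ℝ)) (P : Set (Set (ι → ℝ))) (x : ι → ℝ) : Prop :=
  ∀ Q ∈ P, ∀ F, IsFaceOf F Q → x ∈ F ∨ ∃ G, IsFaceOf G R ∧ F ⊆ G

/-- A regulated partition of `ι → ℝ`. -/
def IsRegPartition {ι : Type*} (P : Set (Set (ι → ℝ))) : Prop :=
  (∃ (D : Set ℝ) (d : ℝ), 0 < d ∧ (∀ r₁ ∈ D, ∀ r₂ ∈ D, r₁ ≠ r₂ → d < |r₁ - r₂|) ∧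
    ∀ Q ∈ P, ∃ a b : ι → ℝ, (∀ i, a i ∈ D ∧ b i ∈ D ∧ a i < b i) ∧ Q = Set.Icc a b) ∧
  (∀ x : ι → ℝ, ∃ Q ∈ P, x ∈ Q) ∧
  (∀ Q₁ ∈ P, ∀ Q₂ ∈ P, Q₁ ≠ Q₂ → interior Q₁ ∩ interior Q₂ = ∅)

/-- `v` is the boundary incidence sequence of `x` with respect to the rectangle `Q`. -/
def IsBIS {ι : Type*} (Q : Set (ι → ℝ)) (x : ι → ℝ) (v : ι → ℤ) : Prop :=
  ∃ a b : ι → ℝ, (∀ i, a i < b i) ∧ Q = Set.Icc a b ∧ x ∈ Q ∧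
    ∀ j, v j = if x j = a j then 1 else if x j = b j then -1 else 0


open Finset

namespace Stmt6Comb

variable {n : ℕ}

/-- Cell vectors: entries in {1,0,-1}. -/
def IsCellV (v : Fin n → ℤ) : Prop := ∀ j, v j = 1 ∨ v j = 0 ∨ v j = -1

/-- Sign vectors: entries in {1,-1}. -/
def IsSignV (s : Fin n → ℤ) : Prop := ∀ j, s j = 1 ∨ s j = -1

/-- The (closed) cube of `v` contains the sign vector `s`. -/
def Cov (v s : Fin n → ℤ) : Prop := ∀ j, v j = 0 ∨ v j = s j

/-- A good family: cells, pairwise conflicting, covering. -/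
structure GoodFam (V : Finset (Fin n → ℤ)) : Prop where
  cells : ∀ v ∈ V, IsCellV v
  confl : ∀ v ∈ V, ∀ w ∈ V, v ≠ w → ∃ j, v j * w j = -1
  cov : ∀ s : Fin n → ℤ, IsSignV s → ∃ v ∈ V, Cov v s

open Classical in
/-- The support of a family. -/
noncomputable def suppF (V : Finset (Fin n → ℤ)) : Finset (Fin n) :=
  univ.filter (fun j => ∃ v ∈ V, v j ≠ 0)

open Classical in
lemma mem_suppF {V : Finset (Fin n → ℤ)} {j : Fin n} :
    j ∈ suppF V ↔ ∃ v ∈ V, v j ≠ 0 := by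
  simp [suppF]

lemma suppF_mono {V W : Finset (Fin n → ℤ)} (h : V ⊆ W) : suppF V ⊆ suppF W := by
  intro j hj
  rw [mem_suppF] at *
  obtain ⟨v, hv, hvj⟩ := hj
  exact ⟨v, h hv, hvj⟩

/-- twin pair -/
def TwinPair (V : Finset (Fin n → ℤ)) : Prop :=
  ∃ v ∈ V, ∃ w ∈ V, v ≠ w ∧ ∃ j, v j * w j = -1 ∧ ∀ k, k ≠ j → v k = w k

lemma cell_mul_neg_one {a b : ℤ} (ha : a = 1 ∨ a = 0 ∨ a = -1)
    (hb : b = 1 ∨ b = 0 ∨ b = -1) (h : a * b = -1) : b = -a ∧ a ≠ 0 := by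
  rcases ha with h1|h1|h1 <;> rcases hb with h2|h2|h2 <;> subst h1 <;> subst h2 <;> simp_all <;> omega

/-- extension point of a cell -/
def extV (v : Fin n → ℤ) : Fin n → ℤ := fun j => if v j = 0 then 1 else v j

lemma extV_sign {v : Fin n → ℤ} (hv : IsCellV v) : IsSignV (extV v) := by
  intro j
  rcases hv j with h|h|h <;> simp [extV, h]

lemma extV_cov (v : Fin n → ℤ) : Cov v (extV v) := by
  intro j
  by_cases h : v j = 0 <;> simp [extV, h]

/-- Two distinct members of a good family cannot cover the same sign vector. -/
lemma no_common_point {V : Finset (Fin n → ℤ)} (hV : GoodFam V)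
    {v w s : Fin n → ℤ} (hv : v ∈ V) (hw : w ∈ V) (hne : v ≠ w)
    (hs : IsSignV s) (h1 : Cov v s) (h2 : Cov w s) : False := by
  obtain ⟨j, hj⟩ := hV.confl v hv w hw hne
  rcases h1 j with h|h
  · simp [h] at hj
  rcases h2 j with h'|h'
  · simp [h'] at hj
  rw [h, h'] at hj
  rcases hs j with hs'|hs' <;> rw [hs'] at hj <;> omega

/-- Disjoint cells conflict. -/
lemma disjoint_confl {v w : Fin n → ℤ} (hv : IsCellV v) (hw : IsCellV w)
    (h : ∀ s : Fin n → ℤ, IsSignV s → ¬(Cov v s ∧ Cov w s)) :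
    ∃ j, v j * w j = -1 := by
  by_contra hc
  push_neg at hc
  set t : Fin n → ℤ := fun j => if v j ≠ 0 then v j else if w j ≠ 0 then w j else 1 with ht
  have hts : IsSignV t := by
    intro j
    rcases hv j with h1|h1|h1 <;> rcases hw j with h2|h2|h2 <;> simp [ht, h1, h2]
  refine h t hts ⟨?_, ?_⟩
  · intro j
    by_cases h1 : v j = 0
    · exact Or.inl h1
    · right; simp [ht, h1]
  · intro j
    by_cases h2 : w j = 0
    · exact Or.inl h2
    · right
      by_cases h1 : v j = 0
      · simp [ht, h1, h2]
      · have := hc j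
        rcases hv j with e1|e1|e1 <;> rcases hw j with e2|e2|e2 <;>
          simp [ht, e1, e2] at this ⊢ <;> omega

/-- deficiency -/
noncomputable def defZ (G : Finset (Fin n → ℤ)) : ℤ := (G.card : ℤ) - (suppF G).card

/-- Key lemma: a deficiency maximizer among subsets of a good family is the whole family. -/
lemma max_deficiency_eq_top {V G₀ : Finset (Fin n → ℤ)} (hV : GoodFam V)
    (hsub : G₀ ⊆ V) (hmax : ∀ G ⊆ V, defZ G ≤ defZ G₀) : G₀ = V := by
  classical
  -- Hall's condition for the family outside G₀
  set t : {v // v ∈ V \ G₀} → Finset (Fin n) :=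
    (fun v => (univ.filter (fun j => v.1 j ≠ 0)) \ suppF G₀) with ht
  have hall : ∀ s : Finset {v // v ∈ V \ G₀}, s.card ≤ (s.biUnion t).card := by
    intro s
    set H : Finset (Fin n → ℤ) := s.image Subtype.val with hH
    have hHcard : H.card = s.card := Finset.card_image_of_injective _ Subtype.val_injective
    have hHsub : H ⊆ V \ G₀ := by
      intro v hv
      rw [hH, Finset.mem_image] at hv
      obtain ⟨a, _, rfl⟩ := hv
      exact a.2
    have hdisj : Disjoint G₀ H := by
      refine Finset.disjoint_left.mpr (fun v hv hv' => ?_)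
      exact (Finset.mem_sdiff.mp (hHsub hv')).2 hv
    have hGH : G₀ ∪ H ⊆ V := by
      refine Finset.union_subset hsub (fun v hv => (Finset.mem_sdiff.mp (hHsub hv)).1)
    have hcardU : (G₀ ∪ H).card = G₀.card + H.card := Finset.card_union_of_disjoint hdisj
    have hsuppU : suppF (G₀ ∪ H) = suppF G₀ ∪ suppF H := by
      ext j; simp only [mem_suppF, Finset.mem_union]
      constructor
      · rintro ⟨v, hv, hj⟩
        rcases hv with h|h
        · exact Or.inl ⟨v, h, hj⟩
        · exact Or.inr ⟨v, h, hj⟩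
      · rintro (⟨v, hv, hj⟩|⟨v, hv, hj⟩)
        · exact ⟨v, Or.inl hv, hj⟩
        · exact ⟨v, Or.inr hv, hj⟩
    have hkey := hmax (G₀ ∪ H) hGH
    rw [defZ, defZ, hcardU, hsuppU] at hkey
    have hcardsupp : ((suppF G₀ ∪ suppF H).card : ℤ) ≤ (suppF G₀).card + ((suppF H \ suppF G₀)).card := by
      have : suppF G₀ ∪ suppF H ⊆ suppF G₀ ∪ (suppF H \ suppF G₀) := by
        intro j hj
        rcases Finset.mem_union.mp hj with h|h
        · exact Finset.mem_union_left _ h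
        · by_cases h' : j ∈ suppF G₀
          · exact Finset.mem_union_left _ h'
          · exact Finset.mem_union_right _ (Finset.mem_sdiff.mpr ⟨h, h'⟩)
      calc ((suppF G₀ ∪ suppF H).card : ℤ) ≤ ((suppF G₀ ∪ (suppF H \ suppF G₀)).card : ℤ) := by
            exact_mod_cast Finset.card_le_card this
        _ ≤ _ := by exact_mod_cast Finset.card_union_le _ _
    have hHle : (H.card : ℤ) ≤ ((suppF H \ suppF G₀)).card := by omega
    have hsubBi : suppF H \ suppF G₀ ⊆ s.biUnion t := by
      intro j hj
      obtain ⟨hj1, hj2⟩ := Finset.mem_sdiff.mp hj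
      obtain ⟨v, hv, hvj⟩ := mem_suppF.mp hj1
      rw [hH, Finset.mem_image] at hv
      obtain ⟨a, ha, rfl⟩ := hv
      refine Finset.mem_biUnion.mpr ⟨a, ha, ?_⟩
      rw [ht]
      exact Finset.mem_sdiff.mpr ⟨Finset.mem_filter.mpr ⟨Finset.mem_univ _, hvj⟩, hj2⟩
    have := Finset.card_le_card hsubBi
    omega
  obtain ⟨f, hfinj, hft⟩ := (Finset.all_card_le_biUnion_card_iff_exists_injective t).mp hall
  -- the blocking sign vector outside var G₀
  obtain ⟨s₀, hs₀f, hs₀o⟩ : ∃ s₀ : Fin n → ℤ,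
      (∀ i : {v // v ∈ V \ G₀}, s₀ (f i) = -(i.1 (f i))) ∧
      (∀ j, (∀ i : {v // v ∈ V \ G₀}, f i ≠ j) → s₀ j = 1) := by
    refine ⟨fun j => if h : ∃ i, f i = j then -(h.choose.1 j) else 1, ?_, ?_⟩
    · intro i
      have h : ∃ i', f i' = f i := ⟨i, rfl⟩
      have he : h.choose = i := hfinj h.choose_spec
      show (if h : ∃ i', f i' = f i then -(h.choose.1 (f i)) else 1) = -(i.1 (f i))
      rw [dif_pos h, he]
    · intro j hj
      show (if h : ∃ i', f i' = j then -(h.choose.1 j) else 1) = 1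
      rw [dif_neg]
      rintro ⟨i, hi⟩
      exact hj i hi
  have hfnz : ∀ i : {v // v ∈ V \ G₀}, i.1 (f i) ≠ 0 ∧ f i ∉ suppF G₀ := by
    intro i
    have := hft i
    rw [ht, Finset.mem_sdiff, Finset.mem_filter] at this
    exact ⟨this.1.2, this.2⟩
  have hcell : ∀ v ∈ V, IsCellV v := hV.cells
  have hs₀sign : IsSignV s₀ := by
    intro j
    by_cases h : ∃ i, f i = j
    · obtain ⟨i, rfl⟩ := h
      rw [hs₀f i]
      have h1 := (hfnz i).1
      have h2 := hcell i.1 (Finset.mem_sdiff.mp i.2).1 (f i)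
      rcases h2 with h|h|h <;> rw [h] at h1 ⊢ <;> simp at h1 ⊢
    · left
      apply hs₀o
      intro i hi
      exact h ⟨i, hi⟩
  -- every sign vector is covered by G₀
  have hG₀cov : ∀ u : Fin n → ℤ, IsSignV u → ∃ v ∈ G₀, Cov v u := by
    intro u hu
    classical
    set u' : Fin n → ℤ := fun j => if j ∈ suppF G₀ then u j else s₀ j with hu'
    have hu'val : ∀ j, (j ∈ suppF G₀ → u' j = u j) ∧ (j ∉ suppF G₀ → u' j = s₀ j) := by
      intro j
      constructor <;> intro h
      · show (if j ∈ suppF G₀ then u j else s₀ j) = u j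
        rw [if_pos h]
      · show (if j ∈ suppF G₀ then u j else s₀ j) = s₀ j
        rw [if_neg h]
    have hu'sign : IsSignV u' := by
      intro j
      by_cases h : j ∈ suppF G₀
      · rw [(hu'val j).1 h]; exact hu j
      · rw [(hu'val j).2 h]; exact hs₀sign j
    obtain ⟨v, hv, hcov⟩ := hV.cov u' hu'sign
    have hvG₀ : v ∈ G₀ := by
      by_contra hvn
      have hvVG : v ∈ V \ G₀ := Finset.mem_sdiff.mpr ⟨hv, hvn⟩
      have h1 : v (f ⟨v, hvVG⟩) ≠ 0 := (hfnz ⟨v, hvVG⟩).1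
      have h2 := (hfnz ⟨v, hvVG⟩).2
      rcases hcov (f ⟨v, hvVG⟩) with h|h
      · exact h1 h
      · rw [(hu'val _).2 h2] at h
        have h3 : s₀ (f ⟨v, hvVG⟩) = -(v (f ⟨v, hvVG⟩)) := hs₀f ⟨v, hvVG⟩
        rw [h3] at h
        omega
    refine ⟨v, hvG₀, fun j => ?_⟩
    rcases hcov j with h|h
    · exact Or.inl h
    · by_cases hz : v j = 0
      · exact Or.inl hz
      · right
        have hjsupp : j ∈ suppF G₀ := mem_suppF.mpr ⟨v, hvG₀, hz⟩
        rw [h, (hu'val j).1 hjsupp]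
  -- conclude G₀ = V
  by_contra hne
  have : ∃ w, w ∈ V \ G₀ := by
    by_contra h
    push_neg at h
    apply hne
    apply Finset.Subset.antisymm hsub
    intro v hv
    by_contra hv'
    exact h v (Finset.mem_sdiff.mpr ⟨hv, hv'⟩)
  obtain ⟨w, hw⟩ := this
  obtain ⟨hwV, hwG₀⟩ := Finset.mem_sdiff.mp hw
  have hsw : IsSignV (extV w) := extV_sign (hcell w hwV)
  obtain ⟨v, hvG₀, hcovv⟩ := hG₀cov (extV w) hsw
  exact no_common_point hV (hsub hvG₀) hwV (fun h => hwG₀ (h ▸ hvG₀)) hsw hcovv (extV_cov w)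



/-- Lower bound (Tarsi): a good family has more members than its support size. -/
lemma LB {V : Finset (Fin n → ℤ)} (hV : GoodFam V) :
    (suppF V).card + 1 ≤ V.card := by
  classical
  obtain ⟨G₀, hG₀mem, hG₀max⟩ := Finset.exists_max_image V.powerset defZ
    ⟨∅, Finset.empty_mem_powerset V⟩
  have hG₀sub : G₀ ⊆ V := Finset.mem_powerset.mp hG₀mem
  have hmax' : ∀ G ⊆ V, defZ G ≤ defZ G₀ := fun G hG =>
    hG₀max G (Finset.mem_powerset.mpr hG)
  have hG₀V : G₀ = V := max_deficiency_eq_top hV hG₀sub hmax'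
  -- defZ V ≥ 1
  by_contra hlt
  push_neg at hlt
  have hdefV : defZ V ≤ 0 := by
    rw [defZ]
    omega
  have hdefE : defZ (∅ : Finset (Fin n → ℤ)) = 0 := by
    simp [defZ, suppF]
  have hEmax : ∀ G ⊆ V, defZ G ≤ defZ (∅ : Finset (Fin n → ℤ)) := by
    intro G hG
    rw [hdefE]
    calc defZ G ≤ defZ G₀ := hmax' G hG
      _ = defZ V := by rw [hG₀V]
      _ ≤ 0 := hdefV
  have hEV : (∅ : Finset (Fin n → ℤ)) = V :=
    max_deficiency_eq_top hV (Finset.empty_subset V) hEmax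
  -- but V covers the all-ones vector
  obtain ⟨v, hv, _⟩ := hV.cov (fun _ => 1) (fun _ => Or.inl rfl)
  rw [← hEV] at hv
  exact absurd hv (Finset.notMem_empty v)

/-- Strict deficiency for proper subsets of a minimal good family. -/
lemma proper_subset_matched {V : Finset (Fin n → ℤ)} (hV : GoodFam V)
    (hmin : V.card = (suppF V).card + 1)
    {G : Finset (Fin n → ℤ)} (hG : G ⊆ V) (hne : G ≠ V) :
    G.card ≤ (suppF G).card := by
  classical
  by_contra hlt
  push_neg at hlt
  -- then G has deficiency ≥ 1 = defZ V, so G is a maximizer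
  have hdefG : (1 : ℤ) ≤ defZ G := by
    rw [defZ]; omega
  have hdefV : defZ V = 1 := by
    rw [defZ, hmin]; push_cast; ring
  have hmax : ∀ G' ⊆ V, defZ G' ≤ defZ G := by
    intro G' hG'
    -- defZ G' ≤ defZ of a global maximizer, which equals V, which has defZ 1 ≤ defZ G
    obtain ⟨G₀, hG₀mem, hG₀max⟩ := Finset.exists_max_image V.powerset defZ
      ⟨∅, Finset.empty_mem_powerset V⟩
    have hG₀sub : G₀ ⊆ V := Finset.mem_powerset.mp hG₀mem
    have hmax' : ∀ G'' ⊆ V, defZ G'' ≤ defZ G₀ := fun G'' hG'' =>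
      hG₀max G'' (Finset.mem_powerset.mpr hG'')
    have hG₀V : G₀ = V := max_deficiency_eq_top hV hG₀sub hmax'
    calc defZ G' ≤ defZ G₀ := hmax' G' hG'
      _ = defZ V := by rw [hG₀V]
      _ ≤ defZ G := by rw [hdefV]; exact hdefG
  exact hne (max_deficiency_eq_top hV hG hmax)

/-- both signs appear at every support coordinate -/
lemma sides_nonempty {V : Finset (Fin n → ℤ)} (hV : GoodFam V) {j : Fin n}
    (hj : j ∈ suppF V) {e : ℤ} (he : e = 1 ∨ e = -1) :
    ∃ v ∈ V, v j = e := by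
  classical
  obtain ⟨u, hu, huj⟩ := mem_suppF.mp hj
  have hucell := hV.cells u hu
  have hup : IsSignV (extV u) := extV_sign hucell
  have hupj : extV u j = u j := by simp [extV, huj]
  by_cases hej : u j = e
  · exact ⟨u, hu, hej⟩
  · -- find a member with value -(u j) = e at j
    have hueq : u j = -e := by
      rcases hucell j with h|h|h <;> rcases he with he|he <;> omega
    set p' : Fin n → ℤ := Function.update (extV u) j e with hp'
    have hp'sign : IsSignV p' := by
      intro k
      by_cases hk : k = j
      · subst hk; rw [hp', Function.update_self]; exact he
      · rw [hp', Function.update_of_ne hk]; exact hup k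
    obtain ⟨w, hw, hcovw⟩ := hV.cov p' hp'sign
    refine ⟨w, hw, ?_⟩
    rcases hcovw j with h|h
    · -- w j = 0: then w also covers extV u, contradiction with u covering it
      exfalso
      have hwu : w ≠ u := fun hh => huj (hh ▸ h)
      have hcovwp : Cov w (extV u) := by
        intro k
        by_cases hk : k = j
        · subst hk; exact Or.inl h
        · rcases hcovw k with h'|h'
          · exact Or.inl h'
          · right; rw [h', hp', Function.update_of_ne hk]
      exact no_common_point hV hw hu hwu hup hcovwp (extV_cov u)
    · rw [h, hp', Function.update_self]

section Side
variable (V : Finset (Fin n → ℤ)) (j : Fin n) (e : ℤ)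

/-- the members weakly on the `e` side of coordinate `j` -/
def sideP : Finset (Fin n → ℤ) :=
  V.filter (fun v => v j ≠ -e)

/-- the projected partition on the `e` side of coordinate `j` -/
def sideW : Finset (Fin n → ℤ) :=
  (sideP V j e).image (fun v => Function.update v j 0)

end Side

variable {V : Finset (Fin n → ℤ)} {j : Fin n} {e : ℤ}

lemma mem_sideP {v : Fin n → ℤ} : v ∈ sideP V j e ↔ v ∈ V ∧ v j ≠ -e := by
  simp [sideP]

lemma mem_sideW {w : Fin n → ℤ} :
    w ∈ sideW V j e ↔ ∃ v ∈ sideP V j e, Function.update v j 0 = w := by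
  rw [sideW, Finset.mem_image]

lemma update_inj_on_sideP (hV : GoodFam V) (he : e = 1 ∨ e = -1) :
    ∀ v ∈ sideP V j e, ∀ w ∈ sideP V j e,
      Function.update v j 0 = Function.update w j 0 → v = w := by
  intro v hv w hw heq
  rw [mem_sideP] at hv hw
  by_contra hne
  obtain ⟨r, hr⟩ := hV.confl v hv.1 w hw.1 hne
  by_cases hrj : r = j
  · subst hrj
    have h1 := hV.cells v hv.1 r
    have h2 := hV.cells w hw.1 r
    have := hv.2; have := hw.2
    rcases h1 with h|h|h <;> rcases h2 with h'|h'|h' <;> rcases he with he|he <;>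
      subst he <;> simp_all <;> omega
  · have : v r = w r := by
      have := congrFun heq r
      rwa [Function.update_of_ne hrj, Function.update_of_ne hrj] at this
    rw [this] at hr
    have h2 := hV.cells w hw.1 r
    rcases h2 with h|h|h <;> rw [h] at hr <;> omega

lemma card_sideW (hV : GoodFam V) (he : e = 1 ∨ e = -1) :
    (sideW V j e).card = (sideP V j e).card := by
  classical
  apply Finset.card_image_of_injOn
  intro v hv w hw
  exact update_inj_on_sideP hV he v hv w hw

lemma goodFam_sideW (hV : GoodFam V) (he : e = 1 ∨ e = -1) :
    GoodFam (sideW V j e) := by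
  classical
  constructor
  · intro w hw
    obtain ⟨v, hv, rfl⟩ := mem_sideW.mp hw
    intro k
    by_cases hk : k = j
    · subst hk; rw [Function.update_self]; right; left; rfl
    · rw [Function.update_of_ne hk]; exact hV.cells v (mem_sideP.mp hv).1 k
  · intro w1 hw1 w2 hw2 hne
    obtain ⟨v1, hv1, rfl⟩ := mem_sideW.mp hw1
    obtain ⟨v2, hv2, rfl⟩ := mem_sideW.mp hw2
    have hvne : v1 ≠ v2 := fun h => hne (h ▸ rfl)
    obtain ⟨r, hr⟩ := hV.confl v1 (mem_sideP.mp hv1).1 v2 (mem_sideP.mp hv2).1 hvne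
    have hrj : r ≠ j := by
      intro h
      subst h
      have h1 := hV.cells v1 (mem_sideP.mp hv1).1 r
      have h2 := hV.cells v2 (mem_sideP.mp hv2).1 r
      have e1 := (mem_sideP.mp hv1).2
      have e2 := (mem_sideP.mp hv2).2
      rcases h1 with h|h|h <;> rcases h2 with h'|h'|h' <;> rcases he with he|he <;>
        subst he <;> simp_all <;> omega
    exact ⟨r, by rwa [Function.update_of_ne hrj, Function.update_of_ne hrj]⟩
  · intro s hs
    have hsj : IsSignV (Function.update s j e) := by
      intro k
      by_cases hk : k = j
      · subst hk; rw [Function.update_self]; exact he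
      · rw [Function.update_of_ne hk]; exact hs k
    obtain ⟨v, hv, hcov⟩ := hV.cov _ hsj
    have hvj : v j ≠ -e := by
      rcases hcov j with h|h
      · rw [h]; rcases he with he|he <;> omega
      · rw [h, Function.update_self]; rcases he with he|he <;> omega
    refine ⟨Function.update v j 0, mem_sideW.mpr ⟨v, mem_sideP.mpr ⟨hv, hvj⟩, rfl⟩, ?_⟩
    intro k
    by_cases hk : k = j
    · subst hk; left; rw [Function.update_self]
    · rw [Function.update_of_ne hk]
      rcases hcov k with h|h
      · exact Or.inl h
      · right; rwa [Function.update_of_ne hk] at h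

lemma suppF_sideW_subset : suppF (sideW V j e) ⊆ (suppF V).erase j := by
  intro k hk
  obtain ⟨w, hw, hwk⟩ := mem_suppF.mp hk
  obtain ⟨v, hv, rfl⟩ := mem_sideW.mp hw
  have hkj : k ≠ j := by
    intro h; subst h; rw [Function.update_self] at hwk; exact hwk rfl
  rw [Function.update_of_ne hkj] at hwk
  exact Finset.mem_erase.mpr ⟨hkj, mem_suppF.mpr ⟨v, (mem_sideP.mp hv).1, hwk⟩⟩

/-- SPLIT: for minimal families both side projections are minimal. -/
lemma split (hV : GoodFam V) (hmin : V.card = (suppF V).card + 1)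
    (hj : j ∈ suppF V) (he : e = 1 ∨ e = -1) :
    (sideW V j e).card = (suppF (sideW V j e)).card + 1 := by
  classical
  have hne : e ≠ -e := by rcases he with h|h <;> omega
  have he' : -e = 1 ∨ -e = -1 := by rcases he with h|h <;> omega
  -- notation
  set A := suppF (sideW V j e) with hA
  set B := suppF (sideW V j (-e)) with hB
  set V0 := V.filter (fun v => v j = 0) with hV0
  -- P_e ∪ P_{-e} = V  and  P_e ∩ P_{-e} = V0
  have hPunion : sideP V j e ∪ sideP V j (-e) = V := by
    ext v
    simp only [Finset.mem_union, mem_sideP]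
    constructor
    · rintro (⟨h, _⟩|⟨h, _⟩) <;> exact h
    · intro hv
      by_cases h : v j = -e
      · right; exact ⟨hv, by omega⟩
      · left; exact ⟨hv, h⟩
  have hPinter : sideP V j e ∩ sideP V j (-e) = V0 := by
    ext v
    simp only [Finset.mem_inter, mem_sideP, hV0, Finset.mem_filter]
    constructor
    · rintro ⟨⟨hv, h1⟩, ⟨_, h2⟩⟩
      refine ⟨hv, ?_⟩
      have := hV.cells v hv j
      rcases he with he|he <;> subst he <;> rcases this with h|h|h <;> simp_all
    · rintro ⟨hv, h⟩
      rw [h]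
      exact ⟨⟨hv, by omega⟩, ⟨hv, by omega⟩⟩
  have hcards : (sideP V j e).card + (sideP V j (-e)).card = V.card + V0.card := by
    have h := Finset.card_union_add_card_inter (sideP V j e) (sideP V j (-e))
    rw [hPunion, hPinter] at h
    omega
  -- A ∪ B = (suppF V).erase j
  have hABsub : A ∪ B ⊆ (suppF V).erase j :=
    Finset.union_subset suppF_sideW_subset suppF_sideW_subset
  have hABsup : (suppF V).erase j ⊆ A ∪ B := by
    intro k hk
    obtain ⟨hkj, hkV⟩ := Finset.mem_erase.mp hk
    obtain ⟨v, hv, hvk⟩ := mem_suppF.mp hkV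
    have : v ∈ sideP V j e ∪ sideP V j (-e) := by rw [hPunion]; exact hv
    rcases Finset.mem_union.mp this with h|h
    · refine Finset.mem_union.mpr (Or.inl ?_)
      rw [hA, mem_suppF]
      exact ⟨Function.update v j 0, mem_sideW.mpr ⟨v, h, rfl⟩,
        by rwa [Function.update_of_ne hkj]⟩
    · refine Finset.mem_union.mpr (Or.inr ?_)
      rw [hB, mem_suppF]
      exact ⟨Function.update v j 0, mem_sideW.mpr ⟨v, h, rfl⟩,
        by rwa [Function.update_of_ne hkj]⟩
  have hAB : A ∪ B = (suppF V).erase j := Finset.Subset.antisymm hABsub hABsup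
  have hABcard : (A ∪ B).card = (suppF V).card - 1 := by
    rw [hAB, Finset.card_erase_of_mem hj]
  -- suppF V0 ⊆ A ∩ B
  have hV0supp : suppF V0 ⊆ A ∩ B := by
    intro k hk
    obtain ⟨v, hv, hvk⟩ := mem_suppF.mp hk
    rw [hV0, Finset.mem_filter] at hv
    have hkj : k ≠ j := fun h => hvk (h ▸ hv.2)
    have hv1 : v ∈ sideP V j e := mem_sideP.mpr ⟨hv.1, by rw [hv.2]; omega⟩
    have hv2 : v ∈ sideP V j (-e) := mem_sideP.mpr ⟨hv.1, by rw [hv.2]; omega⟩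
    refine Finset.mem_inter.mpr ⟨?_, ?_⟩
    · rw [hA, mem_suppF]
      exact ⟨Function.update v j 0, mem_sideW.mpr ⟨v, hv1, rfl⟩,
        by rwa [Function.update_of_ne hkj]⟩
    · rw [hB, mem_suppF]
      exact ⟨Function.update v j 0, mem_sideW.mpr ⟨v, hv2, rfl⟩,
        by rwa [Function.update_of_ne hkj]⟩
  -- V0 is a proper subset of V
  have hV0ne : V0 ≠ V := by
    intro h
    obtain ⟨v, hv, hvj⟩ := sides_nonempty hV hj he
    have : v ∈ V0 := h ▸ hv
    rw [hV0, Finset.mem_filter] at this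
    rw [hvj] at this
    rcases he with he|he <;> omega
  have hV0card : V0.card ≤ (suppF V0).card :=
    proper_subset_matched hV hmin (Finset.filter_subset _ _) hV0ne
  have hV0AB : (suppF V0).card ≤ (A ∩ B).card := Finset.card_le_card hV0supp
  -- LB for both sides
  have hLBe : A.card + 1 ≤ (sideW V j e).card := LB (goodFam_sideW hV he)
  have hLBe' : B.card + 1 ≤ (sideW V j (-e)).card := LB (goodFam_sideW hV he')
  have hWe : (sideW V j e).card = (sideP V j e).card := card_sideW hV he
  have hWe' : (sideW V j (-e)).card = (sideP V j (-e)).card := card_sideW hV he'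
  have hABcards : (A ∪ B).card + (A ∩ B).card = A.card + B.card :=
    Finset.card_union_add_card_inter A B
  have hsupppos : 1 ≤ (suppF V).card := by
    have := Finset.card_pos.mpr ⟨j, hj⟩
    omega
  omega

/-- After merging a twin pair in a minimal family, the merge coordinate leaves the
support; hence every other member vanishes at the twin coordinate. -/
lemma twin_merge_zero {U : Finset (Fin n → ℤ)} (hU : GoodFam U)
    (hUmin : U.card = (suppF U).card + 1)
    {r t : Fin n → ℤ} {l : Fin n} (hr : r ∈ U) (ht : t ∈ U) (hne : r ≠ t)
    (hl : r l * t l = -1) (hagree : ∀ k, k ≠ l → r k = t k) :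
    ∀ v ∈ U, v ≠ r → v ≠ t → v l = 0 := by
  classical
  have hrc := hU.cells r hr
  have htc := hU.cells t ht
  obtain ⟨htl, hrl⟩ := cell_mul_neg_one (hrc l) (htc l) hl
  set M : Fin n → ℤ := Function.update r l 0 with hM
  have hMc : IsCellV M := by
    intro k
    by_cases hk : k = l
    · subst hk; rw [hM, Function.update_self]; right; left; rfl
    · rw [hM, Function.update_of_ne hk]; exact hrc k
  -- covering merge
  have hMcov : ∀ s : Fin n → ℤ, IsSignV s → (Cov M s ↔ (Cov r s ∨ Cov t s)) := by
    intro s hs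
    constructor
    · intro h
      by_cases hsl' : s l = r l
      · left
        intro k
        by_cases hk : k = l
        · rw [hk]; right; exact hsl'.symm
        · have := h k; rwa [hM, Function.update_of_ne hk] at this
      · right
        intro k
        by_cases hk : k = l
        · rw [hk]
          right
          have h1 := hrc l
          have h2 := hs l
          rw [htl]
          omega
        · have := h k
          rw [hM, Function.update_of_ne hk] at this
          rwa [← hagree k hk]
    · intro h k
      by_cases hk : k = l
      · rw [hk]; left; rw [hM, Function.update_self]
      · rw [hM, Function.update_of_ne hk]
        rcases h with h|h
        · exact h k
        · rw [hagree k hk]; exact h k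
  set U'' : Finset (Fin n → ℤ) := insert M ((U.erase r).erase t) with hU''
  have hMnotmem : M ∉ (U.erase r).erase t := by
    intro hmem
    have hMU : M ∈ U := Finset.mem_of_mem_erase (Finset.mem_of_mem_erase hmem)
    have hMr : M ≠ r := by
      intro h
      have := congrFun h l
      rw [hM, Function.update_self] at this
      exact hrl this.symm
    have hMt : M ≠ t := by
      intro h
      have h0 := congrFun h l
      rw [hM, Function.update_self, htl] at h0
      exact hrl (by omega)
    have hsM := extV_sign hMc
    have := (hMcov (extV M) hsM).mp (extV_cov M)
    rcases this with h|h
    · exact no_common_point hU hMU hr hMr hsM (extV_cov M) h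
    · exact no_common_point hU hMU ht hMt hsM (extV_cov M) h
  have hcard'' : U''.card = U.card - 1 := by
    rw [hU'', Finset.card_insert_of_notMem hMnotmem,
      Finset.card_erase_of_mem (Finset.mem_erase.mpr ⟨fun h => hne h.symm, ht⟩),
      Finset.card_erase_of_mem hr]
    have : 2 ≤ U.card := Finset.one_lt_card.mpr ⟨r, hr, t, ht, hne⟩
    omega
  have hgood'' : GoodFam U'' := by
    constructor
    · intro v hv
      rw [hU'', Finset.mem_insert] at hv
      rcases hv with rfl|hv
      · exact hMc
      · exact hU.cells v (Finset.mem_of_mem_erase (Finset.mem_of_mem_erase hv))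
    · intro v hv w hw hvw
      rw [hU'', Finset.mem_insert] at hv hw
      rcases hv with rfl|hv <;> rcases hw with rfl|hw
      · exact absurd rfl hvw
      · -- v = M, w old
        have hwU := Finset.mem_of_mem_erase (Finset.mem_of_mem_erase hw)
        have hwr : w ≠ r := Finset.ne_of_mem_erase (Finset.mem_of_mem_erase hw)
        have hwt : w ≠ t := Finset.ne_of_mem_erase hw
        apply disjoint_confl hMc (hU.cells w hwU)
        intro s hs ⟨h1, h2⟩
        rcases (hMcov s hs).mp h1 with h|h
        · exact no_common_point hU hr hwU (fun hh => hwr hh.symm) hs h h2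
        · exact no_common_point hU ht hwU (fun hh => hwt hh.symm) hs h h2
      · have hvU := Finset.mem_of_mem_erase (Finset.mem_of_mem_erase hv)
        have hvr : v ≠ r := Finset.ne_of_mem_erase (Finset.mem_of_mem_erase hv)
        have hvt : v ≠ t := Finset.ne_of_mem_erase hv
        apply disjoint_confl (hU.cells v hvU) hMc
        intro s hs ⟨h1, h2⟩
        rcases (hMcov s hs).mp h2 with h|h
        · exact no_common_point hU hvU hr hvr hs h1 h
        · exact no_common_point hU hvU ht hvt hs h1 h
      · have hvU := Finset.mem_of_mem_erase (Finset.mem_of_mem_erase hv)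
        have hwU := Finset.mem_of_mem_erase (Finset.mem_of_mem_erase hw)
        exact hU.confl v hvU w hwU hvw
    · intro s hs
      obtain ⟨v, hv, hcov⟩ := hU.cov s hs
      by_cases hvr : v = r
      · refine ⟨M, Finset.mem_insert_self _ _, (hMcov s hs).mpr (Or.inl (hvr ▸ hcov))⟩
      by_cases hvt : v = t
      · refine ⟨M, Finset.mem_insert_self _ _, (hMcov s hs).mpr (Or.inr (hvt ▸ hcov))⟩
      · refine ⟨v, ?_, hcov⟩
        rw [hU'']
        exact Finset.mem_insert_of_mem
          (Finset.mem_erase.mpr ⟨hvt, Finset.mem_erase.mpr ⟨hvr, hv⟩⟩)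
  -- support bound
  have hsupp_sub : suppF U'' ⊆ suppF U := by
    intro k hk
    obtain ⟨v, hv, hvk⟩ := mem_suppF.mp hk
    rw [hU'', Finset.mem_insert] at hv
    rcases hv with rfl|hv
    · refine mem_suppF.mpr ⟨r, hr, ?_⟩
      intro h
      apply hvk
      by_cases hkl : k = l
      · subst hkl; rw [hM, Function.update_self]
      · rw [hM, Function.update_of_ne hkl]; exact h
    · exact mem_suppF.mpr ⟨v, Finset.mem_of_mem_erase (Finset.mem_of_mem_erase hv), hvk⟩
  have hsupp_sup : (suppF U).erase l ⊆ suppF U'' := by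
    intro k hk
    obtain ⟨hkl, hkU⟩ := Finset.mem_erase.mp hk
    obtain ⟨v, hv, hvk⟩ := mem_suppF.mp hkU
    by_cases hvr : v = r
    · refine mem_suppF.mpr ⟨M, Finset.mem_insert_self _ _, ?_⟩
      rw [hM, Function.update_of_ne hkl]
      exact hvr ▸ hvk
    by_cases hvt : v = t
    · refine mem_suppF.mpr ⟨M, Finset.mem_insert_self _ _, ?_⟩
      rw [hM, Function.update_of_ne hkl, hagree k hkl]
      exact hvt ▸ hvk
    · refine mem_suppF.mpr ⟨v, ?_, hvk⟩
      rw [hU'']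
      exact Finset.mem_insert_of_mem
        (Finset.mem_erase.mpr ⟨hvt, Finset.mem_erase.mpr ⟨hvr, hv⟩⟩)
  have hlU : l ∈ suppF U := mem_suppF.mpr ⟨r, hr, hrl⟩
  have hLB'' := LB hgood''
  have hcard_er : ((suppF U).erase l).card = (suppF U).card - 1 :=
    Finset.card_erase_of_mem hlU
  have hsuppcard : (suppF U'').card ≤ (suppF U).card - 1 := by omega
  have hlnot : l ∉ suppF U'' := by
    intro hmem
    have h1 : insert l ((suppF U).erase l) ⊆ suppF U'' := by
      intro k hk
      rcases Finset.mem_insert.mp hk with rfl|hk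
      · exact hmem
      · exact hsupp_sup hk
    have h2 := Finset.card_le_card h1
    rw [Finset.card_insert_of_notMem (Finset.notMem_erase _ _)] at h2
    have hpos : 1 ≤ (suppF U).card := Finset.card_pos.mpr ⟨l, hlU⟩
    omega
  intro v hv hvr hvt
  by_contra hvl
  apply hlnot
  refine mem_suppF.mpr ⟨v, ?_, hvl⟩
  rw [hU'']
  exact Finset.mem_insert_of_mem
    (Finset.mem_erase.mpr ⟨hvt, Finset.mem_erase.mpr ⟨hvr, hv⟩⟩)

open Classical in
noncomputable def dF (V : Finset (Fin n → ℤ)) (j : Fin n) : ℕ :=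
  (V.filter (fun v => v j ≠ 0)).card

open Classical in
lemma mem_dFilter {V : Finset (Fin n → ℤ)} {j : Fin n} {v : Fin n → ℤ} :
    v ∈ V.filter (fun v => v j ≠ 0) ↔ v ∈ V ∧ v j ≠ 0 := by simp

/-- The L-flip: replaces the mixed pair (p,q) by (p',q'), increasing the degree at j. -/
lemma flip_lemma {V : Finset (Fin n → ℤ)} (hV : GoodFam V)
    (hmin : V.card = (suppF V).card + 1)
    {p q : Fin n → ℤ} {j l : Fin n} (hp : p ∈ V) (hq : q ∈ V) (hpq : p ≠ q)
    (hpj : p j = 1) (hqj : q j = 0) (hlj : l ≠ j)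
    (hpl : p l ≠ 0) (hql : q l = -(p l))
    (hagree : ∀ k, k ≠ j → k ≠ l → p k = q k) :
    ∃ V' : Finset (Fin n → ℤ), GoodFam V' ∧ V'.card = V.card ∧ suppF V' = suppF V ∧
      dF V' j = dF V j + 1 ∧ (TwinPair V' → TwinPair V) := by
  classical
  have hjl : j ≠ l := fun h => hlj h.symm
  have hpc := hV.cells p hp
  have hqc := hV.cells q hq
  set p' : Fin n → ℤ := Function.update p l 0 with hp'
  set q' : Fin n → ℤ := Function.update q j (-1) with hq'
  have hp'j : p' j = 1 := by rw [hp', Function.update_of_ne hjl, hpj]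
  have hp'l : p' l = 0 := by rw [hp', Function.update_self]
  have hq'j : q' j = -1 := by rw [hq', Function.update_self]
  have hq'l : q' l = -(p l) := by rw [hq', Function.update_of_ne hlj, hql]
  have hoff : ∀ k, k ≠ j → k ≠ l → (p' k = p k ∧ q' k = q k ∧ p k = q k) := by
    intro k hkj hkl
    exact ⟨by rw [hp', Function.update_of_ne hkl],
      by rw [hq', Function.update_of_ne hkj], hagree k hkj hkl⟩
  have hp'c : IsCellV p' := by
    intro k
    by_cases hkl : k = l
    · rw [hkl, hp'l]; right; left; rfl
    · rw [hp', Function.update_of_ne hkl]; exact hpc k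
  have hq'c : IsCellV q' := by
    intro k
    by_cases hkj : k = j
    · rw [hkj, hq'j]; right; right; rfl
    · rw [hq', Function.update_of_ne hkj]; exact hqc k
  -- the union of covered sign vectors is preserved
  have hunion : ∀ s : Fin n → ℤ, IsSignV s → ((Cov p s ∨ Cov q s) ↔ (Cov p' s ∨ Cov q' s)) := by
    intro s hs
    constructor
    · rintro (h|h)
      · left
        intro k
        by_cases hkl : k = l
        · rw [hkl, hp'l]; left; rfl
        · rw [hp', Function.update_of_ne hkl]; exact h k
      · rcases hs j with hsj|hsj
        · left
          intro k
          by_cases hkl : k = l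
          · rw [hkl, hp'l]; left; rfl
          · rw [hp', Function.update_of_ne hkl]
            by_cases hkj : k = j
            · rw [hkj, hpj, hsj]; right; rfl
            · rw [hagree k hkj hkl]; exact h k
        · right
          intro k
          by_cases hkj : k = j
          · rw [hkj, hq'j, hsj]; right; rfl
          · rw [hq', Function.update_of_ne hkj]; exact h k
    · rintro (h|h)
      · -- Cov p' s
        by_cases hsl : s l = p l
        · left
          intro k
          by_cases hkl : k = l
          · rw [hkl]; right; exact hsl.symm
          · have := h k; rwa [hp', Function.update_of_ne hkl] at this
        · right
          intro k
          by_cases hkj : k = j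
          · rw [hkj, hqj]; left; rfl
          · by_cases hkl : k = l
            · rw [hkl, hql]
              right
              have h1 := hpc l
              have h2 := hs l
              omega
            · rw [← hagree k hkj hkl]
              have := h k; rwa [hp', Function.update_of_ne hkl] at this
      · -- Cov q' s
        right
        intro k
        by_cases hkj : k = j
        · rw [hkj, hqj]; left; rfl
        · have := h k; rwa [hq', Function.update_of_ne hkj] at this
  have hp'q' : p' ≠ q' := by
    intro h
    have := congrFun h j
    rw [hp'j, hq'j] at this
    omega
  have hp'p : p' ≠ p := by
    intro h
    have := congrFun h l
    rw [hp'l] at this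
    exact hpl this.symm
  have hp'q : p' ≠ q := by
    intro h
    have := congrFun h j
    rw [hp'j, hqj] at this
    omega
  have hq'p : q' ≠ p := by
    intro h
    have := congrFun h j
    rw [hq'j, hpj] at this
    omega
  have hq'q : q' ≠ q := by
    intro h
    have := congrFun h j
    rw [hq'j, hqj] at this
    omega
  -- p' and q' are not members of V
  have hnotV : ∀ u : Fin n → ℤ, IsCellV u → (∀ s, IsSignV s → Cov u s → (Cov p s ∨ Cov q s)) →
      ∀ r ∈ V, r ≠ p → r ≠ q → u ≠ r := by
    intro u huc hcov r hr hrp hrq hur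
    have hus := extV_sign huc
    rcases hcov (extV u) hus (extV_cov u) with h|h
    · exact no_common_point hV hr hp hrp hus (hur ▸ extV_cov u) h
    · exact no_common_point hV hr hq hrq hus (hur ▸ extV_cov u) h
  have hp'cov : ∀ s, IsSignV s → Cov p' s → (Cov p s ∨ Cov q s) := by
    intro s hs h
    exact (hunion s hs).mpr (Or.inl h)
  have hq'cov : ∀ s, IsSignV s → Cov q' s → (Cov p s ∨ Cov q s) := by
    intro s hs h
    exact (hunion s hs).mpr (Or.inr h)
  have hp'notV : ∀ r ∈ V, r ≠ p → r ≠ q → p' ≠ r := fun r hr h1 h2 =>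
    hnotV p' hp'c hp'cov r hr h1 h2
  have hq'notV : ∀ r ∈ V, r ≠ p → r ≠ q → q' ≠ r := fun r hr h1 h2 =>
    hnotV q' hq'c hq'cov r hr h1 h2
  set base : Finset (Fin n → ℤ) := (V.erase p).erase q with hbase
  have hmem_base : ∀ v, v ∈ base ↔ v ∈ V ∧ v ≠ p ∧ v ≠ q := by
    intro v
    rw [hbase, Finset.mem_erase, Finset.mem_erase]
    tauto
  have hp'base : p' ∉ base := by
    intro h
    obtain ⟨hv, h1, h2⟩ := (hmem_base p').mp h
    exact hp'notV p' hv h1 h2 rfl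
  have hq'base : q' ∉ base := by
    intro h
    obtain ⟨hv, h1, h2⟩ := (hmem_base q').mp h
    exact hq'notV q' hv h1 h2 rfl
  set V' : Finset (Fin n → ℤ) := insert p' (insert q' base) with hV'
  have hmem_V' : ∀ v, v ∈ V' ↔ v = p' ∨ v = q' ∨ (v ∈ V ∧ v ≠ p ∧ v ≠ q) := by
    intro v
    rw [hV', Finset.mem_insert, Finset.mem_insert, hmem_base]
  have hqbase : q ∉ base := fun h => ((hmem_base q).mp h).2.2 rfl
  have hpbase : p ∉ base := fun h => ((hmem_base p).mp h).2.1 rfl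
  have hcard' : V'.card = V.card := by
    rw [hV', Finset.card_insert_of_notMem, Finset.card_insert_of_notMem hq'base,
      hbase, Finset.card_erase_of_mem (Finset.mem_erase.mpr ⟨fun h => hpq h.symm, hq⟩),
      Finset.card_erase_of_mem hp]
    · have : 2 ≤ V.card := Finset.one_lt_card.mpr ⟨p, hp, q, hq, hpq⟩
      omega
    · rw [Finset.mem_insert]
      push_neg
      exact ⟨hp'q', hp'base⟩
  have hgood' : GoodFam V' := by
    constructor
    · intro v hv
      rcases (hmem_V' v).mp hv with rfl|rfl|⟨hv, _, _⟩
      · exact hp'c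
      · exact hq'c
      · exact hV.cells v hv
    · intro v hv w hw hvw
      rcases (hmem_V' v).mp hv with rfl|rfl|⟨hv1, hv2, hv3⟩ <;>
        rcases (hmem_V' w).mp hw with rfl|rfl|⟨hw1, hw2, hw3⟩
      · exact absurd rfl hvw
      · exact ⟨j, by rw [hp'j, hq'j]; norm_num⟩
      · refine disjoint_confl hp'c (hV.cells w hw1) ?_
        intro s hs ⟨h1, h2⟩
        rcases hp'cov s hs h1 with h|h
        · exact no_common_point hV hp hw1 (fun hh => hw2 hh.symm) hs h h2
        · exact no_common_point hV hq hw1 (fun hh => hw3 hh.symm) hs h h2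
      · exact ⟨j, by rw [hp'j, hq'j]; norm_num⟩
      · exact absurd rfl hvw
      · refine disjoint_confl hq'c (hV.cells w hw1) ?_
        intro s hs ⟨h1, h2⟩
        rcases hq'cov s hs h1 with h|h
        · exact no_common_point hV hp hw1 (fun hh => hw2 hh.symm) hs h h2
        · exact no_common_point hV hq hw1 (fun hh => hw3 hh.symm) hs h h2
      · refine disjoint_confl (hV.cells v hv1) hp'c ?_
        intro s hs ⟨h1, h2⟩
        rcases hp'cov s hs h2 with h|h
        · exact no_common_point hV hv1 hp hv2 hs h1 h
        · exact no_common_point hV hv1 hq hv3 hs h1 h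
      · refine disjoint_confl (hV.cells v hv1) hq'c ?_
        intro s hs ⟨h1, h2⟩
        rcases hq'cov s hs h2 with h|h
        · exact no_common_point hV hv1 hp hv2 hs h1 h
        · exact no_common_point hV hv1 hq hv3 hs h1 h
      · exact hV.confl v hv1 w hw1 hvw
    · intro s hs
      obtain ⟨v, hv, hcov⟩ := hV.cov s hs
      by_cases hvp : v = p
      · rcases (hunion s hs).mp (Or.inl (hvp ▸ hcov)) with h|h
        · exact ⟨p', (hmem_V' p').mpr (Or.inl rfl), h⟩
        · exact ⟨q', (hmem_V' q').mpr (Or.inr (Or.inl rfl)), h⟩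
      by_cases hvq : v = q
      · rcases (hunion s hs).mp (Or.inr (hvq ▸ hcov)) with h|h
        · exact ⟨p', (hmem_V' p').mpr (Or.inl rfl), h⟩
        · exact ⟨q', (hmem_V' q').mpr (Or.inr (Or.inl rfl)), h⟩
      · exact ⟨v, (hmem_V' v).mpr (Or.inr (Or.inr ⟨hv, hvp, hvq⟩)), hcov⟩
  have hsupp' : suppF V' = suppF V := by
    apply Finset.Subset.antisymm
    · intro k hk
      obtain ⟨v, hv, hvk⟩ := mem_suppF.mp hk
      rcases (hmem_V' v).mp hv with rfl|rfl|⟨hv1, _, _⟩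
      · refine mem_suppF.mpr ⟨p, hp, ?_⟩
        intro h
        apply hvk
        by_cases hkl : k = l
        · rw [hkl, hp'l]
        · rw [hp', Function.update_of_ne hkl]; exact h
      · by_cases hkj : k = j
        · exact mem_suppF.mpr ⟨p, hp, by rw [hkj, hpj]; omega⟩
        · refine mem_suppF.mpr ⟨q, hq, ?_⟩
          rw [hq', Function.update_of_ne hkj] at hvk
          exact hvk
      · exact mem_suppF.mpr ⟨v, hv1, hvk⟩
    · intro k hk
      obtain ⟨v, hv, hvk⟩ := mem_suppF.mp hk
      by_cases hvp : v = p
      · subst hvp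
        by_cases hkl : k = l
        · refine mem_suppF.mpr ⟨q', (hmem_V' q').mpr (Or.inr (Or.inl rfl)), ?_⟩
          rw [hkl, hq'l]
          intro h
          exact hpl (by omega)
        · refine mem_suppF.mpr ⟨p', (hmem_V' p').mpr (Or.inl rfl), ?_⟩
          rw [hp', Function.update_of_ne hkl]
          exact hvk
      by_cases hvq : v = q
      · subst hvq
        have hkj : k ≠ j := fun h => hvk (h ▸ hqj)
        refine mem_suppF.mpr ⟨q', (hmem_V' q').mpr (Or.inr (Or.inl rfl)), ?_⟩
        rw [hq', Function.update_of_ne hkj]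
        exact hvk
      · exact mem_suppF.mpr ⟨v, (hmem_V' v).mpr (Or.inr (Or.inr ⟨hv, hvp, hvq⟩)), hvk⟩
  have hdF' : dF V' j = dF V j + 1 := by
    have hrhs : ∀ v : Fin n → ℤ, v ∈ insert p' (insert q' ((V.filter (fun v => v j ≠ 0)).erase p))
        ↔ (v = p' ∨ v = q' ∨ (v ≠ p ∧ (v ∈ V ∧ v j ≠ 0))) := by
      intro v
      rw [Finset.mem_insert, Finset.mem_insert, Finset.mem_erase, mem_dFilter]
    have hfil : V'.filter (fun v => v j ≠ 0) =
        insert p' (insert q' ((V.filter (fun v => v j ≠ 0)).erase p)) := by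
      ext v
      rw [mem_dFilter, hrhs v, hmem_V' v]
      constructor
      · rintro ⟨rfl|rfl|⟨hv1, hv2, hv3⟩, hvj⟩
        · exact Or.inl rfl
        · exact Or.inr (Or.inl rfl)
        · exact Or.inr (Or.inr ⟨hv2, hv1, hvj⟩)
      · rintro (rfl|rfl|⟨hv2, hv1, hvj⟩)
        · exact ⟨Or.inl rfl, by rw [hp'j]; omega⟩
        · exact ⟨Or.inr (Or.inl rfl), by rw [hq'j]; omega⟩
        · refine ⟨Or.inr (Or.inr ⟨hv1, hv2, ?_⟩), hvj⟩
          intro h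
          exact hvj (h ▸ hqj)
    unfold dF
    rw [hfil]
    have hpfil : p ∈ V.filter (fun v => v j ≠ 0) := mem_dFilter.mpr ⟨hp, by rw [hpj]; omega⟩
    have hq'fil : q' ∉ (V.filter (fun v => v j ≠ 0)).erase p := by
      intro h
      have := Finset.mem_of_mem_erase h
      rw [mem_dFilter] at this
      exact hq'notV q' this.1 (Finset.ne_of_mem_erase h) hq'q rfl
    have hp'fil : p' ∉ insert q' ((V.filter (fun v => v j ≠ 0)).erase p) := by
      rw [Finset.mem_insert]
      push_neg
      refine ⟨hp'q', ?_⟩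
      intro h
      have := Finset.mem_of_mem_erase h
      rw [mem_dFilter] at this
      exact hp'notV p' this.1 (Finset.ne_of_mem_erase h) hp'q rfl
    have hpos : 1 ≤ (V.filter (fun v => v j ≠ 0)).card := Finset.card_pos.mpr ⟨p, hpfil⟩
    rw [Finset.card_insert_of_notMem hp'fil, Finset.card_insert_of_notMem hq'fil,
      Finset.card_erase_of_mem hpfil, Nat.sub_add_cancel hpos]
  refine ⟨V', hgood', hcard', hsupp', hdF', ?_⟩
  -- twin transfer
  rintro ⟨r, hr, t, ht, hrt, l', hconf', hagree'⟩
  have hmin' : V'.card = (suppF V').card + 1 := by rw [hcard', hsupp']; exact hmin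
  have hzero := twin_merge_zero hgood' hmin' hr ht hrt hconf' hagree'
  have hrc' := hgood'.cells r hr
  have htc' := hgood'.cells t ht
  obtain ⟨htl', hrl'⟩ := cell_mul_neg_one (hrc' l') (htc' l') hconf'
  have htl'ne : t l' ≠ 0 := by rw [htl']; omega
  have hp'mem : p' ∈ V' := (hmem_V' p').mpr (Or.inl rfl)
  have hq'mem : q' ∈ V' := (hmem_V' q').mpr (Or.inr (Or.inl rfl))
  -- helper: if u ∈ V' is nonzero at l' then u = r or u = t
  have hin_rt : ∀ u ∈ V', u l' ≠ 0 → u = r ∨ u = t := by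
    intro u hu hul'
    by_cases h1 : u = r
    · exact Or.inl h1
    by_cases h2 : u = t
    · exact Or.inr h2
    · exact absurd (hzero u hu h1 h2) hul'
  by_cases hl'j : l' = j
  · -- impossible: both p' and q' are nonzero at j
    exfalso
    subst hl'j
    have h1 : p' = r ∨ p' = t := hin_rt p' hp'mem (by rw [hp'j]; omega)
    have h2 : q' = r ∨ q' = t := hin_rt q' hq'mem (by rw [hq'j]; omega)
    have hlneq : p' l ≠ q' l := by rw [hp'l, hq'l]; intro h; exact hpl (by omega)
    have hll' : l ≠ l' := hlj
    rcases h1 with rfl|rfl <;> rcases h2 with h2|h2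
    · exact hp'q' h2.symm
    · -- p' = r, q' = t : agree off l' contradicts at l
      rw [← h2] at hagree'
      exact hlneq (hagree' l hll')
    · rw [← h2] at hagree'
      exact hlneq (hagree' l hll').symm
    · exact hp'q' (h2.symm)
  by_cases hl'l : l' = l
  · -- q' is one of the twins; the other twin together with p forms a twin pair in V
    subst hl'l
    have hq'rt : q' = r ∨ q' = t := hin_rt q' hq'mem (by rw [hq'l]; intro h; exact hpl (by omega))
    -- by symmetry take the other one
    have hmain : ∀ u ∈ V', u ≠ q' → u l' * q' l' = -1 → (∀ k, k ≠ l' → u k = q' k) →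
        TwinPair V := by
      intro u hu huq' hconf'' hagree''
      have hul' : u l' ≠ 0 := by
        intro h
        rw [h] at hconf''
        simp at hconf''
      have hup' : u ≠ p' := by
        intro h
        rw [h, hp'l] at hul'
        exact hul' rfl
      have huj : u j = -1 := by rw [hagree'' j (fun h => hlj h.symm), hq'j]
      have huV : u ∈ V ∧ u ≠ p ∧ u ≠ q := by
        rcases (hmem_V' u).mp hu with rfl|rfl|h
        · exact absurd rfl hup'
        · exact absurd rfl huq'
        · exact h
      have hul : u l' = p l' := by
        obtain ⟨h1, _⟩ := cell_mul_neg_one (hgood'.cells u hu l') (hq'c l') hconf''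
        rw [hq'l] at h1
        omega
      refine ⟨p, hp, u, huV.1, fun h => huV.2.1 h.symm, j, ?_, ?_⟩
      · rw [hpj, huj]; norm_num
      · intro k hkj
        by_cases hkl : k = l'
        · rw [hkl, hul]
        · rw [hagree k hkj hkl, ← (hoff k hkj hkl).2.1]
          rw [hagree'' k hkl]
    rcases hq'rt with rfl|rfl
    · -- q' = r
      refine hmain t ht (fun h => hrt h.symm) ?_ ?_
      · rw [mul_comm]; exact hconf'
      · intro k hk; exact (hagree' k hk).symm
    · -- q' = t
      refine hmain r hr hrt hconf' hagree'
  · -- l' ∉ {j, l}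
    have hq'l'eq : q' l' = p l' := by
      rw [(hoff l' hl'j hl'l).2.1, ← (hoff l' hl'j hl'l).2.2]
    have hp'l'eq : p' l' = p l' := (hoff l' hl'j hl'l).1
    by_cases hplz : p l' = 0
    · -- twins are both old members of V
      have hold : ∀ u ∈ V', u l' ≠ 0 → u ∈ V ∧ u ≠ p ∧ u ≠ q := by
        intro u hu hul'
        rcases (hmem_V' u).mp hu with rfl|rfl|h
        · exact absurd (hp'l'eq.trans hplz) hul'
        · exact absurd (hq'l'eq.trans hplz) hul'
        · exact h
      obtain ⟨hrV, hrp, hrq⟩ := hold r hr hrl'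
      obtain ⟨htV, htp, htq⟩ := hold t ht htl'ne
      exact ⟨r, hrV, t, htV, hrt, l', hconf', hagree'⟩
    · -- impossible: p' and q' would both be the twins but disagree at j
      exfalso
      have h1 : p' = r ∨ p' = t := hin_rt p' hp'mem (hp'l'eq ▸ hplz)
      have h2 : q' = r ∨ q' = t := hin_rt q' hq'mem (hq'l'eq ▸ hplz)
      have hjneq : p' j ≠ q' j := by rw [hp'j, hq'j]; omega
      have hjl' : j ≠ l' := fun h => hl'j h.symm
      rcases h1 with rfl|rfl <;> rcases h2 with h2|h2
      · exact hp'q' h2.symm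
      · rw [← h2] at hagree'
        exact hjneq (hagree' j hjl')
      · rw [← h2] at hagree'
        exact hjneq (hagree' j hjl').symm
      · exact hp'q' h2.symm

/-- projections don't lose support except `j` -/
lemma suppF_sides_union {V : Finset (Fin n → ℤ)} {j : Fin n} {e : ℤ} (he : e = 1 ∨ e = -1) :
    (suppF V).erase j ⊆ suppF (sideW V j e) ∪ suppF (sideW V j (-e)) := by
  intro k hk
  obtain ⟨hkj, hkV⟩ := Finset.mem_erase.mp hk
  obtain ⟨v, hv, hvk⟩ := mem_suppF.mp hkV
  by_cases h : v j = -e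
  · refine Finset.mem_union.mpr (Or.inr ?_)
    refine mem_suppF.mpr ⟨Function.update v j 0,
      mem_sideW.mpr ⟨v, mem_sideP.mpr ⟨hv, by omega⟩, rfl⟩, ?_⟩
    rwa [Function.update_of_ne hkj]
  · refine Finset.mem_union.mpr (Or.inl ?_)
    refine mem_suppF.mpr ⟨Function.update v j 0,
      mem_sideW.mpr ⟨v, mem_sideP.mpr ⟨hv, h⟩, rfl⟩, ?_⟩
    rwa [Function.update_of_ne hkj]

/-- lifting twin pairs from a side projection -/
lemma lift_twins {V : Finset (Fin n → ℤ)} {j : Fin n} {e : ℤ}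
    (ht : TwinPair (sideW V j e)) :
    ∃ p ∈ sideP V j e, ∃ q ∈ sideP V j e, p ≠ q ∧
      ∃ l, l ≠ j ∧ p l * q l = -1 ∧ ∀ k, k ≠ j → k ≠ l → p k = q k := by
  obtain ⟨w1, hw1, w2, hw2, hne, l, hconf, hagree⟩ := ht
  obtain ⟨p, hp, rfl⟩ := mem_sideW.mp hw1
  obtain ⟨q, hq, rfl⟩ := mem_sideW.mp hw2
  have hlj : l ≠ j := by
    intro h
    rw [h, Function.update_self] at hconf
    simp at hconf
  refine ⟨p, hp, q, hq, fun h => hne (h ▸ rfl), l, hlj, ?_, ?_⟩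
  · rwa [Function.update_of_ne hlj, Function.update_of_ne hlj] at hconf
  · intro k hkj hkl
    have := hagree k hkl
    rwa [Function.update_of_ne hkj, Function.update_of_ne hkj] at this

open Classical in
noncomputable def meas (V : Finset (Fin n → ℤ)) : ℕ :=
  V.card ^ 3 + (V.card - (suppF V).sup (dF V))

lemma meas_lt_of_card_lt {V W : Finset (Fin n → ℤ)} (h2 : 1 ≤ V.card)
    (hlt : W.card < V.card) : meas W < meas V := by
  have h1 : meas W ≤ W.card ^ 3 + W.card := by
    rw [meas]
    have : W.card - (suppF W).sup (dF W) ≤ W.card := Nat.sub_le _ _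
    omega
  have h3 : V.card ^ 3 ≤ meas V := Nat.le_add_right _ _
  have h4 : W.card ^ 3 + W.card < V.card ^ 3 := by
    have hW : W.card ≤ V.card - 1 := by omega
    have h5 : W.card ^ 3 ≤ (V.card - 1) ^ 3 := Nat.pow_le_pow_left hW 3
    have h6 : (V.card - 1) ^ 3 + (V.card - 1) < V.card ^ 3 := by
      set c := V.card - 1 with hc
      have hV : V.card = c + 1 := by omega
      rw [hV]
      have : (c + 1) ^ 3 = c ^ 3 + 3 * c ^ 2 + 3 * c + 1 := by ring
      rw [this]
      have : c ≤ 3 * c ^ 2 + 2 * c := by nlinarith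
      omega
    omega
  omega

theorem comb_main : ∀ (N : ℕ) (V : Finset (Fin n → ℤ)), meas V ≤ N → GoodFam V →
    V.card = (suppF V).card + 1 → 1 ≤ (suppF V).card → TwinPair V := by
  intro N
  induction N with
  | zero =>
    intro V hm hV hmin hb
    exfalso
    have h2 : 1 ≤ V.card := by omega
    have : 1 ≤ V.card ^ 3 := Nat.one_le_pow _ _ (by omega)
    have : V.card ^ 3 ≤ meas V := Nat.le_add_right _ _
    omega
  | succ N ih =>
    intro V hmeas hV hmin hb
    by_cases hb1 : (suppF V).card = 1
    · -- base: a single support coordinate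
      obtain ⟨j, hj⟩ := Finset.card_eq_one.mp hb1
      have hjmem : j ∈ suppF V := hj ▸ Finset.mem_singleton_self j
      obtain ⟨v, hv, hvj⟩ := sides_nonempty hV hjmem (Or.inl rfl)
      obtain ⟨w, hw, hwj⟩ := sides_nonempty hV hjmem (Or.inr rfl)
      have hvw : v ≠ w := by
        intro h
        rw [h, hwj] at hvj
        omega
      refine ⟨v, hv, w, hw, hvw, j, by rw [hvj, hwj]; norm_num, ?_⟩
      intro k hkj
      have hknot : k ∉ suppF V := by
        rw [hj, Finset.mem_singleton]
        exact hkj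
      have hk0 : ∀ u ∈ V, u k = 0 := by
        intro u hu
        by_contra h
        exact hknot (mem_suppF.mpr ⟨u, hu, h⟩)
      rw [hk0 v hv, hk0 w hw]
    · -- β ≥ 2
      have hb2 : 2 ≤ (suppF V).card := by omega
      have hne : (suppF V).Nonempty := Finset.card_pos.mp (by omega)
      obtain ⟨j0, hj0mem, hj0max⟩ := Finset.exists_max_image (suppF V) (dF V) hne
      have hsup_eq : (suppF V).sup (dF V) = dF V j0 :=
        le_antisymm (Finset.sup_le hj0max) (Finset.le_sup hj0mem)
      have hcard2 : 2 ≤ V.card := by omega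
      set W := sideW V j0 1 with hW
      have hWgood : GoodFam W := goodFam_sideW hV (Or.inl rfl)
      have hWmin : W.card = (suppF W).card + 1 := split hV hmin hj0mem (Or.inl rfl)
      have hWsub : suppF W ⊆ (suppF V).erase j0 := suppF_sideW_subset
      have hWcard_lt : W.card < V.card := by
        have := Finset.card_le_card hWsub
        rw [Finset.card_erase_of_mem hj0mem] at this
        omega
      by_cases hA : (suppF W).card = 0
      · -- degenerate: use the other side
        set W' := sideW V j0 (-1) with hW'
        have hW'good : GoodFam W' := goodFam_sideW hV (Or.inr rfl)
        have hW'min : W'.card = (suppF W').card + 1 := split hV hmin hj0mem (Or.inr rfl)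
        have hW'sub : suppF W' ⊆ (suppF V).erase j0 := suppF_sideW_subset
        have hW'sup : (suppF V).erase j0 ⊆ suppF W' := by
          intro k hk
          have := suppF_sides_union (V := V) (j := j0) (Or.inl rfl) hk
          rcases Finset.mem_union.mp this with h|h
          · exfalso
            have : suppF W = ∅ := Finset.card_eq_zero.mp hA
            rw [← hW] at h
            rw [this] at h
            exact absurd h (Finset.notMem_empty k)
          · exact h
        have hW'supp : suppF W' = (suppF V).erase j0 :=
          Finset.Subset.antisymm hW'sub hW'sup
        have hW'card : (suppF W').card = (suppF V).card - 1 := by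
          rw [hW'supp, Finset.card_erase_of_mem hj0mem]
        have hW'b : 1 ≤ (suppF W').card := by omega
        have hW'lt : W'.card < V.card := by omega
        have hmeaslt : meas W' < meas V := meas_lt_of_card_lt (by omega) hW'lt
        have htw : TwinPair W' := ih W' (by omega) hW'good hW'min hW'b
        -- lift: both members are on the -1 side since V has no zero at j0
        obtain ⟨p, hp, q, hq, hpq, l, hlj, hconf, hagree⟩ := lift_twins htw
        -- every member of V is nonzero at j0
        have hno0 : ∀ v ∈ V, v j0 ≠ 0 := by
          intro v hv h0
          -- then v ∈ sideP V j0 1 and sideP V j0 1 = {u} with u j0 = 1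
          obtain ⟨u, hu, huj⟩ := sides_nonempty hV hj0mem (Or.inl rfl)
          have hWcard1 : W.card = 1 := by omega
          have hPcard1 : (sideP V j0 1).card = 1 := by
            rw [← card_sideW hV (Or.inl rfl), ← hW, hWcard1]
          obtain ⟨x, hx⟩ := Finset.card_eq_one.mp hPcard1
          have hux : u = x := by
            have : u ∈ sideP V j0 1 := mem_sideP.mpr ⟨hu, by omega⟩
            rw [hx, Finset.mem_singleton] at this
            exact this
          have hvx : v = x := by
            have : v ∈ sideP V j0 1 := mem_sideP.mpr ⟨hv, by omega⟩
            rw [hx, Finset.mem_singleton] at this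
            exact this
          have hvu : v = u := hvx.trans hux.symm
          rw [hvu, huj] at h0
          omega
        have hpj : p j0 = -1 := by
          have h1 := (mem_sideP.mp hp).2
          have h2 := hV.cells p (mem_sideP.mp hp).1 j0
          have h3 := hno0 p (mem_sideP.mp hp).1
          omega
        have hqj : q j0 = -1 := by
          have h1 := (mem_sideP.mp hq).2
          have h2 := hV.cells q (mem_sideP.mp hq).1 j0
          have h3 := hno0 q (mem_sideP.mp hq).1
          omega
        refine ⟨p, (mem_sideP.mp hp).1, q, (mem_sideP.mp hq).1, hpq, l, hconf, ?_⟩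
        intro k hkl
        by_cases hkj : k = j0
        · rw [hkj, hpj, hqj]
        · exact hagree k hkj hkl
      · -- main path
        have hAb : 1 ≤ (suppF W).card := by omega
        have hmeaslt : meas W < meas V := meas_lt_of_card_lt (by omega) hWcard_lt
        have htw : TwinPair W := ih W (by omega) hWgood hWmin hAb
        obtain ⟨p, hp, q, hq, hpq, l, hlj, hconf, hagree⟩ := lift_twins htw
        have hpV := (mem_sideP.mp hp).1
        have hqV := (mem_sideP.mp hq).1
        have hpj01 : p j0 = 1 ∨ p j0 = 0 := by
          have h1 := (mem_sideP.mp hp).2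
          have h2 := hV.cells p hpV j0
          omega
        have hqj01 : q j0 = 1 ∨ q j0 = 0 := by
          have h1 := (mem_sideP.mp hq).2
          have h2 := hV.cells q hqV j0
          omega
        by_cases hsame : p j0 = q j0
        · -- direct twin pair in V
          refine ⟨p, hpV, q, hqV, hpq, l, hconf, ?_⟩
          intro k hkl
          by_cases hkj : k = j0
          · rw [hkj, hsame]
          · exact hagree k hkj hkl
        · -- mixed pair: flip
          -- normalize so that p j0 = 1, q j0 = 0
          have hnorm : ∃ p1 ∈ V, ∃ q1 ∈ V, p1 ≠ q1 ∧ p1 j0 = 1 ∧ q1 j0 = 0 ∧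
              p1 l ≠ 0 ∧ q1 l = -(p1 l) ∧ ∀ k, k ≠ j0 → k ≠ l → p1 k = q1 k := by
            have hplq := cell_mul_neg_one (hV.cells p hpV l) (hV.cells q hqV l) hconf
            rcases hpj01 with h1|h1
            · rcases hqj01 with h2|h2
              · exact absurd (h1.trans h2.symm) hsame
              · exact ⟨p, hpV, q, hqV, hpq, h1, h2, hplq.2, hplq.1, hagree⟩
            · rcases hqj01 with h2|h2
              · refine ⟨q, hqV, p, hpV, hpq.symm, h2, h1, ?_, ?_, ?_⟩
                · rw [hplq.1]
                  intro h
                  exact hplq.2 (by omega)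
                · rw [hplq.1]; ring
                · intro k hkj hkl
                  exact (hagree k hkj hkl).symm
              · exact absurd (h1.trans h2.symm) hsame
          obtain ⟨p1, hp1, q1, hq1, hpq1, hp1j, hq1j, hp1l, hq1l, hagree1⟩ := hnorm
          obtain ⟨V', hV'good, hV'card, hV'supp, hV'dF, htrans⟩ :=
            flip_lemma hV hmin hp1 hq1 hpq1 hp1j hq1j hlj hp1l hq1l hagree1
          have hV'min : V'.card = (suppF V').card + 1 := by
            rw [hV'card, hV'supp]; exact hmin
          have hV'b : 1 ≤ (suppF V').card := by rw [hV'supp]; omega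
          have hV'meas : meas V' < meas V := by
            have hle : (suppF V).sup (dF V') ≤ V.card := by
              apply Finset.sup_le
              intro k _
              rw [← hV'card]
              unfold dF
              exact Finset.card_filter_le _ _
            have hge : dF V j0 + 1 ≤ (suppF V).sup (dF V') := by
              have h := Finset.le_sup (f := dF V') hj0mem
              rwa [hV'dF] at h
            have hd : dF V j0 ≤ V.card := by
              unfold dF
              exact Finset.card_filter_le _ _
            unfold meas
            rw [hV'card, hV'supp, hsup_eq]
            omega
          exact htrans (ih V' (by omega) hV'good hV'min hV'b)


end Stmt6Comb

namespace Stmt6Geom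

variable {n : ℕ}

lemma icc_inject {a b a' b' : Fin n → ℝ} (hab : ∀ i, a i < b i)
    (h : Set.Icc a b = Set.Icc a' b') : a = a' ∧ b = b' := by
  have hle : a ≤ b := fun i => (hab i).le
  have ha : a ∈ Set.Icc a' b' := h ▸ Set.mem_Icc.mpr ⟨le_refl a, hle⟩
  have hb : b ∈ Set.Icc a' b' := h ▸ Set.mem_Icc.mpr ⟨hle, le_refl b⟩
  have hle' : a' ≤ b' := le_trans ha.1 ha.2
  have ha' : a' ∈ Set.Icc a b := h.symm ▸ Set.mem_Icc.mpr ⟨le_refl a', hle'⟩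
  have hb' : b' ∈ Set.Icc a b := h.symm ▸ Set.mem_Icc.mpr ⟨hle', le_refl b'⟩
  exact ⟨le_antisymm ha'.1 ha.1, le_antisymm hb.2 hb'.2⟩

lemma interior_Icc_pi {A B : Fin n → ℝ} :
    interior (Set.Icc A B) = Set.pi Set.univ (fun i => Set.Ioo (A i) (B i)) := by
  rw [← Set.pi_univ_Icc, interior_pi_set Set.finite_univ]
  simp only [interior_Icc]

/-- If a face of an inner box is contained in a face of the outer box, the face value
is one of the outer bounds (in the same coordinate). -/
lemma face_in_Rface {a b : Fin n → ℝ} (hab : ∀ i, a i < b i) {x : Fin n → ℝ}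
    (hx : ∀ i, a i ≤ x i ∧ x i ≤ b i)
    {aQ bQ : Fin n → ℝ} (haQ : ∀ i, aQ i < bQ i) (hxQ : x ∈ Set.Icc aQ bQ)
    {j : Fin n} {c : ℝ} (hc : c = aQ j ∨ c = bQ j) {G : Set (Fin n → ℝ)}
    (hG : IsFaceOf G (Set.Icc a b))
    (hFG : {y ∈ Set.Icc aQ bQ | y j = c} ⊆ G) : c = a j ∨ c = b j := by
  obtain ⟨k, a'', b'', hab'', hReq, hGor⟩ := hG
  obtain ⟨ha'', hb''⟩ := icc_inject hab hReq
  subst ha''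
  subst hb''
  have hxQ' := Set.mem_Icc.mp hxQ
  set z : Fin n → ℝ := fun i => if i = j then c else x i with hz
  have hzQ : z ∈ Set.Icc aQ bQ := by
    rw [Set.mem_Icc]
    constructor <;> intro i <;> by_cases hij : i = j
    · subst hij; simp only [hz, if_pos rfl]
      rcases hc with rfl|rfl
      · exact le_refl _
      · exact (haQ i).le
    · simp only [hz, if_neg hij]; exact hxQ'.1 i
    · subst hij; simp only [hz, if_pos rfl]
      rcases hc with rfl|rfl
      · exact (haQ i).le
      · exact le_refl _
    · simp only [hz, if_neg hij]; exact hxQ'.2 i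
  have hzF : z ∈ {y ∈ Set.Icc aQ bQ | y j = c} := ⟨hzQ, by simp [hz]⟩
  have hzG := hFG hzF
  by_cases hkj : k = j
  · subst hkj
    rcases hGor with rfl|rfl
    · left
      have := hzG.2
      simp only [hz, if_pos rfl] at this
      exact this
    · right
      have := hzG.2
      simp only [hz, if_pos rfl] at this
      exact this
  · exfalso
    -- two points of the face disagree at k, but G fixes coordinate k
    have hmem : ∀ t : ℝ, aQ k ≤ t → t ≤ bQ k →
        Function.update z k t ∈ {y ∈ Set.Icc aQ bQ | y j = c} := by
      intro t h1 h2
      refine ⟨Set.mem_Icc.mpr ⟨fun i => ?_, fun i => ?_⟩, ?_⟩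
      · by_cases hik : i = k
        · subst hik; rw [Function.update_self]; exact h1
        · rw [Function.update_of_ne hik]; exact (Set.mem_Icc.mp hzQ).1 i
      · by_cases hik : i = k
        · subst hik; rw [Function.update_self]; exact h2
        · rw [Function.update_of_ne hik]; exact (Set.mem_Icc.mp hzQ).2 i
      · rw [Function.update_of_ne (fun h => hkj h.symm)]
        simp [hz]
    have h1 := hFG (hmem (aQ k) (le_refl _) (haQ k).le)
    have h2 := hFG (hmem (bQ k) (haQ k).le (le_refl _))
    rcases hGor with rfl|rfl
    · have e1 := h1.2
      have e2 := h2.2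
      rw [Function.update_self] at e1 e2
      exact absurd (e1.trans e2.symm) (ne_of_lt (haQ k))
    · have e1 := h1.2
      have e2 := h2.2
      rw [Function.update_self] at e1 e2
      exact absurd (e1.trans e2.symm) (ne_of_lt (haQ k))

end Stmt6Geom

namespace Stmt6Geom

variable {n : ℕ}

/-- lower bound function determined by a BIS vector -/
noncomputable def Af (x a : Fin n → ℝ) (v : Fin n → ℤ) : Fin n → ℝ :=
  fun j => if v j = 1 then x j else a j

/-- upper bound function determined by a BIS vector -/
noncomputable def Bf (x b : Fin n → ℝ) (v : Fin n → ℤ) : Fin n → ℝ :=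
  fun j => if v j = -1 then x j else b j

lemma Af_lt_Bf {a b x : Fin n → ℝ} (hab : ∀ i, a i < b i)
    (hax : ∀ i, a i < x i ∧ x i < b i) {v : Fin n → ℤ}
    (hv : ∀ j, v j = 1 ∨ v j = 0 ∨ v j = -1) :
    ∀ j, Af x a v j < Bf x b v j := by
  intro j
  rcases hv j with h|h|h <;> simp only [Af, Bf, h] <;> norm_num
  · exact (hax j).2
  · exact hab j
  · exact (hax j).1

/-- Every member of an about-partition containing `x` has the canonical form. -/
lemma keyQ {a b : Fin n → ℝ} (hab : ∀ i, a i < b i) {x : Fin n → ℝ}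
    (hax : ∀ i, a i < x i ∧ x i < b i)
    {P : Set (Set (Fin n → ℝ))} (habout : IsAbout (Set.Icc a b) P x)
    {Q : Set (Fin n → ℝ)} (hQP : Q ∈ P) (hQrect : IsRect Q) (hxQ : x ∈ Q) :
    ∃ v : Fin n → ℤ, (∀ j, v j = 1 ∨ v j = 0 ∨ v j = -1) ∧ IsBIS Q x v ∧
      Q = Set.Icc (Af x a v) (Bf x b v) := by
  obtain ⟨aQ, bQ, haQ, rfl⟩ := hQrect
  have hxQ' := Set.mem_Icc.mp hxQ
  have hx' : ∀ i, a i ≤ x i ∧ x i ≤ b i := fun i => ⟨(hax i).1.le, (hax i).2.le⟩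
  set v : Fin n → ℤ := fun j => if x j = aQ j then 1 else if x j = bQ j then -1 else 0
    with hv
  have hvval : ∀ j, (x j = aQ j → v j = 1) ∧ (x j ≠ aQ j → x j = bQ j → v j = -1) ∧
      (x j ≠ aQ j → x j ≠ bQ j → v j = 0) := by
    intro j
    refine ⟨fun h => ?_, fun h1 h2 => ?_, fun h1 h2 => ?_⟩
    · simp only [hv, if_pos h]
    · simp only [hv, if_neg h1, if_pos h2]
    · simp only [hv, if_neg h1, if_neg h2]
  have hcell : ∀ j, v j = 1 ∨ v j = 0 ∨ v j = -1 := by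
    intro j
    by_cases h1 : x j = aQ j
    · exact Or.inl ((hvval j).1 h1)
    by_cases h2 : x j = bQ j
    · exact Or.inr (Or.inr ((hvval j).2.1 h1 h2))
    · exact Or.inr (Or.inl ((hvval j).2.2 h1 h2))
  -- the face dichotomies
  have hlow : ∀ j, x j = aQ j ∨ aQ j = a j := by
    intro j
    have hF : IsFaceOf {y ∈ Set.Icc aQ bQ | y j = aQ j} (Set.Icc aQ bQ) :=
      ⟨j, aQ, bQ, haQ, rfl, Or.inl rfl⟩
    rcases habout _ hQP _ hF with hxF|⟨G, hG, hFG⟩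
    · exact Or.inl hxF.2
    · right
      rcases face_in_Rface hab hx' haQ hxQ (Or.inl rfl) hG hFG with h|h
      · exact h
      · exfalso
        have h1 := hxQ'.1 j
        have h2 := (hax j).2
        rw [h] at h1
        exact absurd (lt_of_lt_of_le h2 h1) (lt_irrefl _)
  have hhigh : ∀ j, x j = bQ j ∨ bQ j = b j := by
    intro j
    have hF : IsFaceOf {y ∈ Set.Icc aQ bQ | y j = bQ j} (Set.Icc aQ bQ) :=
      ⟨j, aQ, bQ, haQ, rfl, Or.inr rfl⟩
    rcases habout _ hQP _ hF with hxF|⟨G, hG, hFG⟩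
    · exact Or.inl hxF.2
    · right
      rcases face_in_Rface hab hx' haQ hxQ (Or.inr rfl) hG hFG with h|h
      · exfalso
        have h1 := hxQ'.2 j
        have h2 := (hax j).1
        rw [h] at h1
        exact absurd (lt_of_le_of_lt h1 h2) (lt_irrefl _)
      · exact h
  -- canonical form
  have hA : aQ = Af x a v := by
    funext j
    by_cases h1 : x j = aQ j
    · simp only [Af, (hvval j).1 h1, if_pos]; exact h1.symm
    · have h2 : aQ j = a j := (hlow j).resolve_left h1
      have hv1 : v j ≠ 1 := by
        intro h
        rcases hcell j with h'|h'|h'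
        · simp only [hv] at h
          by_cases hx1 : x j = aQ j
          · exact h1 hx1
          · simp only [if_neg hx1] at h
            by_cases hx2 : x j = bQ j <;> simp [hx2] at h
        · omega
        · omega
      simp only [Af, if_neg hv1]
      exact h2
  have hB : bQ = Bf x b v := by
    funext j
    by_cases h2 : x j = bQ j
    · have h1 : x j ≠ aQ j := by
        intro h
        have := h ▸ h2
        exact absurd (this ▸ haQ j) (lt_irrefl _)
      simp only [Bf, (hvval j).2.1 h1 h2, if_pos]; exact h2.symm
    · have h3 : bQ j = b j := (hhigh j).resolve_left h2
      have hvm1 : v j ≠ -1 := by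
        intro h
        simp only [hv] at h
        by_cases hx1 : x j = aQ j
        · simp [hx1] at h
        · simp only [if_neg hx1] at h
          by_cases hx2 : x j = bQ j
          · exact h2 hx2
          · simp [hx2] at h
      simp only [Bf, if_neg hvm1]
      exact h3
  refine ⟨v, hcell, ⟨aQ, bQ, haQ, rfl, hxQ, ?_⟩, by rw [← hA, ← hB]⟩
  intro j
  simp only [hv]

end Stmt6Geom

namespace Stmt6Geom

variable {n : ℕ}

lemma conflict_of_disjoint {a b x : Fin n → ℝ} (hab : ∀ i, a i < b i)
    (hax : ∀ i, a i < x i ∧ x i < b i) {v v' : Fin n → ℤ}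
    (hv : ∀ j, v j = 1 ∨ v j = 0 ∨ v j = -1) (hv' : ∀ j, v' j = 1 ∨ v' j = 0 ∨ v' j = -1)
    (hdisj : interior (Set.Icc (Af x a v) (Bf x b v)) ∩
      interior (Set.Icc (Af x a v') (Bf x b v')) = ∅) :
    ∃ j, v j * v' j = -1 := by
  classical
  by_contra hc
  push_neg at hc
  set y : Fin n → ℝ := fun j =>
    if v j = 1 ∨ v' j = 1 then (x j + b j)/2
    else if v j = -1 ∨ v' j = -1 then (a j + x j)/2 else x j with hy
  have hbnd : ∀ j, (Af x a v j < y j ∧ y j < Bf x b v j) ∧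
      (Af x a v' j < y j ∧ y j < Bf x b v' j) := by
    intro j
    obtain ⟨hx1, hx2⟩ := hax j
    have habj := hab j
    rcases hv j with h1|h1|h1 <;> rcases hv' j with h2|h2|h2 <;>
      simp only [hy, Af, Bf, h1, h2] <;> norm_num <;>
      first
        | (exfalso; apply hc j; rw [h1, h2]; decide)
        | (refine ⟨⟨?_, ?_⟩, ?_, ?_⟩ <;> linarith)
        | (refine ⟨?_, ?_, ?_⟩ <;> linarith)
        | (refine ⟨?_, ?_⟩ <;> linarith)
        | linarith
  have hymem : ∀ (w : Fin n → ℤ), (∀ j, Af x a w j < y j ∧ y j < Bf x b w j) →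
      y ∈ interior (Set.Icc (Af x a w) (Bf x b w)) := by
    intro w hw
    rw [interior_Icc_pi]
    intro j _
    exact ⟨(hw j).1, (hw j).2⟩
  have h1 := hymem v (fun j => (hbnd j).1)
  have h2 := hymem v' (fun j => (hbnd j).2)
  have : y ∈ (∅ : Set (Fin n → ℝ)) := hdisj ▸ Set.mem_inter h1 h2
  exact this

end Stmt6Geom

namespace Stmt6Geom

variable {n : ℕ}

lemma covering_sign {a b x : Fin n → ℝ} (hab : ∀ i, a i < b i)
    (hax : ∀ i, a i < x i ∧ x i < b i) {P : Set (Set (Fin n → ℝ))}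
    (hPfin : P.Finite) (hrect : ∀ Q ∈ P, IsRect Q) (hPcover : ⋃₀ P = Set.Icc a b)
    (s : Fin n → ℤ) (hs : ∀ j, s j = 1 ∨ s j = -1) :
    ∃ Q ∈ P, x ∈ Q ∧ ∀ v : Fin n → ℤ, (∀ j, v j = 1 ∨ v j = 0 ∨ v j = -1) →
      Q = Set.Icc (Af x a v) (Bf x b v) → ∀ j, v j = 0 ∨ v j = s j := by
  classical
  set m : Fin n → ℝ := fun j => min (x j - a j) (b j - x j) with hm
  have hmpos : ∀ j, 0 < m j := by
    intro j
    rw [hm]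
    exact lt_min (by linarith [(hax j).1]) (by linarith [(hax j).2])
  have hm1 : ∀ j, m j ≤ x j - a j := fun j => min_le_left _ _
  have hm2 : ∀ j, m j ≤ b j - x j := fun j => min_le_right _ _
  set yseq : ℕ → (Fin n → ℝ) := fun N j => x j + (s j : ℝ) * (m j / (N + 1)) with hyseq
  have hfrac : ∀ (N : ℕ) (j : Fin n), 0 < m j / (N + 1 : ℝ) ∧ m j / (N + 1 : ℝ) ≤ m j := by
    intro N j
    constructor
    · apply div_pos (hmpos j)
      positivity
    · apply div_le_self (hmpos j).le
      have : (0 : ℝ) ≤ (N : ℝ) := Nat.cast_nonneg N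
      linarith
  have hyval : ∀ (N : ℕ) (j : Fin n),
      (s j = 1 → yseq N j = x j + m j / (N + 1)) ∧
      (s j = -1 → yseq N j = x j - m j / (N + 1)) := by
    intro N j
    constructor <;> intro hsj <;> simp only [hyseq, hsj] <;> push_cast <;> ring
  have hyIcc : ∀ N, yseq N ∈ Set.Icc a b := by
    intro N
    rw [Set.mem_Icc]
    constructor <;> intro j <;> obtain ⟨hf1, hf2⟩ := hfrac N j <;>
      rcases hs j with hsj|hsj
    · rw [(hyval N j).1 hsj]; linarith [(hax j).1]
    · rw [(hyval N j).2 hsj]; linarith [hm1 j]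
    · rw [(hyval N j).1 hsj]; linarith [hm2 j]
    · rw [(hyval N j).2 hsj]; linarith [(hax j).2]
  have hyP : ∀ N : ℕ, ∃ Q ∈ P, yseq N ∈ Q := by
    intro N
    have : yseq N ∈ ⋃₀ P := hPcover ▸ hyIcc N
    exact Set.mem_sUnion.mp this
  choose Qf hQf1 hQf2 using hyP
  have hfiber : ∃ Q ∈ P, {N : ℕ | Qf N = Q}.Infinite := by
    by_contra h
    push_neg at h
    have hfin : (⋃ Q ∈ P, {N : ℕ | Qf N = Q}).Finite :=
      Set.Finite.biUnion hPfin (fun Q hQ => h Q hQ)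
    have huniv : (Set.univ : Set ℕ) ⊆ ⋃ Q ∈ P, {N : ℕ | Qf N = Q} := by
      intro N _
      exact Set.mem_biUnion (hQf1 N) rfl
    exact Set.infinite_univ (hfin.subset huniv)
  obtain ⟨Q, hQP, hK⟩ := hfiber
  have hKmem : ∀ N ∈ {N : ℕ | Qf N = Q}, yseq N ∈ Q := by
    intro N hN
    rw [← hN]
    exact hQf2 N
  obtain ⟨N₀, hN₀⟩ := hK.nonempty
  -- key approximation: for any bound c with c < x j (resp x j < c), eventually y stays right
  have harch : ∀ (j : Fin n) (ε : ℝ), 0 < ε → ∃ N ∈ {N : ℕ | Qf N = Q}, m j / (N + 1) < ε := by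
    intro j ε hε
    obtain ⟨N1, hN1⟩ := exists_nat_gt (m j / ε)
    obtain ⟨N, hNK, hNgt⟩ := hK.exists_gt N1
    refine ⟨N, hNK, ?_⟩
    rw [div_lt_iff₀ (by positivity)]
    have h1 : m j < ε * N1 := by
      rw [div_lt_iff₀ hε] at hN1
      linarith [hN1]
    have h2 : (N1 : ℝ) ≤ (N : ℝ) + 1 := by
      have : (N1 : ℝ) < (N : ℝ) := by exact_mod_cast hNgt
      linarith
    nlinarith
  obtain ⟨aQ, bQ, haQ, hQeq⟩ := hrect Q hQP
  have hyQ : ∀ N ∈ {N : ℕ | Qf N = Q}, ∀ j, aQ j ≤ yseq N j ∧ yseq N j ≤ bQ j := by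
    intro N hN j
    have := hKmem N hN
    rw [hQeq, Set.mem_Icc] at this
    exact ⟨this.1 j, this.2 j⟩
  have hxQ : x ∈ Q := by
    rw [hQeq, Set.mem_Icc]
    constructor <;> intro j
    · rcases hs j with hsj|hsj
      · -- s j = 1 : approximate from above
        by_contra hlt
        push_neg at hlt
        obtain ⟨N, hNK, hNlt⟩ := harch j (aQ j - x j) (by linarith)
        have := (hyQ N hNK j).1
        rw [(hyval N j).1 hsj] at this
        linarith
      · have := (hyQ N₀ hN₀ j).1
        rw [(hyval N₀ j).2 hsj] at this
        have hf := (hfrac N₀ j).1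
        linarith
    · rcases hs j with hsj|hsj
      · have := (hyQ N₀ hN₀ j).2
        rw [(hyval N₀ j).1 hsj] at this
        have hf := (hfrac N₀ j).1
        linarith
      · by_contra hlt
        push_neg at hlt
        obtain ⟨N, hNK, hNlt⟩ := harch j (x j - bQ j) (by linarith)
        have := (hyQ N hNK j).2
        rw [(hyval N j).2 hsj] at this
        linarith
  refine ⟨Q, hQP, hxQ, ?_⟩
  intro v hv hQv j
  have hyQv : ∀ N ∈ {N : ℕ | Qf N = Q}, Af x a v j ≤ yseq N j ∧ yseq N j ≤ Bf x b v j := by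
    intro N hN
    have := hKmem N hN
    rw [hQv, Set.mem_Icc] at this
    exact ⟨this.1 j, this.2 j⟩
  rcases hv j with h1|h1|h1
  · right
    rw [h1]
    rcases hs j with hsj|hsj
    · rw [hsj]
    · exfalso
      have := (hyQv N₀ hN₀).1
      rw [(hyval N₀ j).2 hsj] at this
      simp only [Af, h1, if_pos] at this
      have hf := (hfrac N₀ j).1
      linarith
  · exact Or.inl h1
  · right
    rw [h1]
    rcases hs j with hsj|hsj
    · exfalso
      have := (hyQv N₀ hN₀).2
      rw [(hyval N₀ j).1 hsj] at this
      simp only [Bf, h1, if_pos] at this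
      have hf := (hfrac N₀ j).1
      linarith
    · rw [hsj]

end Stmt6Geom


open Stmt6Geom Stmt6Comb in
/-- a minimal locally regulated partition of `R` about `x` with `β_P(x) ≥ 1`
contains an `e_j`-pair for some `j`. -/
theorem stmt6 (n : ℕ) (R : Set (Fin n → ℝ)) (x : Fin n → ℝ) (P : Set (Set (Fin n → ℝ)))
    (hR : IsRect R) (hx : x ∈ interior R)
    (hpart : IsLocRegPartition R P) (hab : IsAbout R P x)
    (hmin : nuP P x = betaP P x + 1) (hbeta : 1 ≤ betaP P x) :
    ∃ j : Fin n, ∃ Q₁ ∈ P, ∃ Q₂ ∈ P, Q₁ ≠ Q₂ ∧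
      ∃ v₁ v₂ : Fin n → ℤ, IsBIS Q₁ x v₁ ∧ IsBIS Q₂ x v₂ ∧
        (∀ j' : Fin n, j' ≠ j → v₁ j' = v₂ j') ∧ v₁ j * v₂ j = -1 := by
  classical
  obtain ⟨a, b, hab', rfl⟩ := hR
  obtain ⟨⟨hPfin, hPrect, hPcov⟩, hPdisj⟩ := hpart
  have hax : ∀ i, a i < x i ∧ x i < b i := by
    rw [interior_Icc_pi] at hx
    intro i
    exact ⟨(hx i (Set.mem_univ i)).1, (hx i (Set.mem_univ i)).2⟩
  have key : ∀ Q : Set (Fin n → ℝ), Q ∈ P → x ∈ Q →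
      ∃ v : Fin n → ℤ, (∀ j, v j = 1 ∨ v j = 0 ∨ v j = -1) ∧ IsBIS Q x v ∧
        Q = Set.Icc (Af x a v) (Bf x b v) :=
    fun Q hQ hxQ => keyQ hab' hax hab hQ (hPrect Q hQ) hxQ
  choose! vfun hvcell hvbis hvicc using key
  set S : Set (Set (Fin n → ℝ)) := {Q | Q ∈ P ∧ x ∈ Q} with hS
  have hSfin : S.Finite := hPfin.subset (fun Q hQ => hQ.1)
  set FS : Finset (Set (Fin n → ℝ)) := hSfin.toFinset with hFS
  have hFSmem : ∀ Q, Q ∈ FS ↔ (Q ∈ P ∧ x ∈ Q) := by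
    intro Q
    rw [hFS, Set.Finite.mem_toFinset]
    rfl
  set V : Finset (Fin n → ℤ) := FS.image vfun with hV
  have hinj : ∀ Q ∈ FS, ∀ Q' ∈ FS, vfun Q = vfun Q' → Q = Q' := by
    intro Q hQ Q' hQ' heq
    obtain ⟨hQP, hxQ⟩ := (hFSmem Q).mp hQ
    obtain ⟨hQ'P, hxQ'⟩ := (hFSmem Q').mp hQ'
    rw [hvicc Q hQP hxQ, hvicc Q' hQ'P hxQ', heq]
  have hcardV : V.card = FS.card := Finset.card_image_of_injOn hinj
  have hmemV : ∀ w, w ∈ V ↔ ∃ Q ∈ FS, vfun Q = w := by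
    intro w
    rw [hV, Finset.mem_image]
  -- good family
  have hgood : GoodFam V := by
    constructor
    · intro w hw
      obtain ⟨Q, hQ, rfl⟩ := (hmemV w).mp hw
      obtain ⟨hQP, hxQ⟩ := (hFSmem Q).mp hQ
      exact hvcell Q hQP hxQ
    · intro w hw w' hw' hne
      obtain ⟨Q, hQ, rfl⟩ := (hmemV w).mp hw
      obtain ⟨Q', hQ', rfl⟩ := (hmemV w').mp hw'
      obtain ⟨hQP, hxQ⟩ := (hFSmem Q).mp hQ
      obtain ⟨hQ'P, hxQ'⟩ := (hFSmem Q').mp hQ'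
      have hQne : Q ≠ Q' := fun h => hne (h ▸ rfl)
      have hdisj := hPdisj Q hQP Q' hQ'P hQne
      rw [hvicc Q hQP hxQ, hvicc Q' hQ'P hxQ'] at hdisj
      exact conflict_of_disjoint hab' hax (hvcell Q hQP hxQ) (hvcell Q' hQ'P hxQ') hdisj
    · intro s hs
      obtain ⟨Q, hQP, hxQ, hcond⟩ := covering_sign hab' hax hPfin hPrect hPcov s hs
      refine ⟨vfun Q, (hmemV _).mpr ⟨Q, (hFSmem Q).mpr ⟨hQP, hxQ⟩, rfl⟩, ?_⟩
      exact hcond (vfun Q) (hvcell Q hQP hxQ) (hvicc Q hQP hxQ)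
  -- boundary vectors = support
  have hbsupp : {j : Fin n | IsBoundaryVector P x j} = ↑(suppF V) := by
    ext j
    simp only [Set.mem_setOf_eq, Finset.coe_filter, Finset.mem_coe]
    rw [mem_suppF]
    constructor
    · rintro ⟨Q, hQP, F, ⟨a', b', ha'b', hQeq', hFor⟩, hxF⟩
      have hxQ : x ∈ Q := by
        rcases hFor with rfl|rfl <;> exact hxF.1
      have hQFS : Q ∈ FS := (hFSmem Q).mpr ⟨hQP, hxQ⟩
      have heq := (hvicc Q hQP hxQ) ▸ hQeq'
      obtain ⟨hA', hB'⟩ := icc_inject ha'b'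
        (hQeq'.symm.trans (hvicc Q hQP hxQ))
      refine ⟨vfun Q, (hmemV _).mpr ⟨Q, hQFS, rfl⟩, ?_⟩
      rcases hFor with rfl|rfl
      · have hxj : x j = a' j := hxF.2
        rw [hA'] at hxj
        intro h0
        have : Af x a (vfun Q) j = a j := by simp [Af, h0]
        rw [this] at hxj
        exact absurd hxj (ne_of_gt (hax j).1)
      · have hxj : x j = b' j := hxF.2
        rw [hB'] at hxj
        intro h0
        have : Bf x b (vfun Q) j = b j := by
          simp only [Bf, h0]
          norm_num
        rw [this] at hxj
        exact absurd hxj (ne_of_lt (hax j).2)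
    · rintro ⟨w, hw, hwj⟩
      obtain ⟨Q, hQ, rfl⟩ := (hmemV w).mp hw
      obtain ⟨hQP, hxQ⟩ := (hFSmem Q).mp hQ
      have hcells := hvcell Q hQP hxQ
      have hQI := hvicc Q hQP hxQ
      have hltab := Af_lt_Bf hab' hax hcells
      rcases hcells j with h1|h1|h1
      · refine ⟨Q, hQP, {y ∈ Q | y j = Af x a (vfun Q) j}, ⟨Af x a (vfun Q), Bf x b (vfun Q),
          hltab, hQI, Or.inl ?_⟩, ⟨hxQ, ?_⟩⟩
        · rfl
        · simp [Af, h1]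
      · exact absurd h1 hwj
      · refine ⟨Q, hQP, {y ∈ Q | y j = Bf x b (vfun Q) j}, ⟨Af x a (vfun Q), Bf x b (vfun Q),
          hltab, hQI, Or.inr ?_⟩, ⟨hxQ, ?_⟩⟩
        · rfl
        · simp only [Bf, h1]
          norm_num
  have hbeta' : betaP P x = (suppF V).card := by
    rw [betaP, hbsupp, Set.ncard_coe_finset]
  have hnu : nuP P x = V.card := by
    rw [nuP, hcardV, hFS]
    exact Set.ncard_eq_toFinset_card S hSfin
  have hminV : V.card = (suppF V).card + 1 := by omega
  have hbV : 1 ≤ (suppF V).card := by omega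
  obtain ⟨w1, hw1, w2, hw2, hne, j, hprod, hagree⟩ :=
    comb_main (meas V) V (le_refl _) hgood hminV hbV
  obtain ⟨Q1, hQ1, rfl⟩ := (hmemV w1).mp hw1
  obtain ⟨Q2, hQ2, rfl⟩ := (hmemV w2).mp hw2
  obtain ⟨hQ1P, hxQ1⟩ := (hFSmem Q1).mp hQ1
  obtain ⟨hQ2P, hxQ2⟩ := (hFSmem Q2).mp hQ2
  have hQne : Q1 ≠ Q2 := fun h => hne (h ▸ rfl)
  exact ⟨j, Q1, hQ1P, Q2, hQ2P, hQne, vfun Q1, vfun Q2,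
    hvbis Q1 hQ1P hxQ1, hvbis Q2 hQ2P hxQ2, fun k hk => hagree k hk, hprod⟩
end

section
/- Let 𝒫 be a regulated partition of ℝⁿ. Then 𝒫 is minimal (i.e., (n+1)-regulated) if and only if ν_𝒫(x) = β_𝒫(x) + 1 for every x ∈ ℝⁿ. -/
set_option linter.unusedSectionVars false
set_option maxHeartbeats 1000000



open Finset

section Comb
variable {ι : Type*} [Fintype ι] [DecidableEq ι]

/-- the ±1 pattern associated to a boolean vector -/
def sigPat (s : ι → Bool) (i : ι) : ℤ := if s i then 1 else -1

/-- compatibility of a sign vector with a strict pattern -/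
def CompatV (v : ι → ℤ) (s : ι → Bool) : Prop := ∀ i, v i = 0 ∨ v i = sigPat s i

instance (v : ι → ℤ) : DecidablePred (CompatV v) := fun _ => Fintype.decidableForallFintype

lemma sigPat_ne_zero (s : ι → Bool) (i : ι) : sigPat s i ≠ 0 := by
  unfold sigPat; split <;> simp

lemma sigPat_update_self (s : ι → Bool) (l : ι) :
    sigPat (Function.update s l (!(s l))) l = - sigPat s l := by
  unfold sigPat; simp [Function.update_self]; cases h : s l <;> simp

lemma sigPat_update_ne (s : ι → Bool) (l i : ι) (h : i ≠ l) :
    sigPat (Function.update s l (!(s l))) i = sigPat s i := by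
  unfold sigPat; rw [Function.update_of_ne h]

/-- the set of strict patterns compatible with v -/
noncomputable def SV (v : ι → ℤ) : Finset (ι → Bool) := univ.filter (fun s => CompatV v s)

lemma SV_nonempty (v : ι → ℤ) (hv : ∀ i, v i = -1 ∨ v i = 0 ∨ v i = 1) : (SV v).Nonempty := by
  refine ⟨fun i => v i == 1, ?_⟩
  simp only [SV, mem_filter, mem_univ, true_and]
  intro i
  rcases hv i with h | h | h
  · right; simp [h, sigPat]
  · left; exact h
  · right; simp [h, sigPat]

lemma SV_flip_mem (v : ι → ℤ) (l : ι) (hvl : v l = 0) (s : ι → Bool) (hs : s ∈ SV v) :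
    Function.update s l (!(s l)) ∈ SV v := by
  simp only [SV, mem_filter, mem_univ, true_and] at hs ⊢
  intro i
  by_cases h : i = l
  · subst h; left; exact hvl
  · rcases hs i with h0 | h0
    · left; exact h0
    · right; rw [sigPat_update_ne s l i h]; exact h0

/-- sum of the l-th pattern-coordinate over patterns compatible with v -/
lemma sum_SV_sig (v : ι → ℤ) (l : ι) :
    ∑ s ∈ SV v, (sigPat s l : ℝ) = (v l : ℝ) * (SV v).card := by
  by_cases hvl : v l = 0
  · rw [hvl]
    push_cast
    rw [zero_mul]
    refine Finset.sum_involution (fun s _ => Function.update s l (!(s l))) ?_ ?_ ?_ ?_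
    · intro s hs
      rw [sigPat_update_self]
      push_cast; ring
    · intro s hs _
      intro hcon
      have hcon' : Function.update s l (!(s l)) = s := hcon
      have : Function.update s l (!(s l)) l = s l := by rw [hcon']
      rw [Function.update_self] at this
      cases h : s l <;> rw [h] at this <;> simp at this
    · intro s hs; exact SV_flip_mem v l hvl s hs
    · intro s hs
      funext i
      by_cases h : i = l
      · subst h; simp [Function.update_self]
      · simp [Function.update_of_ne h]
  · have : ∀ s ∈ SV v, (sigPat s l : ℝ) = (v l : ℝ) := by
      intro s hs
      simp only [SV, mem_filter, mem_univ, true_and] at hs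
      rcases hs l with h | h
      · exact absurd h hvl
      · rw [h]
    rw [Finset.sum_congr rfl this, Finset.sum_const, nsmul_eq_mul, mul_comm]

lemma sum_SV_sig2 (v : ι → ℤ) (l l' : ι) (hll' : l ≠ l') :
    ∑ s ∈ SV v, (sigPat s l : ℝ) * (sigPat s l' : ℝ)
      = (v l : ℝ) * (v l' : ℝ) * (SV v).card := by
  by_cases hvl : v l = 0
  · rw [hvl]
    push_cast
    rw [zero_mul, zero_mul]
    refine Finset.sum_involution (fun s _ => Function.update s l (!(s l))) ?_ ?_ ?_ ?_
    · intro s hs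
      rw [sigPat_update_self, sigPat_update_ne s l l' (Ne.symm hll')]
      push_cast; ring
    · intro s hs _
      intro hcon
      have hcon' : Function.update s l (!(s l)) = s := hcon
      have : Function.update s l (!(s l)) l = s l := by rw [hcon']
      rw [Function.update_self] at this
      cases h : s l <;> rw [h] at this <;> simp at this
    · intro s hs; exact SV_flip_mem v l hvl s hs
    · intro s hs
      funext i
      by_cases h : i = l
      · subst h; simp [Function.update_self]
      · simp [Function.update_of_ne h]
  · have heq : ∀ s ∈ SV v, (sigPat s l : ℝ) * (sigPat s l' : ℝ)
        = (v l : ℝ) * (sigPat s l' : ℝ) := by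
      intro s hs
      simp only [SV, mem_filter, mem_univ, true_and] at hs
      rcases hs l with h | h
      · exact absurd h hvl
      · rw [h]
    rw [Finset.sum_congr rfl heq, ← Finset.mul_sum, sum_SV_sig, mul_assoc]

lemma compat_unique {V : Finset (ι → ℤ)}
    (hopp : ∀ v ∈ V, ∀ w ∈ V, v ≠ w → ∃ i, v i ≠ 0 ∧ w i = - v i)
    {v w : ι → ℤ} (hv : v ∈ V) (hw : w ∈ V) {s : ι → Bool}
    (hvs : CompatV v s) (hws : CompatV w s) : v = w := by
  by_contra hne
  obtain ⟨i, hvi, hwi⟩ := hopp v hv w hw hne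
  have hσ := sigPat_ne_zero s i
  rcases hvs i with h | h <;> rcases hws i with h' | h' <;> omega

lemma cube_sum_partition (V : Finset (ι → ℤ))
    (hex : ∀ s, ∃ v ∈ V, CompatV v s)
    (hopp : ∀ v ∈ V, ∀ w ∈ V, v ≠ w → ∃ i, v i ≠ 0 ∧ w i = - v i)
    (f : (ι → Bool) → ℝ) :
    ∑ v ∈ V, ∑ s ∈ SV v, f s = ∑ s : ι → Bool, f s := by
  have : ∀ v ∈ V, ∑ s ∈ SV v, f s = ∑ s : ι → Bool, if CompatV v s then f s else 0 := by
    intro v _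
    rw [SV, Finset.sum_filter]
  rw [Finset.sum_congr rfl this, Finset.sum_comm]
  refine Finset.sum_congr rfl ?_
  intro s _
  obtain ⟨v₀, hv₀, hc₀⟩ := hex s
  rw [Finset.sum_eq_single_of_mem v₀ hv₀]
  · rw [if_pos hc₀]
  · intro w hw hne
    rw [if_neg]
    intro hcw
    exact hne (compat_unique hopp hw hv₀ hcw hc₀)

lemma SV_zero : SV (fun _ : ι => (0:ℤ)) = univ := by
  refine Finset.eq_univ_iff_forall.mpr ?_
  intro s
  simp only [SV, mem_filter, mem_univ, true_and]
  intro i; left; rfl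

lemma cube_sum_sig (l : ι) : ∑ s : ι → Bool, (sigPat s l : ℝ) = 0 := by
  have := sum_SV_sig (fun _ : ι => (0:ℤ)) l
  rw [SV_zero] at this
  simpa using this

lemma cube_sum_sig2 (l l' : ι) (h : l ≠ l') :
    ∑ s : ι → Bool, (sigPat s l : ℝ) * (sigPat s l' : ℝ) = 0 := by
  have := sum_SV_sig2 (fun _ : ι => (0:ℤ)) l l' h
  rw [SV_zero] at this
  simpa using this

lemma R1 (V : Finset (ι → ℤ))
    (hex : ∀ s, ∃ v ∈ V, CompatV v s)
    (hopp : ∀ v ∈ V, ∀ w ∈ V, v ≠ w → ∃ i, v i ≠ 0 ∧ w i = - v i) (l : ι) :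
    ∑ v ∈ V, (v l : ℝ) * (SV v).card = 0 := by
  have h := cube_sum_partition V hex hopp (fun s => (sigPat s l : ℝ))
  rw [cube_sum_sig] at h
  rw [← h]
  exact Finset.sum_congr rfl (fun v _ => (sum_SV_sig v l).symm)

lemma R2 (V : Finset (ι → ℤ))
    (hex : ∀ s, ∃ v ∈ V, CompatV v s)
    (hopp : ∀ v ∈ V, ∀ w ∈ V, v ≠ w → ∃ i, v i ≠ 0 ∧ w i = - v i)
    (l l' : ι) (h : l ≠ l') :
    ∑ v ∈ V, (v l : ℝ) * (v l' : ℝ) * (SV v).card = 0 := by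
  have h2 := cube_sum_partition V hex hopp (fun s => (sigPat s l : ℝ) * (sigPat s l' : ℝ))
  rw [cube_sum_sig2 l l' h] at h2
  rw [← h2]
  exact Finset.sum_congr rfl (fun v _ => (sum_SV_sig2 v l l' h).symm)

theorem comb_main (V : Finset (ι → ℤ))
    (hval : ∀ v ∈ V, ∀ i, v i = -1 ∨ v i = 0 ∨ v i = 1)
    (hex : ∀ s, ∃ v ∈ V, CompatV v s)
    (hopp : ∀ v ∈ V, ∀ w ∈ V, v ≠ w → ∃ i, v i ≠ 0 ∧ w i = - v i)
    (E : Finset ι) (hE : E.Nonempty)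
    (hEsupp : ∀ l ∈ E, ∃ v ∈ V, v l ≠ 0) :
    E.card + 1 ≤ (V.filter (fun v => ∃ l ∈ E, v l ≠ 0)).card := by
  classical
  by_contra hcon
  push_neg at hcon
  set B := V.filter (fun v => ∃ l ∈ E, v l ≠ 0) with hBdef
  have hBV : B ⊆ V := Finset.filter_subset _ _
  have hBcard : B.card ≤ E.card := by omega
  -- the ambient Euclidean space
  set κ := {l // l ∈ E}
  let H := EuclideanSpace ℝ (Option κ)
  let pb : (ι → ℤ) → H := fun v => (WithLp.equiv 2 (Option κ → ℝ)).symm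
    (fun o => Option.elim o (1:ℝ) (fun k => (v k.1 : ℝ)))
  -- span of images is a proper subspace
  let U : Submodule ℝ H := Submodule.span ℝ ((B.image pb : Finset H) : Set H)
  have hrank : Module.finrank ℝ U ≤ E.card := by
    refine le_trans (finrank_span_finset_le_card (R := ℝ) (B.image pb)) ?_
    exact le_trans (Finset.card_image_le) hBcard
  have hHrank : Module.finrank ℝ H = E.card + 1 := by
    rw [finrank_euclideanSpace, Fintype.card_option, Fintype.card_coe]
  have hUne : U ≠ ⊤ := by
    intro h
    rw [h, finrank_top, hHrank] at hrank
    omega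
  have hOrth : U.orthogonal ≠ ⊥ := by
    intro h
    exact hUne (Submodule.orthogonal_eq_bot_iff.mp h)
  obtain ⟨y, hyU, hy0⟩ := Submodule.ne_bot_iff _ |>.mp hOrth
  set c : ℝ := y none with hc
  set a : κ → ℝ := fun k => y (some k) with ha
  have heq : ∀ b ∈ B, c + ∑ k : κ, (b k.1 : ℝ) * a k = 0 := by
    intro b hb
    have hmem : pb b ∈ U := Submodule.subset_span (by
      exact_mod_cast Finset.mem_coe.mpr (Finset.mem_image_of_mem pb hb))
    have hinner : inner (𝕜 := ℝ) (pb b) y = 0 :=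
      Submodule.inner_right_of_mem_orthogonal hmem hyU
    rw [PiLp.inner_apply] at hinner
    rw [Fintype.sum_option] at hinner
    simp [pb, RCLike.inner_apply, conj_trivial] at hinner
    simpa [hc, ha, mul_comm] using hinner
  set w : (ι → ℤ) → ℝ := fun v => ((SV v).card : ℝ) with hw
  have hwpos : ∀ v ∈ V, 0 < w v := by
    intro v hv
    have := SV_nonempty v (hval v hv)
    simp only [hw]
    exact_mod_cast Finset.card_pos.mpr this
  -- restricted first and second moment identities
  have hR1' : ∀ l ∈ E, ∑ b ∈ B, (b l : ℝ) * w b = 0 := by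
    intro l hl
    rw [← R1 V hex hopp l]
    refine Finset.sum_filter_of_ne ?_
    intro v hv hne
    refine ⟨l, hl, ?_⟩
    intro h0
    rw [h0] at hne; simp at hne
  have hR2' : ∀ l ∈ E, ∀ l' ∈ E, l ≠ l' →
      ∑ b ∈ B, (b l : ℝ) * (b l' : ℝ) * w b = 0 := by
    intro l hl l' hl' hne
    rw [← R2 V hex hopp l l' hne]
    refine Finset.sum_filter_of_ne ?_
    intro v hv h0
    refine ⟨l, hl, ?_⟩
    intro hz
    rw [hz] at h0; simp at h0
  set t : (ι → ℤ) → ℝ := fun b => ∑ k : κ, (b k.1 : ℝ) * a k with ht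
  set μ : ℝ := ∑ b ∈ B, w b with hμ
  set D : κ → ℝ := fun k => ∑ b ∈ B, (b k.1 : ℝ)^2 * w b with hD
  have hzero : ∑ b ∈ B, w b * (c + t b)^2 = 0 := by
    refine Finset.sum_eq_zero ?_
    intro b hb
    rw [heq b hb]
    ring
  have hA2 : ∑ b ∈ B, w b * t b = 0 := by
    have : ∑ b ∈ B, w b * t b = ∑ k : κ, (∑ b ∈ B, (b k.1 : ℝ) * w b) * a k := by
      simp only [ht, Finset.mul_sum, Finset.sum_mul]
      rw [Finset.sum_comm]
      refine Finset.sum_congr rfl (fun k _ => Finset.sum_congr rfl (fun b _ => by ring))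
    rw [this]
    refine Finset.sum_eq_zero (fun k _ => ?_)
    rw [hR1' k.1 k.2, zero_mul]
  have hBB : ∀ k k' : κ, ∑ b ∈ B, (b k.1 : ℝ) * (b k'.1 : ℝ) * w b
      = if k = k' then D k else 0 := by
    intro k k'
    by_cases h : k = k'
    · subst h
      rw [if_pos rfl]
      refine Finset.sum_congr rfl (fun b _ => by rw [sq])
    · rw [if_neg h]
      refine hR2' k.1 k.2 k'.1 k'.2 ?_
      intro hh
      exact h (Subtype.ext hh)
  have hA3 : ∑ b ∈ B, w b * (t b)^2 = ∑ k : κ, a k ^ 2 * D k := by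
    have step1 : ∀ b, (t b)^2 = ∑ k : κ, ∑ k' : κ,
        ((b k.1 : ℝ) * a k) * ((b k'.1 : ℝ) * a k') := by
      intro b
      rw [sq, ht, Finset.sum_mul_sum]
    have step2 : ∑ b ∈ B, w b * (t b)^2
        = ∑ k : κ, ∑ k' : κ, (a k * a k') * ∑ b ∈ B, (b k.1 : ℝ) * (b k'.1 : ℝ) * w b := by
      simp only [step1, Finset.mul_sum, Finset.sum_mul]
      rw [Finset.sum_comm]
      refine Finset.sum_congr rfl (fun k _ => ?_)
      rw [Finset.sum_comm]
      refine Finset.sum_congr rfl (fun k' _ => Finset.sum_congr rfl (fun b _ => by ring))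
    rw [step2]
    refine Finset.sum_congr rfl (fun k _ => ?_)
    have hterm : ∀ k' ∈ Finset.univ, a k * a k' * (∑ b ∈ B, (b k.1 : ℝ) * (b k'.1 : ℝ) * w b)
        = if k' = k then a k ^ 2 * D k else 0 := by
      intro k' _
      rw [hBB k k']
      by_cases h : k = k'
      · subst h; rw [if_pos rfl, if_pos rfl]; ring
      · rw [if_neg h, if_neg (Ne.symm h), mul_zero]
    rw [Finset.sum_congr rfl hterm, Finset.sum_ite_eq' Finset.univ k
      (fun k' => a k ^ 2 * D k), if_pos (Finset.mem_univ k)]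
  have hexpand : ∑ b ∈ B, w b * (c + t b)^2
      = c^2 * μ + 2*c*(∑ b ∈ B, w b * t b) + ∑ b ∈ B, w b * (t b)^2 := by
    have hterm : ∀ b ∈ B, w b * (c + t b)^2
        = c^2 * w b + 2*c*(w b * t b) + w b * (t b)^2 := fun b _ => by ring
    rw [Finset.sum_congr rfl hterm, Finset.sum_add_distrib, Finset.sum_add_distrib,
      ← Finset.mul_sum, ← Finset.mul_sum, hμ]
  rw [hexpand, hA2, hA3] at hzero
  have hkey : c^2 * μ + ∑ k : κ, a k ^ 2 * D k = 0 := by linarith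
  -- B is nonempty
  obtain ⟨l₀, hl₀⟩ := hE
  obtain ⟨v₀, hv₀, hv₀l⟩ := hEsupp l₀ hl₀
  have hv₀B : v₀ ∈ B := Finset.mem_filter.mpr ⟨hv₀, l₀, hl₀, hv₀l⟩
  have hμpos : 0 < μ := by
    refine Finset.sum_pos' (fun b hb => le_of_lt (hwpos b (hBV hb))) ⟨v₀, hv₀B, hwpos v₀ hv₀⟩
  have hDpos : ∀ k : κ, 0 < D k := by
    intro k
    obtain ⟨v, hv, hvl⟩ := hEsupp k.1 k.2
    have hvB : v ∈ B := Finset.mem_filter.mpr ⟨hv, k.1, k.2, hvl⟩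
    refine Finset.sum_pos' (fun b hb => mul_nonneg (sq_nonneg _) (le_of_lt (hwpos b (hBV hb))))
      ⟨v, hvB, ?_⟩
    have : (0:ℝ) < (v k.1 : ℝ)^2 := by
      have : (v k.1 : ℝ) ≠ 0 := by exact_mod_cast hvl
      positivity
    exact mul_pos this (hwpos v hv)
  have hterm1 : 0 ≤ c^2 * μ := mul_nonneg (sq_nonneg _) (le_of_lt hμpos)
  have hterm2 : 0 ≤ ∑ k : κ, a k ^ 2 * D k :=
    Finset.sum_nonneg (fun k _ => mul_nonneg (sq_nonneg _) (le_of_lt (hDpos k)))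
  have h1 : c^2 * μ = 0 := by linarith
  have h2 : ∑ k : κ, a k ^ 2 * D k = 0 := by linarith
  have hc0 : c = 0 := by
    have : c^2 = 0 := by
      rcases mul_eq_zero.mp h1 with h | h
      · exact h
      · exact absurd h (ne_of_gt hμpos)
    exact pow_eq_zero_iff (by norm_num) |>.mp this
  have ha0 : ∀ k : κ, a k = 0 := by
    intro k
    have := (Finset.sum_eq_zero_iff_of_nonneg
      (fun k _ => mul_nonneg (sq_nonneg (a k)) (le_of_lt (hDpos k)))).mp h2 k (Finset.mem_univ k)
    rcases mul_eq_zero.mp this with h | h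
    · exact pow_eq_zero_iff (by norm_num) |>.mp h
    · exact absurd h (ne_of_gt (hDpos k))
  apply hy0
  ext o
  cases o with
  | none => simpa [hc] using hc0
  | some k => simpa [ha] using ha0 k

end Comb

structure Setup (n : ℕ) where
  P : Set (Set (Fin n → ℝ))
  D : Set ℝ
  d : ℝ
  A : Set (Fin n → ℝ) → (Fin n → ℝ)
  B : Set (Fin n → ℝ) → (Fin n → ℝ)
  hd : 0 < d
  hD : ∀ r₁ ∈ D, ∀ r₂ ∈ D, r₁ ≠ r₂ → d < |r₁ - r₂|
  hA : ∀ Q ∈ P, ∀ i, A Q i ∈ D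
  hB : ∀ Q ∈ P, ∀ i, B Q i ∈ D
  hAB : ∀ Q ∈ P, ∀ i, A Q i < B Q i
  hrep : ∀ Q ∈ P, Q = Set.Icc (A Q) (B Q)
  hcov : ∀ x, ∃ Q ∈ P, x ∈ Q
  hdisj : ∀ Q₁ ∈ P, ∀ Q₂ ∈ P, Q₁ ≠ Q₂ → interior Q₁ ∩ interior Q₂ = ∅

namespace Setup
variable {n : ℕ} (S : Setup n)

noncomputable def sgn (Q : Set (Fin n → ℝ)) (x : Fin n → ℝ) (i : Fin n) : ℤ :=
  if x i = S.A Q i then 1 else if x i = S.B Q i then -1 else 0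

lemma sgn_cases (Q x i) : S.sgn Q x i = -1 ∨ S.sgn Q x i = 0 ∨ S.sgn Q x i = 1 := by
  unfold sgn; split
  · right; right; rfl
  · split
    · left; rfl
    · right; left; rfl

lemma sgn_eq_one_iff (Q x i) : S.sgn Q x i = 1 ↔ x i = S.A Q i := by
  unfold sgn
  by_cases h1 : x i = S.A Q i
  · rw [if_pos h1]; simp [h1]
  · rw [if_neg h1]
    by_cases h2 : x i = S.B Q i
    · rw [if_pos h2]; exact iff_of_false (by norm_num) h1
    · rw [if_neg h2]; simp [h1, h2]

lemma sgn_eq_negone_iff (Q x i) : S.sgn Q x i = -1 ↔ (x i ≠ S.A Q i ∧ x i = S.B Q i) := by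
  unfold sgn
  by_cases h1 : x i = S.A Q i
  · rw [if_pos h1]; simp [h1]
  · rw [if_neg h1]
    by_cases h2 : x i = S.B Q i
    · rw [if_pos h2]; exact iff_of_true rfl ⟨h1, h2⟩
    · rw [if_neg h2]; simp [h1, h2]

lemma sgn_eq_zero_iff (Q x i) : S.sgn Q x i = 0 ↔ (x i ≠ S.A Q i ∧ x i ≠ S.B Q i) := by
  unfold sgn
  by_cases h1 : x i = S.A Q i
  · rw [if_pos h1]; simp [h1]
  · rw [if_neg h1]
    by_cases h2 : x i = S.B Q i
    · rw [if_pos h2]; simp [h1, h2]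
    · rw [if_neg h2]; simp [h1, h2]

lemma mem_iff {Q : Set (Fin n → ℝ)} (hQ : Q ∈ S.P) (x : Fin n → ℝ) :
    x ∈ Q ↔ ∀ i, S.A Q i ≤ x i ∧ x i ≤ S.B Q i := by
  conv_lhs => rw [S.hrep Q hQ]
  rw [Set.mem_Icc]
  constructor
  · rintro ⟨h1, h2⟩ i; exact ⟨h1 i, h2 i⟩
  · intro h; exact ⟨fun i => (h i).1, fun i => (h i).2⟩

lemma sgn_ne_ab {Q : Set (Fin n → ℝ)} (hQ : Q ∈ S.P) {x : Fin n → ℝ} (hx : x ∈ Q) (i : Fin n)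
    (hBi : x i = S.B Q i) : x i ≠ S.A Q i := by
  intro hA
  have := S.hAB Q hQ i
  rw [← hA, ← hBi] at this
  exact lt_irrefl _ this

lemma pi_Ioo_subset_interior {Q : Set (Fin n → ℝ)} (hQ : Q ∈ S.P) :
    Set.pi Set.univ (fun i => Set.Ioo (S.A Q i) (S.B Q i)) ⊆ interior Q := by
  apply interior_maximal
  · intro y hy
    rw [S.mem_iff hQ]
    intro i
    have := hy i (Set.mem_univ i)
    exact ⟨le_of_lt this.1, le_of_lt this.2⟩
  · exact isOpen_set_pi Set.finite_univ (fun i _ => isOpen_Ioo)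

/-- Any two distinct members sharing a point are "opposite" at some coordinate. -/
lemma opposition {Q₁ Q₂ : Set (Fin n → ℝ)} (hQ1 : Q₁ ∈ S.P) (hQ2 : Q₂ ∈ S.P)
    (hne : Q₁ ≠ Q₂) {x : Fin n → ℝ} (hx1 : x ∈ Q₁) (hx2 : x ∈ Q₂) :
    ∃ i, S.sgn Q₁ x i ≠ 0 ∧ S.sgn Q₂ x i = - S.sgn Q₁ x i := by
  by_contra hcon
  push_neg at hcon
  have key : ∀ i, S.A Q₁ i < S.B Q₂ i ∧ S.A Q₂ i < S.B Q₁ i := by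
    intro i
    have h11 := (S.mem_iff hQ1 x).mp hx1 i
    have h22 := (S.mem_iff hQ2 x).mp hx2 i
    constructor
    · rcases lt_or_eq_of_le (le_trans h11.1 h22.2) with h | h
      · exact h
      · exfalso
        have hxa : x i = S.A Q₁ i := le_antisymm (by rw [h]; exact h22.2) h11.1
        have hxb : x i = S.B Q₂ i := by rw [hxa, h]
        have hs1 : S.sgn Q₁ x i = 1 := (S.sgn_eq_one_iff Q₁ x i).mpr hxa
        have hs2 : S.sgn Q₂ x i = -1 :=
          (S.sgn_eq_negone_iff Q₂ x i).mpr ⟨S.sgn_ne_ab hQ2 hx2 i hxb, hxb⟩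
        have := hcon i (by rw [hs1]; norm_num)
        rw [hs1, hs2] at this
        exact this rfl
    · rcases lt_or_eq_of_le (le_trans h22.1 h11.2) with h | h
      · exact h
      · exfalso
        have hxa : x i = S.A Q₂ i := le_antisymm (by rw [h]; exact h11.2) h22.1
        have hxb : x i = S.B Q₁ i := by rw [hxa, h]
        have hs2 : S.sgn Q₂ x i = 1 := (S.sgn_eq_one_iff Q₂ x i).mpr hxa
        have hs1 : S.sgn Q₁ x i = -1 :=
          (S.sgn_eq_negone_iff Q₁ x i).mpr ⟨S.sgn_ne_ab hQ1 hx1 i hxb, hxb⟩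
        have := hcon i (by rw [hs1]; norm_num)
        rw [hs1, hs2] at this
        norm_num at this
  set y : Fin n → ℝ := fun i =>
    (max (S.A Q₁ i) (S.A Q₂ i) + min (S.B Q₁ i) (S.B Q₂ i)) / 2 with hy
  have hmaxmin : ∀ i, max (S.A Q₁ i) (S.A Q₂ i) < min (S.B Q₁ i) (S.B Q₂ i) := by
    intro i
    rw [max_lt_iff, lt_min_iff, lt_min_iff]
    exact ⟨⟨S.hAB Q₁ hQ1 i, (key i).1⟩, ⟨(key i).2, S.hAB Q₂ hQ2 i⟩⟩
  have hy1 : y ∈ interior Q₁ := by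
    apply S.pi_Ioo_subset_interior hQ1
    intro i _
    constructor
    · calc S.A Q₁ i ≤ max (S.A Q₁ i) (S.A Q₂ i) := le_max_left _ _
        _ < y i := by rw [hy]; dsimp only; linarith [hmaxmin i]
    · calc y i < min (S.B Q₁ i) (S.B Q₂ i) := by rw [hy]; dsimp only; linarith [hmaxmin i]
        _ ≤ S.B Q₁ i := min_le_left _ _
  have hy2 : y ∈ interior Q₂ := by
    apply S.pi_Ioo_subset_interior hQ2
    intro i _
    constructor
    · calc S.A Q₂ i ≤ max (S.A Q₁ i) (S.A Q₂ i) := le_max_right _ _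
        _ < y i := by rw [hy]; dsimp only; linarith [hmaxmin i]
    · calc y i < min (S.B Q₁ i) (S.B Q₂ i) := by rw [hy]; dsimp only; linarith [hmaxmin i]
        _ ≤ S.B Q₂ i := min_le_right _ _
  have := S.hdisj Q₁ hQ1 Q₂ hQ2 hne
  rw [Set.eq_empty_iff_forall_notMem] at this
  exact this y ⟨hy1, hy2⟩

/-- pointwise separation radius for the grid set D -/
lemma exists_delta (x : Fin n → ℝ) :
    ∃ δ > 0, ∀ i, ∀ r ∈ S.D, |r - x i| < δ → r = x i := by
  have key : ∀ i : Fin n, ∃ δi > 0, ∀ r ∈ S.D, |r - x i| < δi → r = x i := by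
    intro i
    by_cases h : ∃ r₀, r₀ ∈ S.D ∧ r₀ ≠ x i ∧ |r₀ - x i| < S.d / 2
    · obtain ⟨r₀, hr₀D, hr₀ne, hr₀d⟩ := h
      refine ⟨|r₀ - x i|, ?_, ?_⟩
      · exact abs_pos.mpr (sub_ne_zero.mpr hr₀ne)
      · intro r hrD hr
        by_contra hne
        have hr2 : |r - x i| < S.d / 2 := lt_trans hr hr₀d
        by_cases hrr : r = r₀
        · subst hrr; exact lt_irrefl _ hr
        · have := S.hD r hrD r₀ hr₀D hrr
          have : |r - r₀| ≤ |r - x i| + |r₀ - x i| := by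
            calc |r - r₀| = |(r - x i) - (r₀ - x i)| := by ring_nf
              _ ≤ |r - x i| + |r₀ - x i| := abs_sub _ _
          linarith [S.hD r hrD r₀ hr₀D hrr]
    · push_neg at h
      refine ⟨S.d / 2, by linarith [S.hd], ?_⟩
      intro r hrD hr
      by_contra hne
      exact absurd hr (not_lt.mpr (h r hrD hne))
  choose δf hδf1 hδf2 using key
  refine ⟨(insert 1 (Finset.univ.image δf)).min' (Finset.insert_nonempty _ _), ?_, ?_⟩
  · have := Finset.min'_mem (insert 1 (Finset.univ.image δf)) (Finset.insert_nonempty _ _)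
    rcases Finset.mem_insert.mp this with h | h
    · rw [h]; norm_num
    · obtain ⟨i, _, hi⟩ := Finset.mem_image.mp h
      rw [← hi]; exact hδf1 i
  · intro i r hrD hr
    refine hδf2 i r hrD (lt_of_lt_of_le hr ?_)
    exact Finset.min'_le _ _ (Finset.mem_insert_of_mem (Finset.mem_image_of_mem δf (Finset.mem_univ i)))

/-- if a nearby point is in a member, so is the base point -/
lemma mem_of_near {Q : Set (Fin n → ℝ)} (hQ : Q ∈ S.P) {x z : Fin n → ℝ} {δ : ℝ}
    (hδ : ∀ i, ∀ r ∈ S.D, |r - x i| < δ → r = x i)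
    (hz : z ∈ Q) (hnear : ∀ i, |z i - x i| < δ) : x ∈ Q := by
  rw [S.mem_iff hQ] at hz ⊢
  intro i
  obtain ⟨h1, h2⟩ := hz i
  constructor
  · by_contra hc
    push_neg at hc
    have habs : |S.A Q i - x i| < δ := by
      rw [abs_lt]
      constructor
      · linarith [abs_lt.mp (hnear i)]
      · linarith [abs_lt.mp (hnear i)]
    have := hδ i (S.A Q i) (S.hA Q hQ i) habs
    linarith [this ▸ hc]
  · by_contra hc
    push_neg at hc
    have habs : |S.B Q i - x i| < δ := by
      rw [abs_lt]
      constructor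
      · linarith [abs_lt.mp (hnear i)]
      · linarith [abs_lt.mp (hnear i)]
    have := hδ i (S.B Q i) (S.hB Q hQ i) habs
    linarith [this ▸ hc]

/-- covering by compatible members: local structure of the partition at x -/
lemma cover_compat (x : Fin n → ℝ) (s : Fin n → Bool) :
    ∃ Q ∈ S.P, x ∈ Q ∧ CompatV (fun i => S.sgn Q x i) s := by
  obtain ⟨δ, hδpos, hδ⟩ := S.exists_delta x
  set y : Fin n → ℝ := fun i => x i + (δ/2) * (sigPat s i : ℝ) with hy
  obtain ⟨Q, hQP, hyQ⟩ := S.hcov y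
  have hsig : ∀ i, |(sigPat s i : ℝ)| = 1 := by
    intro i
    unfold sigPat
    split <;> norm_num
  have hnear : ∀ i, |y i - x i| < δ := by
    intro i
    rw [hy]
    dsimp only
    rw [add_sub_cancel_left, abs_mul, hsig i, mul_one, abs_of_pos (by linarith)]
    linarith
  have hxQ : x ∈ Q := S.mem_of_near hQP hδ hyQ hnear
  refine ⟨Q, hQP, hxQ, ?_⟩
  intro i
  rcases S.sgn_cases Q x i with h | h | h
  · right
    show S.sgn Q x i = sigPat s i
    rw [h]
    have hxb : x i = S.B Q i := ((S.sgn_eq_negone_iff Q x i).mp h).2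
    have hyle : y i ≤ S.B Q i := ((S.mem_iff hQP y).mp hyQ i).2
    rw [hy] at hyle
    dsimp only at hyle
    rw [← hxb] at hyle
    have hsneg : (sigPat s i : ℝ) ≤ 0 := by nlinarith
    have hsi : s i = false := by
      cases hb : s i
      · rfl
      · exfalso; unfold sigPat at hsneg; rw [if_pos hb] at hsneg; norm_num at hsneg
    unfold sigPat; simp [hsi]
  · left; exact h
  · right
    show S.sgn Q x i = sigPat s i
    rw [h]
    have hxa : x i = S.A Q i := (S.sgn_eq_one_iff Q x i).mp h
    have hyge : S.A Q i ≤ y i := ((S.mem_iff hQP y).mp hyQ i).1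
    rw [hy] at hyge
    dsimp only at hyge
    rw [← hxa] at hyge
    have hspos : (0:ℝ) ≤ (sigPat s i : ℝ) := by nlinarith
    have hsi : s i = true := by
      cases hb : s i
      · exfalso; unfold sigPat at hspos; rw [if_neg (by simp [hb])] at hspos; norm_num at hspos
      · rfl
    unfold sigPat; simp [hsi]

lemma sgn_injOn (x : Fin n → ℝ) : Set.InjOn (fun Q => fun i => S.sgn Q x i)
    {Q | Q ∈ S.P ∧ x ∈ Q} := by
  intro Q₁ hQ₁ Q₂ hQ₂ heq
  by_contra hne
  obtain ⟨i, h1, h2⟩ := S.opposition hQ₁.1 hQ₂.1 hne hQ₁.2 hQ₂.2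
  have : S.sgn Q₁ x i = S.sgn Q₂ x i := congrFun heq i
  omega

lemma Qset_finite (x : Fin n → ℝ) : {Q | Q ∈ S.P ∧ x ∈ Q}.Finite := by
  apply Set.Finite.of_finite_image ?_ (S.sgn_injOn x)
  apply Set.Finite.subset (Set.Finite.pi (fun i : Fin n => (Set.toFinite ({-1,0,1} : Set ℤ))))
  rintro v ⟨Q, hQ, rfl⟩
  intro i _
  rcases S.sgn_cases Q x i with h | h | h <;> simp [h]

noncomputable def Qfin (x : Fin n → ℝ) : Finset (Set (Fin n → ℝ)) :=
  (S.Qset_finite x).toFinset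

lemma mem_Qfin {Q : Set (Fin n → ℝ)} {x : Fin n → ℝ} :
    Q ∈ S.Qfin x ↔ Q ∈ S.P ∧ x ∈ Q := Set.Finite.mem_toFinset _

noncomputable def Vf (x : Fin n → ℝ) : Finset (Fin n → ℤ) :=
  (S.Qfin x).image (fun Q => fun i => S.sgn Q x i)

lemma card_Vf (x : Fin n → ℝ) : (S.Vf x).card = (S.Qfin x).card := by
  apply Finset.card_image_of_injOn
  intro Q₁ hQ₁ Q₂ hQ₂ heq
  exact S.sgn_injOn x (S.mem_Qfin.mp hQ₁) (S.mem_Qfin.mp hQ₂) heq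

lemma Qfin_nonempty (x : Fin n → ℝ) : (S.Qfin x).Nonempty := by
  obtain ⟨Q, hQ, hx⟩ := S.hcov x
  exact ⟨Q, S.mem_Qfin.mpr ⟨hQ, hx⟩⟩

lemma mem_Vf {x : Fin n → ℝ} {v : Fin n → ℤ} :
    v ∈ S.Vf x ↔ ∃ Q ∈ S.P, x ∈ Q ∧ v = fun i => S.sgn Q x i := by
  unfold Vf
  rw [Finset.mem_image]
  constructor
  · rintro ⟨Q, hQ, rfl⟩
    obtain ⟨h1, h2⟩ := S.mem_Qfin.mp hQ
    exact ⟨Q, h1, h2, rfl⟩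
  · rintro ⟨Q, h1, h2, rfl⟩
    exact ⟨Q, S.mem_Qfin.mpr ⟨h1, h2⟩, rfl⟩

lemma Vf_val {x : Fin n → ℝ} : ∀ v ∈ S.Vf x, ∀ i, v i = -1 ∨ v i = 0 ∨ v i = 1 := by
  intro v hv i
  obtain ⟨Q, _, _, rfl⟩ := S.mem_Vf.mp hv
  exact S.sgn_cases Q x i

lemma Vf_ex (x : Fin n → ℝ) : ∀ s : Fin n → Bool, ∃ v ∈ S.Vf x, CompatV v s := by
  intro s
  obtain ⟨Q, hQ, hx, hc⟩ := S.cover_compat x s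
  exact ⟨fun i => S.sgn Q x i, S.mem_Vf.mpr ⟨Q, hQ, hx, rfl⟩, hc⟩

lemma Vf_opp (x : Fin n → ℝ) : ∀ v ∈ S.Vf x, ∀ w ∈ S.Vf x, v ≠ w →
    ∃ i, v i ≠ 0 ∧ w i = - v i := by
  intro v hv w hw hne
  obtain ⟨Q₁, hQ₁, hx₁, rfl⟩ := S.mem_Vf.mp hv
  obtain ⟨Q₂, hQ₂, hx₂, rfl⟩ := S.mem_Vf.mp hw
  have hQne : Q₁ ≠ Q₂ := by rintro rfl; exact hne rfl
  obtain ⟨i, h1, h2⟩ := S.opposition hQ₁ hQ₂ hQne hx₁ hx₂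
  exact ⟨i, h1, h2⟩

open scoped Classical in
noncomputable def SuppF (x : Fin n → ℝ) : Finset (Fin n) :=
  Finset.univ.filter (fun j => ∃ Q ∈ S.P, x ∈ Q ∧ S.sgn Q x j ≠ 0)

lemma mem_SuppF {x : Fin n → ℝ} {j : Fin n} :
    j ∈ S.SuppF x ↔ ∃ Q ∈ S.P, x ∈ Q ∧ S.sgn Q x j ≠ 0 := by
  classical
  unfold SuppF
  simp

end Setup

lemma icc_unique {n : ℕ} {a b a' b' : Fin n → ℝ} (hab : ∀ i, a i < b i)
    (ha'b' : ∀ i, a' i < b' i) (h : Set.Icc a b = Set.Icc a' b') : a = a' ∧ b = b' := by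
  have h1 : a ≤ b := fun i => le_of_lt (hab i)
  have h2 : a' ≤ b' := fun i => le_of_lt (ha'b' i)
  have ha : a ∈ Set.Icc a' b' := h ▸ Set.mem_Icc.mpr ⟨le_refl a, h1⟩
  have hb : b ∈ Set.Icc a' b' := h ▸ Set.mem_Icc.mpr ⟨h1, le_refl b⟩
  have ha' : a' ∈ Set.Icc a b := h ▸ Set.mem_Icc.mpr ⟨le_refl a', h2⟩
  have hb' : b' ∈ Set.Icc a b := h ▸ Set.mem_Icc.mpr ⟨h2, le_refl b'⟩
  constructor
  · exact le_antisymm ((Set.mem_Icc.mp ha').1) ((Set.mem_Icc.mp ha).1)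
  · exact le_antisymm ((Set.mem_Icc.mp hb).2) ((Set.mem_Icc.mp hb').2)

namespace Setup
variable {n : ℕ} (S : Setup n)

lemma boundary_iff (x : Fin n → ℝ) (j : Fin n) :
    IsBoundaryVector S.P x j ↔ ∃ Q ∈ S.P, x ∈ Q ∧ S.sgn Q x j ≠ 0 := by
  constructor
  · rintro ⟨Q, hQP, F, ⟨a, b, hab, hQab, hF⟩, hxF⟩
    have hrep := S.hrep Q hQP
    have huniq := icc_unique hab (fun i => S.hAB Q hQP i) (hQab ▸ hrep)
    rcases hF with hF | hF
    · rw [hF] at hxF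
      obtain ⟨hxQ, hxj⟩ := hxF
      refine ⟨Q, hQP, hxQ, ?_⟩
      intro h0
      exact ((S.sgn_eq_zero_iff Q x j).mp h0).1 (by rw [hxj, huniq.1])
    · rw [hF] at hxF
      obtain ⟨hxQ, hxj⟩ := hxF
      refine ⟨Q, hQP, hxQ, ?_⟩
      intro h0
      exact ((S.sgn_eq_zero_iff Q x j).mp h0).2 (by rw [hxj, huniq.2])
  · rintro ⟨Q, hQP, hxQ, hsgn⟩
    refine ⟨Q, hQP, ?_⟩
    rcases S.sgn_cases Q x j with h | h | h
    · obtain ⟨_, hxb⟩ := (S.sgn_eq_negone_iff Q x j).mp h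
      exact ⟨{y ∈ Q | y j = S.B Q j},
        ⟨S.A Q, S.B Q, fun i => S.hAB Q hQP i, S.hrep Q hQP, Or.inr rfl⟩, hxQ, hxb⟩
    · exact absurd h hsgn
    · have hxa := (S.sgn_eq_one_iff Q x j).mp h
      exact ⟨{y ∈ Q | y j = S.A Q j},
        ⟨S.A Q, S.B Q, fun i => S.hAB Q hQP i, S.hrep Q hQP, Or.inl rfl⟩, hxQ, hxa⟩

lemma nu_eq (x : Fin n → ℝ) : nuP S.P x = (S.Qfin x).card :=
  Set.ncard_eq_toFinset_card _ (S.Qset_finite x)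

lemma beta_eq (x : Fin n → ℝ) : betaP S.P x = (S.SuppF x).card := by
  have hset : {j | IsBoundaryVector S.P x j} = ↑(S.SuppF x) := by
    ext j
    rw [Set.mem_setOf_eq, S.boundary_iff x j, Finset.mem_coe, S.mem_SuppF]
  rw [betaP, hset, Set.ncard_coe_finset]

/-- lower bound: ν ≥ β + 1 -/
lemma nu_ge (x : Fin n → ℝ) : (S.SuppF x).card + 1 ≤ (S.Qfin x).card := by
  rcases (S.SuppF x).eq_empty_or_nonempty with h | h
  · rw [h]
    simpa using Finset.card_pos.mpr (S.Qfin_nonempty x)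
  · have hEsupp : ∀ l ∈ S.SuppF x, ∃ v ∈ S.Vf x, v l ≠ 0 := by
      intro l hl
      obtain ⟨Q, hQP, hxQ, hs⟩ := S.mem_SuppF.mp hl
      exact ⟨fun i => S.sgn Q x i, S.mem_Vf.mpr ⟨Q, hQP, hxQ, rfl⟩, hs⟩
    have := comb_main (S.Vf x) (S.Vf_val) (S.Vf_ex x) (S.Vf_opp x) (S.SuppF x) h hEsupp
    calc (S.SuppF x).card + 1 ≤ (S.Vf x).card := by
          refine le_trans this ?_
          convert Finset.card_filter_le (S.Vf x) (fun v => ∃ l ∈ S.SuppF x, v l ≠ 0)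
          rfl
      _ = (S.Qfin x).card := S.card_Vf x

end Setup

namespace Setup
variable {n : ℕ} (S : Setup n)

lemma sgn_update_ne (Q : Set (Fin n → ℝ)) (x : Fin n → ℝ) (j : Fin n) (c : ℝ)
    {i : Fin n} (h : i ≠ j) : S.sgn Q (Function.update x j c) i = S.sgn Q x i := by
  unfold sgn
  rw [Function.update_of_ne h]

open scoped Classical in
/-- The propagation step. -/
lemma step (x : Fin n → ℝ) (j : Fin n) (hfree : j ∉ S.SuppF x) :
    ∃ y : Fin n → ℝ, (S.SuppF x).card < (S.SuppF y).card ∧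
      (S.Qfin x).card + (S.SuppF y).card ≤ (S.Qfin y).card + (S.SuppF x).card := by
  have hfree' : ∀ Q ∈ S.P, x ∈ Q → S.sgn Q x j = 0 := by
    intro Q hQ hx
    by_contra h
    exact hfree (S.mem_SuppF.mpr ⟨Q, hQ, hx, h⟩)
  have hTne : ((S.Qfin x).image (fun Q => S.B Q j)).Nonempty :=
    (S.Qfin_nonempty x).image _
  set M : ℝ := ((S.Qfin x).image (fun Q => S.B Q j)).min' hTne with hM
  obtain ⟨Qh, hQh, hQhM⟩ := Finset.mem_image.mp (Finset.min'_mem _ hTne)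
  rw [← hM] at hQhM
  have hQhP : Qh ∈ S.P := (S.mem_Qfin.mp hQh).1
  have hxQh : x ∈ Qh := (S.mem_Qfin.mp hQh).2
  have hMle : ∀ Q ∈ S.Qfin x, M ≤ S.B Q j := by
    intro Q hQ
    rw [hM]
    exact Finset.min'_le _ _ (Finset.mem_image_of_mem _ hQ)
  have hxltB : ∀ Q ∈ S.Qfin x, x j < S.B Q j := by
    intro Q hQ
    obtain ⟨hQP, hxQ⟩ := S.mem_Qfin.mp hQ
    have hle := ((S.mem_iff hQP x).mp hxQ j).2
    rcases lt_or_eq_of_le hle with h | h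
    · exact h
    · exfalso
      have := hfree' Q hQP hxQ
      exact ((S.sgn_eq_zero_iff Q x j).mp this).2 h
  have hxM : x j < M := by rw [← hQhM]; exact hxltB Qh hQh
  set y : Fin n → ℝ := Function.update x j M with hy
  have hyj : y j = M := Function.update_self j M x
  have hyi : ∀ i, i ≠ j → y i = x i := fun i hi => Function.update_of_ne hi M x
  have hold : ∀ Q ∈ S.Qfin x, y ∈ Q := by
    intro Q hQ
    obtain ⟨hQP, hxQ⟩ := S.mem_Qfin.mp hQ
    rw [S.mem_iff hQP]
    intro i
    by_cases hij : i = j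
    · rw [hij, hyj]
      exact ⟨le_trans ((S.mem_iff hQP x).mp hxQ j).1 (le_of_lt hxM), hMle Q hQ⟩
    · rw [hyi i hij]
      exact (S.mem_iff hQP x).mp hxQ i
  have holdQfin : ∀ Q ∈ S.Qfin x, Q ∈ S.Qfin y := by
    intro Q hQ
    exact S.mem_Qfin.mpr ⟨(S.mem_Qfin.mp hQ).1, hold Q hQ⟩
  have hsgn_eq : ∀ (Q : Set (Fin n → ℝ)) (i : Fin n), i ≠ j → S.sgn Q y i = S.sgn Q x i := by
    intro Q i hi
    rw [hy]
    exact S.sgn_update_ne Q x j M hi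
  have hsgn_j : ∀ Q ∈ S.Qfin x, S.sgn Q y j ≠ 1 := by
    intro Q hQ h1
    obtain ⟨hQP, hxQ⟩ := S.mem_Qfin.mp hQ
    have h2 := (S.sgn_eq_one_iff Q y j).mp h1
    rw [hyj] at h2
    have hax := ((S.mem_iff hQP x).mp hxQ j).1
    rw [← h2] at hax
    linarith
  have hender : S.sgn Qh y j = -1 := by
    refine (S.sgn_eq_negone_iff Qh y j).mpr ⟨?_, by rw [hyj, ← hQhM]⟩
    intro hA
    have h1 : S.A Qh j < S.B Qh j := S.hAB Qh hQhP j
    have h2 : y j = S.B Qh j := by rw [hyj, ← hQhM]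
    rw [hA] at h2
    exact absurd h2 (ne_of_lt h1)
  have hnew_sgn : ∀ R ∈ S.Qfin y, R ∉ S.Qfin x → S.sgn R y j = 1 := by
    intro R hRy hRx
    obtain ⟨hRP, hyR⟩ := S.mem_Qfin.mp hRy
    have hxR : x ∉ R := fun hxR => hRx (S.mem_Qfin.mpr ⟨hRP, hxR⟩)
    have hyjgt : x j < y j := by rw [hyj]; exact hxM
    have hAgt : x j < S.A R j := by
      by_contra hcon
      push_neg at hcon
      apply hxR
      rw [S.mem_iff hRP]
      intro i
      by_cases hij : i = j
      · rw [hij]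
        refine ⟨hcon, ?_⟩
        have h2 := ((S.mem_iff hRP y).mp hyR j).2
        linarith
      · have := (S.mem_iff hRP y).mp hyR i
        rw [hyi i hij] at this
        exact this
    have hAley : S.A R j ≤ y j := ((S.mem_iff hRP y).mp hyR j).1
    have hByR : y j ≤ S.B R j := ((S.mem_iff hRP y).mp hyR j).2
    rcases lt_or_eq_of_le hAley with hlt | heq
    · exfalso
      set c : ℝ := (S.A R j + y j)/2 with hc
      have hcx : x j < c := by rw [hc]; linarith
      have hcA : S.A R j < c := by rw [hc]; linarith
      have hcy : c < y j := by rw [hc]; linarith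
      set m : Fin n → ℝ := Function.update x j c with hm
      have hmj : m j = c := Function.update_self j c x
      have hmi : ∀ i, i ≠ j → m i = x i := fun i hi => Function.update_of_ne hi c x
      have hsgnm : ∀ (W : Set (Fin n → ℝ)) (i : Fin n), i ≠ j → S.sgn W m i = S.sgn W x i := by
        intro W i hi
        rw [hm]
        exact S.sgn_update_ne W x j c hi
      have hmR : m ∈ R := by
        rw [S.mem_iff hRP]
        intro i
        by_cases hij : i = j
        · rw [hij, hmj]
          exact ⟨le_of_lt hcA, by linarith⟩
        · rw [hmi i hij]
          have := (S.mem_iff hRP y).mp hyR i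
          rw [hyi i hij] at this
          exact this
      have hsgnRmj : S.sgn R m j = 0 := by
        refine (S.sgn_eq_zero_iff R m j).mpr ⟨?_, ?_⟩
        · rw [hmj]; exact ne_of_gt hcA
        · rw [hmj]; exact ne_of_lt (by linarith)
      have hkey : ∀ Q ∈ S.Qfin x, ∃ i, i ≠ j ∧ S.sgn R y i ≠ 0 ∧ S.sgn Q x i = - S.sgn R y i := by
        intro Q hQ
        obtain ⟨hQP, hxQ⟩ := S.mem_Qfin.mp hQ
        have hmQ : m ∈ Q := by
          rw [S.mem_iff hQP]
          intro i
          by_cases hij : i = j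
          · rw [hij, hmj]
            refine ⟨le_trans ((S.mem_iff hQP x).mp hxQ j).1 (le_of_lt hcx), ?_⟩
            have h3 := hMle Q hQ
            rw [hyj] at hcy
            linarith
          · rw [hmi i hij]
            exact (S.mem_iff hQP x).mp hxQ i
        have hRQ : R ≠ Q := fun h => hxR (h ▸ hxQ)
        obtain ⟨i, hi1, hi2⟩ := S.opposition hRP hQP hRQ hmR hmQ
        have hij : i ≠ j := by
          intro h
          rw [h] at hi1
          exact hi1 hsgnRmj
        have hRmy : S.sgn R m i = S.sgn R y i := by
          rw [hsgnm R i hij, ← hsgn_eq R i hij]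
        have hQmx : S.sgn Q m i = S.sgn Q x i := hsgnm Q i hij
        refine ⟨i, hij, ?_, ?_⟩
        · rw [← hRmy]; exact hi1
        · rw [← hQmx, ← hRmy]; exact hi2
      set s : Fin n → Bool := fun i => decide (S.sgn R y i = 1) with hs
      obtain ⟨Q₀, hQ₀P, hxQ₀, hcomp⟩ := S.cover_compat x s
      obtain ⟨i, hij, hRn0, hopp⟩ := hkey Q₀ (S.mem_Qfin.mpr ⟨hQ₀P, hxQ₀⟩)
      rcases hcomp i with h0 | hσ
      · dsimp only at h0
        rw [h0] at hopp
        omega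
      · dsimp only at hσ
        rcases S.sgn_cases R y i with hr | hr | hr
        · rw [hr] at hopp
          have hsi : s i = false := by rw [hs]; simp [hr]
          rw [hσ] at hopp
          unfold sigPat at hopp
          rw [hsi] at hopp
          norm_num at hopp
        · exact hRn0 hr
        · rw [hr] at hopp
          have hsi : s i = true := by rw [hs]; simp [hr]
          rw [hσ] at hopp
          unfold sigPat at hopp
          rw [hsi] at hopp
          norm_num at hopp
    · exact (S.sgn_eq_one_iff R y j).mpr heq.symm
  have hNexists : ∃ R ∈ S.Qfin y, R ∉ S.Qfin x := by
    set s : Fin n → Bool := fun i => if i = j then true else decide (S.sgn Qh y i = 1) with hs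
    obtain ⟨U, hUP, hyU, hcomp⟩ := S.cover_compat y s
    refine ⟨U, S.mem_Qfin.mpr ⟨hUP, hyU⟩, ?_⟩
    intro hUx
    have hxU : x ∈ U := (S.mem_Qfin.mp hUx).2
    have hUj : S.sgn U y j = 0 := by
      rcases hcomp j with h0 | hσ
      · exact h0
      · exfalso
        dsimp only at hσ
        have hsj : s j = true := by rw [hs]; simp
        unfold sigPat at hσ
        rw [hsj] at hσ
        simp at hσ
        exact hsgn_j U hUx hσ
    have hUQh : U ≠ Qh := by
      intro h
      rw [h] at hUj
      rw [hUj] at hender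
      norm_num at hender
    obtain ⟨i, hi1, hi2⟩ := S.opposition hUP hQhP hUQh hxU hxQh
    have hij : i ≠ j := by
      intro h
      rw [h] at hi1
      exact hi1 (hfree' U hUP hxU)
    have hUy : S.sgn U y i = S.sgn U x i := hsgn_eq U i hij
    have hQhy : S.sgn Qh y i = S.sgn Qh x i := hsgn_eq Qh i hij
    rcases hcomp i with h0 | hσ
    · dsimp only at h0
      rw [hUy] at h0
      exact hi1 h0
    · dsimp only at hσ
      have hsi : s i = decide (S.sgn Qh y i = 1) := by rw [hs]; simp [hij]
      rcases S.sgn_cases Qh y i with hq | hq | hq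
      · have hf : s i = false := by rw [hsi]; simp [hq]
        unfold sigPat at hσ
        rw [hf] at hσ
        norm_num at hσ
        rw [hUy] at hσ
        rw [hQhy] at hq
        omega
      · rw [hQhy] at hq
        rw [hq] at hi2
        simp at hi2
        rw [hi2] at hi1
        omega
      · have ht : s i = true := by rw [hsi]; simp [hq]
        unfold sigPat at hσ
        rw [ht] at hσ
        norm_num at hσ
        rw [hUy] at hσ
        rw [hQhy] at hq
        omega
  -- counting
  set Nfin := (S.Qfin y).filter (fun R => R ∉ S.Qfin x) with hN
  have hQy_eq : S.Qfin y = S.Qfin x ∪ Nfin := by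
    ext Q
    constructor
    · intro hQ
      by_cases h : Q ∈ S.Qfin x
      · exact Finset.mem_union_left _ h
      · exact Finset.mem_union_right _ (Finset.mem_filter.mpr ⟨hQ, h⟩)
    · intro hQ
      rcases Finset.mem_union.mp hQ with h | h
      · exact holdQfin Q h
      · exact (Finset.mem_filter.mp h).1
  have hdisjN : Disjoint (S.Qfin x) Nfin := by
    rw [Finset.disjoint_right]
    intro Q hQ
    exact (Finset.mem_filter.mp hQ).2
  have hcard_y : (S.Qfin y).card = (S.Qfin x).card + Nfin.card := by
    rw [hQy_eq, Finset.card_union_of_disjoint hdisjN]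
  set E := Finset.univ.filter
    (fun i => i ≠ j ∧ i ∉ S.SuppF x ∧ ∃ R ∈ Nfin, S.sgn R y i ≠ 0) with hE
  have hSuppy : S.SuppF y = insert j (S.SuppF x ∪ E) := by
    ext i
    rw [S.mem_SuppF, Finset.mem_insert, Finset.mem_union]
    constructor
    · rintro ⟨W, hWP, hyW, hWs⟩
      by_cases hij : i = j
      · exact Or.inl hij
      · right
        have hWy : W ∈ S.Qfin y := S.mem_Qfin.mpr ⟨hWP, hyW⟩
        by_cases hWx : W ∈ S.Qfin x
        · left
          refine S.mem_SuppF.mpr ⟨W, hWP, (S.mem_Qfin.mp hWx).2, ?_⟩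
          rw [← hsgn_eq W i hij]
          exact hWs
        · by_cases hiS : i ∈ S.SuppF x
          · exact Or.inl hiS
          · right
            rw [hE]
            exact Finset.mem_filter.mpr ⟨Finset.mem_univ i, hij, hiS, W,
              Finset.mem_filter.mpr ⟨hWy, hWx⟩, hWs⟩
    · rintro (rfl | h | h)
      · exact ⟨Qh, hQhP, hold Qh hQh, by rw [hender]; norm_num⟩
      · obtain ⟨W, hWP, hxW, hWs⟩ := S.mem_SuppF.mp h
        have hij : i ≠ j := by
          rintro rfl
          exact hfree h
        refine ⟨W, hWP, hold W (S.mem_Qfin.mpr ⟨hWP, hxW⟩), ?_⟩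
        rw [hsgn_eq W i hij]
        exact hWs
      · rw [hE] at h
        obtain ⟨_, hij, hiS, R, hRN, hRs⟩ := Finset.mem_filter.mp h
        have hRy : R ∈ S.Qfin y := (Finset.mem_filter.mp hRN).1
        exact ⟨R, (S.mem_Qfin.mp hRy).1, (S.mem_Qfin.mp hRy).2, hRs⟩
  have hjE : j ∉ S.SuppF x ∪ E := by
    rw [Finset.mem_union]
    rintro (h | h)
    · exact hfree h
    · rw [hE] at h
      exact (Finset.mem_filter.mp h).2.1 rfl
  have hdisjSE : Disjoint (S.SuppF x) E := by
    rw [Finset.disjoint_right]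
    intro i hi
    rw [hE] at hi
    exact (Finset.mem_filter.mp hi).2.2.1
  have hcard_S : (S.SuppF y).card = (S.SuppF x).card + E.card + 1 := by
    rw [hSuppy, Finset.card_insert_of_notMem hjE, Finset.card_union_of_disjoint hdisjSE]
  have hNE : E.card + 1 ≤ Nfin.card := by
    rcases E.eq_empty_or_nonempty with hEe | hEne
    · rw [hEe]
      simp only [Finset.card_empty, zero_add]
      obtain ⟨R, hRy, hRx⟩ := hNexists
      exact Finset.card_pos.mpr ⟨R, Finset.mem_filter.mpr ⟨hRy, hRx⟩⟩
    · set resv : Set (Fin n → ℝ) → ({i : Fin n // i ≠ j} → ℤ) :=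
        fun Q => fun i => S.sgn Q y i.1 with hresv
      set Wfin := (S.Qfin y).filter (fun Q => S.sgn Q y j ≠ -1) with hW
      set V' := Wfin.image resv with hV'
      have hWmem : ∀ Q ∈ Wfin, Q ∈ S.P ∧ y ∈ Q ∧ S.sgn Q y j ≠ -1 := by
        intro Q hQ
        obtain ⟨h1, h2⟩ := Finset.mem_filter.mp hQ
        exact ⟨(S.mem_Qfin.mp h1).1, (S.mem_Qfin.mp h1).2, h2⟩
      have hval' : ∀ v ∈ V', ∀ i, v i = -1 ∨ v i = 0 ∨ v i = 1 := by
        intro v hv i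
        obtain ⟨Q, hQ, rfl⟩ := Finset.mem_image.mp hv
        exact S.sgn_cases Q y i.1
      have hopp' : ∀ v ∈ V', ∀ w ∈ V', v ≠ w → ∃ i, v i ≠ 0 ∧ w i = - v i := by
        intro v hv w hw hne
        obtain ⟨Q₁, hQ₁, rfl⟩ := Finset.mem_image.mp hv
        obtain ⟨Q₂, hQ₂, rfl⟩ := Finset.mem_image.mp hw
        have hQne : Q₁ ≠ Q₂ := by rintro rfl; exact hne rfl
        obtain ⟨hQ₁P, hyQ₁, hQ₁j⟩ := hWmem Q₁ hQ₁
        obtain ⟨hQ₂P, hyQ₂, hQ₂j⟩ := hWmem Q₂ hQ₂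
        obtain ⟨i, hi1, hi2⟩ := S.opposition hQ₁P hQ₂P hQne hyQ₁ hyQ₂
        have hij : i ≠ j := by
          rintro rfl
          rcases S.sgn_cases Q₁ y i with h | h | h
          · exact hQ₁j h
          · exact hi1 h
          · rw [h] at hi2; exact hQ₂j hi2
        exact ⟨⟨i, hij⟩, hi1, hi2⟩
      have hex' : ∀ τ : {i : Fin n // i ≠ j} → Bool, ∃ v ∈ V', CompatV v τ := by
        intro τ
        set s : Fin n → Bool := fun i => if h : i = j then true else τ ⟨i, h⟩ with hs
        obtain ⟨U, hUP, hyU, hcomp⟩ := S.cover_compat y s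
        have hUW : U ∈ Wfin := by
          rw [hW]
          refine Finset.mem_filter.mpr ⟨S.mem_Qfin.mpr ⟨hUP, hyU⟩, ?_⟩
          rcases hcomp j with h0 | hσ
          · dsimp only at h0; rw [h0]; norm_num
          · dsimp only at hσ
            rw [hσ]
            have hsj : s j = true := by rw [hs]; simp
            unfold sigPat
            rw [hsj]
            norm_num
        refine ⟨resv U, Finset.mem_image_of_mem _ hUW, ?_⟩
        intro i
        rcases hcomp i.1 with h0 | hσ
        · left; exact h0
        · right
          dsimp only at hσ
          have hsi : s i.1 = τ i := by
            rw [hs]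
            simp only [dif_neg i.2]
          show S.sgn U y i.1 = sigPat τ i
          rw [hσ]
          unfold sigPat
          rw [hsi]
      set E' := E.subtype (fun i => i ≠ j) with hE'
      have hE'card : E'.card = E.card := by
        rw [hE', Finset.card_subtype]
        congr 1
        apply Finset.filter_true_of_mem
        intro i hi
        rw [hE] at hi
        exact (Finset.mem_filter.mp hi).2.1
      have hE'ne : E'.Nonempty := by
        obtain ⟨i, hi⟩ := hEne
        have hij : i ≠ j := by
          rw [hE] at hi
          exact (Finset.mem_filter.mp hi).2.1
        exact ⟨⟨i, hij⟩, Finset.mem_subtype.mpr hi⟩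
      have hEsupp' : ∀ l ∈ E', ∃ v ∈ V', v l ≠ 0 := by
        intro l hl
        have hlE : l.1 ∈ E := Finset.mem_subtype.mp hl
        rw [hE] at hlE
        obtain ⟨_, _, _, R, hRN, hRs⟩ := Finset.mem_filter.mp hlE
        have hRy : R ∈ S.Qfin y := (Finset.mem_filter.mp hRN).1
        have hRx : R ∉ S.Qfin x := (Finset.mem_filter.mp hRN).2
        have hRW : R ∈ Wfin := by
          rw [hW]
          refine Finset.mem_filter.mpr ⟨hRy, ?_⟩
          rw [hnew_sgn R hRy hRx]
          norm_num
        exact ⟨resv R, Finset.mem_image_of_mem _ hRW, hRs⟩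
      have hcomb := comb_main V' hval' hex' hopp' E' hE'ne hEsupp'
      have hsub : V'.filter (fun v => ∃ l ∈ E', v l ≠ 0) ⊆ Nfin.image resv := by
        intro v hv
        obtain ⟨hvV, l, hlE', hvl⟩ := Finset.mem_filter.mp hv
        obtain ⟨Q, hQW, rfl⟩ := Finset.mem_image.mp hvV
        obtain ⟨hQP, hyQ, hQj⟩ := hWmem Q hQW
        have hQx : Q ∉ S.Qfin x := by
          intro hQx
          have hlE : l.1 ∈ E := Finset.mem_subtype.mp hlE'
          rw [hE] at hlE
          obtain ⟨_, hlj, hlS, _⟩ := Finset.mem_filter.mp hlE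
          have : S.sgn Q y l.1 = S.sgn Q x l.1 := hsgn_eq Q l.1 hlj
          have hzero : S.sgn Q x l.1 = 0 := by
            by_contra hnz
            exact hlS (S.mem_SuppF.mpr ⟨Q, hQP, (S.mem_Qfin.mp hQx).2, hnz⟩)
          exact hvl (by rw [hresv] at *; dsimp only; rw [this, hzero])
        have hQN : Q ∈ Nfin := Finset.mem_filter.mpr ⟨S.mem_Qfin.mpr ⟨hQP, hyQ⟩, hQx⟩
        exact Finset.mem_image_of_mem _ hQN
      calc E.card + 1 = E'.card + 1 := by rw [hE'card]
        _ ≤ (V'.filter (fun v => ∃ l ∈ E', v l ≠ 0)).card := hcomb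
        _ ≤ (Nfin.image resv).card := Finset.card_le_card hsub
        _ ≤ Nfin.card := Finset.card_image_le
  refine ⟨y, ?_, ?_⟩
  · omega
  · omega

end Setup

namespace Setup
variable {n : ℕ} (S : Setup n)

lemma no_excess (hmin : ∀ y : Fin n → ℝ, (S.Qfin y).card ≤ n + 1) :
    ∀ x : Fin n → ℝ, (S.Qfin x).card ≤ (S.SuppF x).card + 1 := by
  have key : ∀ m : ℕ, ∀ x, n - (S.SuppF x).card ≤ m →
      (S.Qfin x).card ≤ (S.SuppF x).card + 1 := by
    intro m
    induction m with
    | zero =>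
      intro x hm
      by_contra hcon
      push_neg at hcon
      have := hmin x
      omega
    | succ m ih =>
      intro x hm
      by_contra hcon
      push_neg at hcon
      by_cases hβ : n ≤ (S.SuppF x).card
      · have := hmin x; omega
      · push_neg at hβ
        have hex : ∃ j, j ∉ S.SuppF x := by
          by_contra hall
          push_neg at hall
          have h5 : Finset.univ ⊆ S.SuppF x := fun j _ => hall j
          have h6 := Finset.card_le_card h5
          rw [Finset.card_univ, Fintype.card_fin] at h6
          omega
        obtain ⟨j, hj⟩ := hex
        obtain ⟨y, h1, h2⟩ := S.step x j hj
        have h3 := ih y (by omega)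
        omega
  intro x
  exact key (n - (S.SuppF x).card) x le_rfl

end Setup


theorem stmt8 (n : ℕ) (P : Set (Set (Fin n → ℝ))) (hP : IsRegPartition P) :
    (∀ x : Fin n → ℝ, ∀ T : Finset (Set (Fin n → ℝ)),
        (∀ Q ∈ T, Q ∈ P ∧ x ∈ Q) → T.card ≤ n + 1) ↔
      (∀ x : Fin n → ℝ, nuP P x = betaP P x + 1) := by
  obtain ⟨⟨D, d, hd, hD, hrep⟩, hcov, hdisj⟩ := hP
  choose! A B hAB using hrep
  set S : Setup n :=
    { P := P, D := D, d := d, A := A, B := B, hd := hd, hD := hD,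
      hA := fun Q hQ i => ((hAB Q hQ).1 i).1,
      hB := fun Q hQ i => ((hAB Q hQ).1 i).2.1,
      hAB := fun Q hQ i => ((hAB Q hQ).1 i).2.2,
      hrep := fun Q hQ => (hAB Q hQ).2,
      hcov := hcov, hdisj := hdisj } with hS
  constructor
  · intro hmin x
    have hmin' : ∀ y, (S.Qfin y).card ≤ n + 1 := by
      intro y
      apply hmin y (S.Qfin y)
      intro Q hQ
      exact S.mem_Qfin.mp hQ
    have h1 := S.nu_ge x
    have h2 := S.no_excess hmin' x
    have h3 : nuP P x = (S.Qfin x).card := S.nu_eq x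
    have h4 : betaP P x = (S.SuppF x).card := S.beta_eq x
    omega
  · intro heq x T hT
    have hsub : T ⊆ S.Qfin x := fun Q hQ => S.mem_Qfin.mpr (hT Q hQ)
    have h1 := Finset.card_le_card hsub
    have h2 : nuP P x = betaP P x + 1 := heq x
    have h3 : nuP P x = (S.Qfin x).card := S.nu_eq x
    have h4 : betaP P x = (S.SuppF x).card := S.beta_eq x
    have h5 : (S.SuppF x).card ≤ n := by
      have h6 := Finset.card_le_univ (S.SuppF x)
      rwa [Fintype.card_fin] at h6
    omega
end

section
/- For every n ≥ 1 there exist two minimal regulated partitions 𝒫 and 𝒬 of ℝⁿ that are orthogonal, i.e., for every x ∈ ℝⁿ the set of boundary vectors of x with respect to 𝒫 is disjoint from the set of boundary vectors of x with respect to 𝒬. In particular, there exists a minimal regulated partition of ℝⁿ. -/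
namespace Stmt9aux


def coef (n : ℕ) (i j : Fin n) : ℤ := if i < j then 2 ^ (j.val - i.val - 1) else 0

def Sf {n : ℕ} (i : Fin n) (z : Fin n → ℤ) : ℤ := ∑ j, coef n i j * z j

noncomputable def afun {n : ℕ} (c : ℝ) (z : Fin n → ℤ) (i : Fin n) : ℝ :=
  c + z i + (Sf i z : ℝ) / 2 ^ n

noncomputable def cube {n : ℕ} (c : ℝ) (z : Fin n → ℤ) : Set (Fin n → ℝ) :=
  Set.Icc (afun c z) (fun i => afun c z i + 1)

def part (n : ℕ) (c : ℝ) : Set (Set (Fin n → ℝ)) := {R | ∃ z, R = cube c z}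

lemma Sf_congr {n : ℕ} {i : Fin n} {z z' : Fin n → ℤ} (h : ∀ j, i < j → z j = z' j) :
    Sf i z = Sf i z' := by
  unfold Sf
  apply Finset.sum_congr rfl
  intro j _
  by_cases hij : i < j
  · rw [h j hij]
  · simp [coef, hij]

lemma geom2 (m : ℕ) : (∑ t ∈ Finset.range m, (2:ℤ) ^ t) = 2 ^ m - 1 := by
  induction m with
  | zero => simp
  | succ m ih => rw [Finset.sum_range_succ, ih]; ring

lemma coef_sum_le {n : ℕ} (i : Fin n) : (∑ j, coef n i j) ≤ 2 ^ n - 1 := by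
  classical
  have hrw : (∑ j, coef n i j) = ∑ j ∈ Finset.univ.filter (fun j : Fin n => i < j),
      (2:ℤ) ^ (j.val - i.val - 1) := by
    rw [Finset.sum_filter]
    apply Finset.sum_congr rfl
    intro j _
    by_cases hij : i < j <;> simp [coef, hij]
  set s := Finset.univ.filter (fun j : Fin n => i < j) with hs
  have hinj : ∀ a ∈ s, ∀ b ∈ s, a.val - i.val - 1 = b.val - i.val - 1 → a = b := by
    intro a ha b hb h
    simp only [hs, Finset.mem_filter, Finset.mem_univ, true_and, Fin.lt_def] at ha hb
    apply Fin.ext; omega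
  have h1 : (∑ j ∈ s, (2:ℤ) ^ (j.val - i.val - 1))
      = ∑ t ∈ s.image (fun j => j.val - i.val - 1), (2:ℤ) ^ t := by
    rw [Finset.sum_image hinj]
  have hsub : s.image (fun j => j.val - i.val - 1) ⊆ Finset.range n := by
    intro t ht
    simp only [Finset.mem_image] at ht
    obtain ⟨a, _, rfl⟩ := ht
    simp only [Finset.mem_range]
    have := a.isLt; omega
  have h2 : (∑ t ∈ s.image (fun j => j.val - i.val - 1), (2:ℤ) ^ t)
      ≤ ∑ t ∈ Finset.range n, (2:ℤ) ^ t :=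
    Finset.sum_le_sum_of_subset_of_nonneg hsub (by intro t _ _; positivity)
  rw [hrw, h1]; rw [geom2 n] at h2; exact h2

lemma coef_nonneg {n : ℕ} (i j : Fin n) : 0 ≤ coef n i j := by
  unfold coef; split <;> positivity

lemma Sf_sub {n : ℕ} (i : Fin n) (z z' : Fin n → ℤ) :
    Sf i z - Sf i z' = ∑ j, coef n i j * (z j - z' j) := by
  unfold Sf; rw [← Finset.sum_sub_distrib]; apply Finset.sum_congr rfl; intro j _; ring

lemma Sf_bound {n : ℕ} {i : Fin n} {z z' : Fin n → ℤ}
    (h : ∀ j, i < j → |z j - z' j| ≤ 1) : |Sf i z - Sf i z'| ≤ 2 ^ n - 1 := by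
  rw [Sf_sub]
  calc |∑ j, coef n i j * (z j - z' j)| ≤ ∑ j, |coef n i j * (z j - z' j)| :=
        Finset.abs_sum_le_sum_abs _ _
    _ ≤ ∑ j, coef n i j := by
        apply Finset.sum_le_sum
        intro j _
        rw [abs_mul, abs_of_nonneg (coef_nonneg i j)]
        by_cases hij : i < j
        · calc coef n i j * |z j - z' j| ≤ coef n i j * 1 :=
              mul_le_mul_of_nonneg_left (h j hij) (coef_nonneg i j)
            _ = coef n i j := mul_one _
        · simp [coef, hij]
    _ ≤ 2 ^ n - 1 := coef_sum_le i

lemma mem_cube_iff {n : ℕ} {c : ℝ} {z : Fin n → ℤ} {x : Fin n → ℝ} :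
    x ∈ cube c z ↔ ∀ i, afun c z i ≤ x i ∧ x i ≤ afun c z i + 1 := by
  unfold cube
  rw [Set.mem_Icc]
  constructor
  · rintro ⟨h1, h2⟩ i; exact ⟨h1 i, h2 i⟩
  · intro h; exact ⟨fun i => (h i).1, fun i => (h i).2⟩

lemma exists_mem_cube {n : ℕ} (c : ℝ) (x : Fin n → ℝ) : ∃ z, x ∈ cube c z := by
  have key : ∀ k : ℕ, ∃ z : Fin n → ℤ, ∀ j : Fin n, n - k ≤ j.val →
      afun c z j ≤ x j ∧ x j ≤ afun c z j + 1 := by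
    intro k
    induction k with
    | zero =>
      exact ⟨0, fun j hj => absurd hj (by have := j.isLt; omega)⟩
    | succ k ih =>
      obtain ⟨z, hz⟩ := ih
      by_cases hk : n ≤ k
      · exact ⟨z, fun j hj => hz j (by omega)⟩
      · push_neg at hk
        set i : Fin n := ⟨n - k - 1, by omega⟩ with hi
        set z' := Function.update z i ⌊x i - c - (Sf i z : ℝ) / 2 ^ n⌋ with hz'
        have hSf : Sf i z' = Sf i z := Sf_congr (fun j hij => by
          rw [hz', Function.update_of_ne (by intro h; rw [h] at hij; exact lt_irrefl _ hij)])
        refine ⟨z', fun j hj => ?_⟩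
        by_cases hji : j = i
        · obtain rfl : j = i := hji
          have hz'i : z' i = ⌊x i - c - (Sf i z : ℝ) / 2 ^ n⌋ := by
            rw [hz', Function.update_self]
          have h1 := Int.floor_le (x i - c - (Sf i z : ℝ) / 2 ^ n)
          have h2 := Int.lt_floor_add_one (x i - c - (Sf i z : ℝ) / 2 ^ n)
          unfold afun
          rw [hSf, hz'i]
          constructor
          · linarith
          · linarith
        · have hjv : j.val ≠ n - k - 1 := by
            intro h; exact hji (Fin.ext h)
          have hj' : n - k ≤ j.val := by
            have h0 : n - (k+1) ≤ j.val := hj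
            omega
          have hzj : z' j = z j := Function.update_of_ne hji _ _
          have hSfj : Sf j z' = Sf j z := Sf_congr (fun l hl => by
            apply Function.update_of_ne
            intro h
            have h1 : j.val < l.val := Fin.lt_def.mp hl
            have h2 : l.val = n - k - 1 := by rw [h]
            omega)
          have heq : afun c z' j = afun c z j := by unfold afun; rw [hzj, hSfj]
          rw [heq]
          exact hz j hj'
  obtain ⟨z, hz⟩ := key n
  exact ⟨z, mem_cube_iff.mpr (fun j => hz j (by omega))⟩


lemma interior_cube {n : ℕ} (c : ℝ) (z : Fin n → ℤ) :
    interior (cube c z) = Set.pi Set.univ (fun i => Set.Ioo (afun c z i) (afun c z i + 1)) := by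
  unfold cube
  rw [← Set.pi_univ_Icc, interior_pi_set Set.finite_univ]
  apply Set.pi_congr rfl
  intro i _
  exact interior_Icc

lemma mem_interior_cube {n : ℕ} {c : ℝ} {z : Fin n → ℤ} {x : Fin n → ℝ} :
    x ∈ interior (cube c z) ↔ ∀ i, afun c z i < x i ∧ x i < afun c z i + 1 := by
  rw [interior_cube, Set.mem_pi]
  constructor
  · intro h i; exact h i (Set.mem_univ i)
  · intro h i _; exact h i

lemma eq_of_mem_interior {n : ℕ} {c : ℝ} {z z' : Fin n → ℤ} {x : Fin n → ℝ}
    (hx : x ∈ interior (cube c z)) (hx' : x ∈ interior (cube c z')) : z = z' := by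
  rw [mem_interior_cube] at hx hx'
  have key : ∀ k : ℕ, ∀ j : Fin n, n - k ≤ j.val → z j = z' j := by
    intro k
    induction k with
    | zero => exact fun j hj => absurd hj (by have := j.isLt; omega)
    | succ k ih =>
      intro j hj
      by_cases hc : n - k ≤ j.val
      · exact ih j hc
      · have hjv : j.val = n - k - 1 := by omega
        have hS : Sf j z = Sf j z' := Sf_congr (fun l hl => ih l (by
          have := Fin.lt_def.mp hl; omega))
        have h1 := (hx j).1; have h2 := (hx j).2
        have h3 := (hx' j).1; have h4 := (hx' j).2
        unfold afun at h1 h2 h3 h4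
        rw [hS] at h1 h2
        have hr1 : ((z j - z' j : ℤ) : ℝ) < 1 := by push_cast; linarith
        have hr2 : (-1 : ℝ) < ((z j - z' j : ℤ) : ℝ) := by push_cast; linarith
        have : (z j - z' j : ℤ) < 1 := by exact_mod_cast hr1
        have : (-1 : ℤ) < z j - z' j := by exact_mod_cast hr2
        omega
  funext j
  exact key n j (by omega)

lemma cube_inj {n : ℕ} {c : ℝ} {z z' : Fin n → ℤ} (h : cube c z = cube c z') : z = z' := by
  have hx : (fun i => afun c z i + 1/2) ∈ interior (cube c z) := by
    rw [mem_interior_cube]; intro i; constructor <;> norm_num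
  have hx' : (fun i => afun c z i + 1/2) ∈ interior (cube c z') := by rw [← h]; exact hx
  exact eq_of_mem_interior hx hx'


def res (n k : ℕ) (z : Fin n → ℤ) : Fin n → ℤ := fun j => if n - k ≤ j.val then z j else 0

lemma res_res {n k : ℕ} (z : Fin n → ℤ) : res n k (res n (k+1) z) = res n k z := by
  funext j; unfold res
  by_cases h : n - k ≤ j.val
  · rw [if_pos h, if_pos h, if_pos (by omega : n - (k+1) ≤ j.val)]
  · rw [if_neg h, if_neg h]

lemma res_self {n : ℕ} (z : Fin n → ℤ) : res n n z = z := by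
  funext j; unfold res; rw [if_pos (by omega)]

lemma pairwise_bound {n : ℕ} {c : ℝ} {x : Fin n → ℝ} {z z' : Fin n → ℤ}
    (hz : x ∈ cube c z) (hz' : x ∈ cube c z') : ∀ j, |z j - z' j| ≤ 1 := by
  rw [mem_cube_iff] at hz hz'
  have key : ∀ k : ℕ, ∀ j : Fin n, n - k ≤ j.val → |z j - z' j| ≤ 1 := by
    intro k
    induction k with
    | zero => exact fun j hj => absurd hj (by have := j.isLt; omega)
    | succ k ih =>
      intro j hj
      by_cases hc : n - k ≤ j.val
      · exact ih j hc
      · have hS : |Sf j z - Sf j z'| ≤ 2 ^ n - 1 :=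
          Sf_bound (fun l hl => ih l (by have := Fin.lt_def.mp hl; omega))
        have h1 := (hz j).1; have h2 := (hz j).2
        have h3 := (hz' j).1; have h4 := (hz' j).2
        unfold afun at h1 h2 h3 h4
        have hp : (0:ℝ) < 2 ^ n := by positivity
        have hSr : |((Sf j z : ℝ)) - ((Sf j z' : ℝ))| ≤ (2:ℝ) ^ n - 1 := by
          have : ((|Sf j z - Sf j z'| : ℤ) : ℝ) ≤ (((2:ℤ) ^ n - 1 : ℤ) : ℝ) := by
            exact_mod_cast hS
          rw [Int.cast_abs] at this
          push_cast at this
          convert this using 2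
        have habs := abs_le.mp hSr
        have hu1 : (Sf j z : ℝ) / 2 ^ n - (Sf j z' : ℝ) / 2 ^ n < 1 := by
          rw [div_sub_div_same]
          rw [div_lt_one hp]
          linarith
        have hu2 : (-1 : ℝ) < (Sf j z : ℝ) / 2 ^ n - (Sf j z' : ℝ) / 2 ^ n := by
          rw [div_sub_div_same, lt_div_iff₀ hp]
          linarith
        have hr1 : ((z j : ℝ)) - ((z' j : ℝ)) < 2 := by linarith
        have hr2 : (-2 : ℝ) < ((z j : ℝ)) - ((z' j : ℝ)) := by linarith
        have hi1 : z j - z' j < 2 := by exact_mod_cast (by push_cast; linarith : ((z j - z' j : ℤ):ℝ) < 2)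
        have hi2 : (-2:ℤ) < z j - z' j := by exact_mod_cast (by push_cast; linarith : (-2:ℝ) < ((z j - z' j : ℤ):ℝ))
        exact abs_le.mpr ⟨by omega, by omega⟩
  exact fun j => key n j (by omega)

lemma no_collision {n : ℕ} {i : Fin n} {p p' : Fin n → ℤ}
    (hb : ∀ j, i < j → |p j - p' j| ≤ 1)
    (hd : (2:ℤ) ^ n ∣ Sf i p - Sf i p') :
    ∀ j, i < j → p j = p' j := by
  classical
  have hbd : |Sf i p - Sf i p'| ≤ 2 ^ n - 1 := Sf_bound hb
  obtain ⟨t, ht⟩ := hd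
  have hzero : Sf i p - Sf i p' = 0 := by
    have ht0 : t = 0 := by
      by_contra h0
      have h1 : (1:ℤ) ≤ |t| := Int.one_le_abs h0
      have h2 : (2:ℤ)^n ≤ |Sf i p - Sf i p'| := by
        rw [ht, abs_mul, abs_of_pos (by positivity : (0:ℤ) < 2^n)]
        nlinarith [abs_nonneg t, (by positivity : (0:ℤ) < (2:ℤ)^n)]
      linarith
    rw [ht, ht0, mul_zero]
  by_contra hcon
  push_neg at hcon
  obtain ⟨j₁, hj₁, hne₁⟩ := hcon
  set T := Finset.univ.filter (fun j : Fin n => i < j ∧ p j ≠ p' j) with hT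
  have hTne : T.Nonempty := ⟨j₁, by simp only [hT, Finset.mem_filter, Finset.mem_univ, true_and]; exact ⟨hj₁, hne₁⟩⟩
  set j₀ := T.min' hTne with hj₀
  have hj₀T : j₀ ∈ T := T.min'_mem hTne
  have hij₀ : i < j₀ ∧ p j₀ ≠ p' j₀ := by
    have := hj₀T
    simp only [hT, Finset.mem_filter, Finset.mem_univ, true_and] at this
    exact this
  have hsum : Sf i p - Sf i p' = ∑ j ∈ T, coef n i j * (p j - p' j) := by
    rw [Sf_sub]
    symm
    apply Finset.sum_subset (Finset.subset_univ T)
    intro j _ hjT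
    simp only [hT, Finset.mem_filter, Finset.mem_univ, true_and, not_and_or] at hjT
    rcases hjT with h | h
    · simp [coef, h]
    · push_neg at h; rw [h]; ring
  have hsplit : coef n i j₀ * (p j₀ - p' j₀)
      + ∑ j ∈ T.erase j₀, coef n i j * (p j - p' j) = ∑ j ∈ T, coef n i j * (p j - p' j) :=
    Finset.add_sum_erase T (fun j => coef n i j * (p j - p' j)) hj₀T
  have hdvd : (2:ℤ) ^ (j₀.val - i.val) ∣ ∑ j ∈ T.erase j₀, coef n i j * (p j - p' j) := by
    apply Finset.dvd_sum
    intro j hj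
    have hjT := Finset.mem_of_mem_erase hj
    have hjne := Finset.ne_of_mem_erase hj
    have hij : i < j ∧ p j ≠ p' j := by
      simp only [hT, Finset.mem_filter, Finset.mem_univ, true_and] at hjT
      exact hjT
    have hlt : j₀ < j := lt_of_le_of_ne (T.min'_le j hjT) (Ne.symm hjne)
    have hcj : coef n i j = 2 ^ (j.val - i.val - 1) := if_pos hij.1
    rw [hcj]
    apply Dvd.dvd.mul_right
    apply pow_dvd_pow (2:ℤ)
    have h5 := Fin.lt_def.mp hlt
    have h6 := Fin.lt_def.mp hij₀.1
    omega
  have hdvd0 : (2:ℤ) ^ (j₀.val - i.val) ∣ coef n i j₀ * (p j₀ - p' j₀) := by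
    have : coef n i j₀ * (p j₀ - p' j₀) = - ∑ j ∈ T.erase j₀, coef n i j * (p j - p' j) := by
      have := hsplit
      rw [← hsum, hzero] at this
      linarith
    rw [this]
    exact dvd_neg.mpr hdvd
  have hc0 : coef n i j₀ = 2 ^ (j₀.val - i.val - 1) := if_pos hij₀.1
  have hexp : j₀.val - i.val = (j₀.val - i.val - 1) + 1 := by
    have := Fin.lt_def.mp hij₀.1; omega
  rw [hc0, hexp, pow_succ] at hdvd0
  have h2dvd : (2:ℤ) ∣ p j₀ - p' j₀ := by
    have hnz : ((2:ℤ) ^ (j₀.val - i.val - 1)) ≠ 0 := by positivity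
    exact (mul_dvd_mul_iff_left hnz).mp hdvd0
  have habs := abs_le.mp (hb j₀ hij₀.1)
  obtain ⟨u, hu⟩ := h2dvd
  exact hij₀.2 (by omega)

lemma card_le_image_add_one {β : Type*} [DecidableEq β] (A : Finset β) (g : β → β) (a₀ : β)
    (h : ∀ a ∈ A, ∀ a' ∈ A, a ≠ a' → g a = g a' → a = a₀ ∨ a' = a₀) :
    A.card ≤ (A.image g).card + 1 := by
  have hsub : A ⊆ insert a₀ (A.erase a₀) := by
    intro a ha
    by_cases h1 : a = a₀
    · simp [h1]
    · exact Finset.mem_insert_of_mem (Finset.mem_erase.mpr ⟨h1, ha⟩)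
  have hinj : Set.InjOn g (A.erase a₀) := by
    intro a ha b hb hg
    by_contra hne
    rcases h a (Finset.mem_of_mem_erase ha) b (Finset.mem_of_mem_erase hb) hne hg with h1 | h1
    · exact (Finset.mem_erase.mp ha).1 h1
    · exact (Finset.mem_erase.mp hb).1 h1
  calc A.card ≤ (insert a₀ (A.erase a₀)).card := Finset.card_le_card hsub
    _ ≤ (A.erase a₀).card + 1 := Finset.card_insert_le _ _
    _ = ((A.erase a₀).image g).card + 1 := by rw [Finset.card_image_of_injOn hinj]
    _ ≤ (A.image g).card + 1 :=
        Nat.add_le_add_right (Finset.card_le_card (Finset.image_subset_image (Finset.erase_subset _ _))) 1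

lemma abs_le_one_of_unit_interval {u v : ℤ} {L : ℝ} (h1 : L ≤ u) (h2 : (u:ℝ) ≤ L + 1)
    (h3 : L ≤ v) (h4 : (v:ℝ) ≤ L + 1) : |u - v| ≤ 1 := by
  have hr1 : ((u - v : ℤ) : ℝ) ≤ 1 := by push_cast; linarith
  have hr2 : (-1 : ℝ) ≤ ((u - v : ℤ) : ℝ) := by push_cast; linarith
  have i1 : (u - v : ℤ) ≤ 1 := by exact_mod_cast hr1
  have i2 : (-1 : ℤ) ≤ u - v := by exact_mod_cast hr2
  exact abs_le.mpr ⟨i2, i1⟩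

lemma multiplicity_bound {n : ℕ} (c : ℝ) (x : Fin n → ℝ) (F : Finset (Fin n → ℤ))
    (hF : ∀ z ∈ F, x ∈ cube c z) : F.card ≤ n + 1 := by
  classical
  have key : ∀ k : ℕ, (F.image (res n k)).card ≤ k + 1 := by
    intro k
    induction k with
    | zero =>
      apply Finset.card_le_one.mpr
      intro a ha b hb
      obtain ⟨z, _, rfl⟩ := Finset.mem_image.mp ha
      obtain ⟨z', _, rfl⟩ := Finset.mem_image.mp hb
      funext j
      have hj := j.isLt
      unfold res
      rw [if_neg (by omega), if_neg (by omega)]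
    | succ k ih =>
      by_cases hk : n ≤ k
      · have hres : res n (k+1) = (res n k : (Fin n → ℤ) → (Fin n → ℤ)) := by
          funext z j
          unfold res
          rw [if_pos (by omega), if_pos (by omega)]
        rw [hres]
        omega
      · push_neg at hk
        set i : Fin n := ⟨n - k - 1, by omega⟩ with hidef
        set A := F.image (res n (k+1)) with hA
        have himg : A.image (res n k) = F.image (res n k) := by
          rw [hA, Finset.image_image]
          congr 1
          funext z
          exact res_res z
        -- basic facts about members of A
        have memA : ∀ a ∈ A, ∃ z ∈ F, a = res n (k+1) z := by
          intro a ha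
          obtain ⟨z, hz, rfl⟩ := Finset.mem_image.mp ha
          exact ⟨z, hz, rfl⟩
        have fact2 : ∀ (z : Fin n → ℤ) (j : Fin n), i < j → res n (k+1) z j = z j := by
          intro z j hij
          have := Fin.lt_def.mp hij
          exact if_pos (by simp only [hidef] at this; omega)
        have fact4 : ∀ (a : Fin n → ℤ) (j : Fin n), i < j → res n k a j = a j := by
          intro a j hij
          have := Fin.lt_def.mp hij
          exact if_pos (by simp only [hidef] at this; omega)
        have fact1 : ∀ (z : Fin n → ℤ), res n (k+1) z i = z i := by
          intro z
          exact if_pos (by simp only [hidef]; omega)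
        have factlow : ∀ (z : Fin n → ℤ) (j : Fin n), j.val < n - (k+1) → res n (k+1) z j = 0 := by
          intro z j hj
          exact if_neg (by omega)
        -- Sf of a member equals Sf of its res-k image and of its F-parent
        have hSf_eq : ∀ a : Fin n → ℤ, Sf i (res n k a) = Sf i a := by
          intro a
          exact Sf_congr (fun j hj => fact4 a j hj)
        have hSf_par : ∀ z : Fin n → ℤ, Sf i (res n (k+1) z) = Sf i z := by
          intro z
          exact Sf_congr (fun j hj => fact2 z j hj)
        -- the key bound for each a ∈ A
        have bnd : ∀ a ∈ A, c + a i + (Sf i (res n k a) : ℝ) / 2^n ≤ x i ∧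
            x i ≤ c + a i + (Sf i (res n k a) : ℝ) / 2^n + 1 := by
          intro a ha
          obtain ⟨z, hzF, rfl⟩ := memA a ha
          have hx := mem_cube_iff.mp (hF z hzF) i
          unfold afun at hx
          rw [hSf_eq, hSf_par, fact1]
          exact hx
        -- determination lemma
        have det : ∀ a ∈ A, ∀ a' ∈ A, res n k a = res n k a' → a i = a' i → a = a' := by
          intro a ha a' ha' hres hi
          obtain ⟨z, _, rfl⟩ := memA a ha
          obtain ⟨z', _, rfl⟩ := memA a' ha'
          funext j
          by_cases h1 : n - k ≤ j.val
          · have e1 := congrFun hres j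
            unfold res at e1
            rw [if_pos h1, if_pos h1] at e1
            exact e1
          · by_cases h2 : j.val = n - k - 1
            · have : j = i := Fin.ext (by simp only [hidef]; omega)
              rw [this]; exact hi
            · rw [factlow z j (by omega), factlow z' j (by omega)]
        -- fiber structure
        have fiber : ∀ a ∈ A, ∀ a' ∈ A, a ≠ a' → res n k a = res n k a' →
            ∃ m : ℤ, (x i : ℝ) = c + m + (Sf i (res n k a) : ℝ) / 2^n ∧
              (∀ b ∈ A, res n k b = res n k a → b i = m - 1 ∨ b i = m) := by
          intro a ha a' ha' hne hres
          have hii : a i ≠ a' i := fun h => hne (det a ha a' ha' hres h)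
          obtain ⟨g1, g2⟩ := bnd a ha
          obtain ⟨g3, g4⟩ := bnd a' ha'
          rw [← hres] at g3 g4
          set σ := (Sf i (res n k a) : ℝ) / 2^n with hσ
          have habs : |a i - a' i| ≤ 1 :=
            abs_le_one_of_unit_interval (L := x i - c - σ - 1)
              (by linarith) (by linarith) (by linarith) (by linarith)
          have hcase : a' i = a i + 1 ∨ a i = a' i + 1 := by
            have := abs_le.mp habs
            omega
          have hm : ∃ m : ℤ, (x i : ℝ) = c + m + σ := by
            rcases hcase with h | h
            · refine ⟨a' i, le_antisymm ?_ ?_⟩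
              · rw [h]; push_cast; linarith
              · linarith
            · refine ⟨a i, le_antisymm ?_ ?_⟩
              · rw [h]; push_cast; linarith
              · linarith
          obtain ⟨m, hmeq⟩ := hm
          refine ⟨m, hmeq, ?_⟩
          intro b hb hbres
          obtain ⟨g5, g6⟩ := bnd b hb
          rw [hbres] at g5 g6
          have hr1 : (b i : ℝ) ≤ m := by rw [hmeq] at g5; linarith
          have hr2 : (m : ℝ) - 1 ≤ b i := by rw [hmeq] at g6; push_cast; linarith
          have i1 : b i ≤ m := by exact_mod_cast hr1
          have i2 : m - 1 ≤ b i := by exact_mod_cast (by push_cast; linarith : ((m - 1 : ℤ):ℝ) ≤ (b i : ℝ))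
          omega
        -- almost injectivity
        have almost : ∃ a₀, ∀ a ∈ A, ∀ a' ∈ A, a ≠ a' → res n k a = res n k a' →
            a = a₀ ∨ a' = a₀ := by
          by_cases hex : ∃ a ∈ A, ∃ a' ∈ A, a ≠ a' ∧ res n k a = res n k a'
          · obtain ⟨a₀, ha₀, b₀, hb₀, hne₀, hres₀⟩ := hex
            refine ⟨a₀, ?_⟩
            intro b hb b' hb' hne hres
            obtain ⟨m, hmeq, hmem⟩ := fiber b hb b' hb' hne hres
            obtain ⟨m₀, hmeq₀, hmem₀⟩ := fiber a₀ ha₀ b₀ hb₀ hne₀ hres₀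
            by_cases hpp : res n k b = res n k a₀
            · -- same fiber
              rw [hpp] at hmeq
              have hmm : m = m₀ := by
                have : (m : ℝ) = m₀ := by rw [hmeq] at hmeq₀; linarith
                exact_mod_cast this
              subst hmm
              by_cases hba : b = a₀
              · left; exact hba
              · right
                have h1 : b i ≠ a₀ i := fun h => hba (det b hb a₀ ha₀ hpp h)
                have h2 : b' i ≠ b i := fun h => hne ((det b hb b' hb' hres h.symm).symm ▸ rfl)
                have hb2 := hmem b hb rfl
                have hb'2 := hmem b' hb' hres.symm
                have ha2 := hmem₀ a₀ ha₀ rfl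
                have : b' i = a₀ i := by
                  rcases hb2 with h | h <;> rcases hb'2 with h' | h' <;>
                    rcases ha2 with h'' | h'' <;> omega
                exact det b' hb' a₀ ha₀ (hres ▸ hpp) this
            · -- different fibers: contradiction via no_collision
              exfalso
              set p := res n k b with hp
              set p₀ := res n k a₀ with hp₀
              have hreal : ((Sf i p : ℝ)) - ((Sf i p₀ : ℝ)) = 2^n * ((m₀ : ℝ) - m) := by
                have hpn : (0:ℝ) < 2^n := by positivity
                rw [hmeq] at hmeq₀
                field_simp at hmeq₀ ⊢
                linarith
              have hint : Sf i p - Sf i p₀ = 2^n * (m₀ - m) := by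
                exact_mod_cast (by push_cast; linarith [hreal] : ((Sf i p - Sf i p₀ : ℤ):ℝ) = ((2^n * (m₀ - m) : ℤ):ℝ))
              have hdvd : (2:ℤ)^n ∣ Sf i p - Sf i p₀ := ⟨m₀ - m, hint⟩
              obtain ⟨zb, hzbF, hzb⟩ := memA b hb
              obtain ⟨za, hzaF, hza⟩ := memA a₀ ha₀
              have hbnd : ∀ j, i < j → |p j - p₀ j| ≤ 1 := by
                intro j hj
                have e1 : p j = zb j := by
                  rw [hp, fact4 b j hj, hzb, fact2 zb j hj]
                have e2 : p₀ j = za j := by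
                  rw [hp₀, fact4 a₀ j hj, hza, fact2 za j hj]
                rw [e1, e2]
                exact pairwise_bound (hF zb hzbF) (hF za hzaF) j
              have hcoll := no_collision hbnd hdvd
              apply hpp
              funext j
              by_cases hj : i < j
              · exact hcoll j hj
              · have hjv : j.val ≤ n - k - 1 := by
                  have := Fin.lt_def.not.mp hj  -- ¬ i < j
                  simp only [hidef] at this
                  omega
                rw [hp, hp₀]
                unfold res
                rw [if_neg (by omega), if_neg (by omega)]
          · push_neg at hex
            exact ⟨0, fun a ha a' ha' hne hres => absurd hres (hex a ha a' ha' hne)⟩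
        obtain ⟨a₀, ha₀⟩ := almost
        calc (F.image (res n (k+1))).card = A.card := by rw [hA]
          _ ≤ (A.image (res n k)).card + 1 := card_le_image_add_one A (res n k) a₀ ha₀
          _ = (F.image (res n k)).card + 1 := by rw [himg]
          _ ≤ (k + 1) + 1 := by omega
  have hfin := key n
  have : F.image (res n n) = F := by
    have : res n n = (id : (Fin n → ℤ) → (Fin n → ℤ)) := by
      funext z; exact res_self z
    rw [this, Finset.image_id]
  rw [this] at hfin
  exact hfin

lemma icc_endpoints {n : ℕ} {a b a' b' : Fin n → ℝ} (h : ∀ i, a i < b i)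
    (h' : ∀ i, a' i < b' i) (he : Set.Icc a b = Set.Icc a' b') : a = a' ∧ b = b' := by
  have hab : a ≤ b := fun i => le_of_lt (h i)
  have hab' : a' ≤ b' := fun i => le_of_lt (h' i)
  have ha : a ∈ Set.Icc a' b' := he ▸ Set.mem_Icc.mpr ⟨le_refl a, hab⟩
  have hb : b ∈ Set.Icc a' b' := he ▸ Set.mem_Icc.mpr ⟨hab, le_refl b⟩
  have ha' : a' ∈ Set.Icc a b := he ▸ Set.mem_Icc.mpr ⟨le_refl a', hab'⟩
  have hb' : b' ∈ Set.Icc a b := he ▸ Set.mem_Icc.mpr ⟨hab', le_refl b'⟩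
  constructor
  · exact le_antisymm ((Set.mem_Icc.mp ha').1) ((Set.mem_Icc.mp ha).1)
  · exact le_antisymm ((Set.mem_Icc.mp hb).2) ((Set.mem_Icc.mp hb').2)

lemma afun_lt {n : ℕ} (c : ℝ) (z : Fin n → ℤ) (i : Fin n) : afun c z i < afun c z i + 1 := by
  linarith

lemma afun_form {n : ℕ} (c : ℝ) (z : Fin n → ℤ) (i : Fin n) :
    ∃ m : ℤ, afun c z i = c + m / 2^n := by
  refine ⟨2^n * z i + Sf i z, ?_⟩
  unfold afun
  have hp : ((2:ℝ))^n ≠ 0 := by positivity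
  push_cast
  field_simp
  ring

lemma afun_form' {n : ℕ} (c : ℝ) (z : Fin n → ℤ) (i : Fin n) :
    ∃ m : ℤ, afun c z i + 1 = c + m / 2^n := by
  obtain ⟨m, hm⟩ := afun_form c z i
  refine ⟨m + 2^n, ?_⟩
  rw [hm]
  have hp : ((2:ℝ))^n ≠ 0 := by positivity
  push_cast
  field_simp
  ring

lemma boundary_val {n : ℕ} {c : ℝ} {x : Fin n → ℝ} {j : Fin n}
    (h : IsBoundaryVector (part n c) x j) : ∃ m : ℤ, x j = c + m / 2^n := by
  obtain ⟨Q, hQ, F, hF, hxF⟩ := h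
  obtain ⟨z, rfl⟩ := hQ
  obtain ⟨a, b, hab, hQab, hor⟩ := hF
  have hend := icc_endpoints hab (afun_lt c z) hQab.symm
  obtain ⟨haa, hbb⟩ := hend
  rcases hor with h1 | h1
  · rw [h1] at hxF
    obtain ⟨-, hxj⟩ := hxF
    rw [hxj, haa]
    exact afun_form c z j
  · rw [h1] at hxF
    obtain ⟨-, hxj⟩ := hxF
    rw [hxj, hbb]
    exact afun_form' c z j

lemma regpart {n : ℕ} (c : ℝ) : IsRegPartition (part n c) := by
  refine ⟨⟨{r : ℝ | ∃ m : ℤ, r = c + m / 2^n}, 1 / (2 * 2^n), by positivity, ?_, ?_⟩, ?_, ?_⟩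
  · rintro r₁ ⟨m₁, rfl⟩ r₂ ⟨m₂, rfl⟩ hne
    have hp : (0:ℝ) < 2^n := by positivity
    have hm : m₁ ≠ m₂ := by
      intro h; exact hne (by rw [h])
    have h1 : (1:ℤ) ≤ |m₁ - m₂| := Int.one_le_abs (by omega)
    have h1r : (1:ℝ) ≤ |((m₁ - m₂ : ℤ) : ℝ)| := by
      rw [← Int.cast_abs]
      exact_mod_cast h1
    have heq : c + m₁ / 2^n - (c + m₂ / 2^n) = ((m₁ - m₂ : ℤ) : ℝ) / 2^n := by
      push_cast; ring
    rw [heq, abs_div, abs_of_pos hp]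
    rw [div_lt_div_iff₀ (by positivity) hp]
    calc (1:ℝ) * 2^n = 2^n := one_mul _
      _ < 2 * 2^n := by linarith
      _ ≤ |((m₁ - m₂ : ℤ) : ℝ)| * (2 * 2^n) := le_mul_of_one_le_left (by positivity) h1r
  · rintro Q ⟨z, rfl⟩
    exact ⟨afun c z, fun i => afun c z i + 1, fun i =>
      ⟨afun_form c z i, afun_form' c z i, afun_lt c z i⟩, rfl⟩
  · intro x
    obtain ⟨z, hz⟩ := exists_mem_cube c x
    exact ⟨cube c z, ⟨z, rfl⟩, hz⟩
  · rintro Q₁ ⟨z, rfl⟩ Q₂ ⟨z', rfl⟩ hne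
    rw [Set.eq_empty_iff_forall_notMem]
    rintro x ⟨hx1, hx2⟩
    exact hne (by rw [eq_of_mem_interior hx1 hx2])

lemma minimal {n : ℕ} (c : ℝ) (x : Fin n → ℝ) (T : Finset (Set (Fin n → ℝ)))
    (hT : ∀ S ∈ T, S ∈ part n c ∧ x ∈ S) : T.card ≤ n + 1 := by
  classical
  set zOf : Set (Fin n → ℝ) → (Fin n → ℤ) := fun S =>
    if h : ∃ z, S = cube c z then h.choose else 0 with hzOf
  have hspec : ∀ S ∈ T, S = cube c (zOf S) := by
    intro S hS
    have hex : ∃ z, S = cube c z := (hT S hS).1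
    simp only [hzOf, dif_pos hex]
    exact hex.choose_spec
  have hinj : Set.InjOn zOf T := by
    intro S hS S' hS' h
    rw [hspec S hS, hspec S' hS', h]
  have hcard : T.card = (T.image zOf).card := (Finset.card_image_of_injOn hinj).symm
  rw [hcard]
  apply multiplicity_bound c x
  intro z hz
  obtain ⟨S, hS, rfl⟩ := Finset.mem_image.mp hz
  rw [← hspec S hS]
  exact (hT S hS).2

end Stmt9aux

/-- for every `n ≥ 1` there exist two orthogonal minimal regulated partitions of
`ℝⁿ`; in particular a minimal regulated partition of `ℝⁿ` exists. -/
theorem stmt9 (n : ℕ) (hn : 1 ≤ n) :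
    ∃ P Q : Set (Set (Fin n → ℝ)),
      IsRegPartition P ∧ IsRegPartition Q ∧
      (∀ x : Fin n → ℝ, ∀ T : Finset (Set (Fin n → ℝ)),
        (∀ S ∈ T, S ∈ P ∧ x ∈ S) → T.card ≤ n + 1) ∧
      (∀ x : Fin n → ℝ, ∀ T : Finset (Set (Fin n → ℝ)),
        (∀ S ∈ T, S ∈ Q ∧ x ∈ S) → T.card ≤ n + 1) ∧
      (∀ (x : Fin n → ℝ) (j : Fin n),
        ¬(IsBoundaryVector P x j ∧ IsBoundaryVector Q x j)) := by
  classical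
  refine ⟨Stmt9aux.part n 0, Stmt9aux.part n (1 / (2 * 2^n)), Stmt9aux.regpart 0,
    Stmt9aux.regpart _, Stmt9aux.minimal 0, Stmt9aux.minimal _, ?_⟩
  rintro x j ⟨h1, h2⟩
  obtain ⟨m₁, hm₁⟩ := Stmt9aux.boundary_val h1
  obtain ⟨m₂, hm₂⟩ := Stmt9aux.boundary_val h2
  have hp : (0:ℝ) < 2^n := by positivity
  rw [hm₁] at hm₂
  have hr : (2 : ℝ) * ((m₁ : ℝ) - (m₂ : ℝ)) = 1 := by
    field_simp at hm₂
    have h3 : ((2:ℝ)*(m₁:ℝ) - 2*(m₂:ℝ) - 1) * ((2:ℝ)^n * (2:ℝ)^n) = 0 := by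
      linear_combination ((2:ℝ)^n * (2:ℝ)^n) * hm₂
    rcases mul_eq_zero.mp h3 with h4 | h4
    · linarith
    · exact absurd h4 (by positivity)
  have hint : (2 * (m₁ - m₂) : ℤ) = 1 := by
    exact_mod_cast (by push_cast; linarith : ((2*(m₁-m₂):ℤ):ℝ) = 1)
  omega
end
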